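/- arXiv:1410.8628 — 2 statements merged into one kernel-verified Lean document; each statement's English description precedes it below -/
import Mathlib

section
/- (Fundamental Theorem of Colored P-partitions) For every r-colored poset P there is a bijection between A(P), the set of colored P-partitions of P with parts in {0, …, r−1} × (ℕ ∪ {∞}), and the disjoint union, over all linear extensions w ∈ L(P) and all colored words π ∈ CL(w), of the sets A(π) of colored π-partitions with parts in {0, …, r−1} × (ℕ ∪ {∞}). -/
open scoped BigOperators

/-- Lexicographic (color-first) strict order on colored letters `(value, color)`. -/
def letterLT (x y : ℕ × ℕ) : Prop :=
  x.2 < y.2 ∨ (x.2 = y.2 ∧ x.1 < y.1)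

instance : DecidableRel letterLT := fun x y => by
  unfold letterLT; infer_instance

/-- Weak lexicographic order on parts `(color, value)` of `[0,j]_{(r)}`. -/
def partLE (a b : ℕ × ℕ) : Prop :=
  a.1 < b.1 ∨ (a.1 = b.1 ∧ a.2 ≤ b.2)

/-- Strict lexicographic order on parts `(color, value)` of `[0,j]_{(r)}`. -/
def partLT (a b : ℕ × ℕ) : Prop :=
  a.1 < b.1 ∨ (a.1 = b.1 ∧ a.2 < b.2)

/-- `x^{(k)}`: shift the color of the colored letter `x = (value, color)` down by `k` mod `r`. -/
def shiftLetter (r k : ℕ) (x : ℕ × ℕ) : ℕ × ℕ :=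
  (x.1, (x.2 + r - k % r) % r)

/-- An `r`-colored poset: a finite poset whose elements are the symbols
`0_1, …, 0_{r−1}` (encoded as `(0, m)`) together with finitely many colored letters
(pairs `(value, color)` with positive value and color `< r`) having pairwise distinct
values, such that `0_1 ≺ 0_2 ≺ ⋯ ≺ 0_{r−1}`. -/
structure ColoredPoset (r : ℕ) where
  elems : Finset (ℕ × ℕ)
  rel : ℕ × ℕ → ℕ × ℕ → Prop
  zero_mem : ∀ m, 1 ≤ m → m < r → ((0 : ℕ), m) ∈ elems
  zero_only : ∀ x ∈ elems, x.1 = 0 → 1 ≤ x.2 ∧ x.2 < r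
  col_lt : ∀ x ∈ elems, x.2 < r
  val_inj : ∀ x ∈ elems, ∀ y ∈ elems, 1 ≤ x.1 → x.1 = y.1 → x = y
  rel_refl : ∀ x ∈ elems, rel x x
  rel_antisymm : ∀ x ∈ elems, ∀ y ∈ elems, rel x y → rel y x → x = y
  rel_trans : ∀ x ∈ elems, ∀ y ∈ elems, ∀ z ∈ elems, rel x y → rel y z → rel x z
  zero_chain : ∀ m m', 1 ≤ m → m ≤ m' → m' < r → rel (0, m) (0, m')

/-- A colored `P`-partition of the `r`-colored poset `P` with parts in
`[0,j]_{(r)} = {0,…,r−1} × {0,…,j}` (a part `(k, u)` lies in block `X_k`):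
(i) `f(0_m) = (m, 0)`; (ii) `f` is weakly increasing along `≺`;
(iii) strict increase when both parts lie in block `k` and the `k`-shifted letters
decrease; (iv) only a letter of color `k` may take the maximal value `(k, j)`. -/
def IsCPP (r j : ℕ) (P : ColoredPoset r) (f : {x // x ∈ P.elems} → ℕ × ℕ) : Prop :=
  (∀ x, (f x).1 < r ∧ (f x).2 ≤ j) ∧
  (∀ m (h1 : 1 ≤ m) (h2 : m < r), f ⟨(0, m), P.zero_mem m h1 h2⟩ = (m, 0)) ∧
  (∀ x y, P.rel x.1 y.1 → partLE (f x) (f y)) ∧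
  (∀ x y, P.rel x.1 y.1 → (f x).1 = (f y).1 →
      letterLT (shiftLetter r (f x).1 y.1) (shiftLetter r (f x).1 x.1) →
      partLT (f x) (f y)) ∧
  (∀ x, (f x).2 = j → x.1.2 = (f x).1)

/-- The order polynomial `Ω_P(j)`: the number of colored `P`-partitions with parts
in `[0,j]_{(r)}`. -/
noncomputable def Omega (r j : ℕ) (P : ColoredPoset r) : ℕ :=
  Nat.card {f : {x // x ∈ P.elems} → ℕ × ℕ // IsCPP r j P f}

/-- `w` is a linear extension of the `r`-colored poset `P`: a word listing each
element of `P` exactly once, with `x` before `y` whenever `x ≺ y`. -/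
def IsLinExt {r : ℕ} (P : ColoredPoset r) (w : List (ℕ × ℕ)) : Prop :=
  w.Nodup ∧ (∀ x, x ∈ w ↔ x ∈ P.elems) ∧
  ∀ x ∈ P.elems, ∀ y ∈ P.elems, P.rel x y → x ≠ y → w.idxOf x < w.idxOf y

/-- The number of zero symbols appearing strictly before `x` in the word `w`. -/
def zerosBefore (w : List (ℕ × ℕ)) (x : ℕ × ℕ) : ℕ :=
  ((w.take (w.idxOf x)).filter fun z => decide (z.1 = 0)).length

/-- The `i`-th block of the word `w`: its colored letters (positive value) preceded by
exactly `i` zero symbols. -/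
def block (w : List (ℕ × ℕ)) (i : ℕ) : List (ℕ × ℕ) :=
  w.filter fun x => decide (1 ≤ x.1 ∧ zerosBefore w x = i)

/-- `π_i`: the `i`-th block of `w` with every letter shifted by `i`. -/
def blockWord (r : ℕ) (w : List (ℕ × ℕ)) (i : ℕ) : List (ℕ × ℕ) :=
  (block w i).map (shiftLetter r i)

/-- `u ∈ CL(w)`: `u` is a shuffle of the shifted blocks `π_0, …, π_{r−1}` of `w`,
i.e. the letters of `u` are exactly those of `π_0, …, π_{r−1}` and each `π_i`
is a subsequence of `u`. -/
def IsColoredLinExt (r : ℕ) (w u : List (ℕ × ℕ)) : Prop :=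
  (↑u : Multiset (ℕ × ℕ)) =
      ∑ i ∈ Finset.range r, (↑(blockWord r w i) : Multiset (ℕ × ℕ)) ∧
  ∀ i < r, (blockWord r w i).Sublist u

open Classical in
/-- The (finite) set `L(P)` of linear extensions of `P`. -/
noncomputable def LinExts {r : ℕ} (P : ColoredPoset r) : Finset (List (ℕ × ℕ)) :=
  P.elems.toList.permutations.toFinset.filter (IsLinExt P)

open Classical in
/-- The (finite) set `CL(w)` of colored linear extensions of `w`. -/
noncomputable def ColLinExts (r : ℕ) (w : List (ℕ × ℕ)) : Finset (List (ℕ × ℕ)) :=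
  (((List.range r).flatMap fun i => blockWord r w i).permutations.toFinset).filter
    (IsColoredLinExt r w)

/-- A colored `π`-partition of the word `u = u(0) ⋯ u(m−1)` with parts in `[0,j]_{(r)}`:
a colored `P`-partition of the chain `u(0) ≺ ⋯ ≺ u(m−1) ≺ 0_1 ≺ ⋯ ≺ 0_{r−1}`
(the forced values `f(0_m) = (m,0)` of the zeros are built into the conditions). -/
def IsWordCPP (r j : ℕ) (u : List (ℕ × ℕ)) (f : Fin u.length → ℕ × ℕ) : Prop :=
  (∀ i, (f i).1 < r ∧ (f i).2 ≤ j) ∧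
  (∀ i k : Fin u.length, i < k → partLE (f i) (f k)) ∧
  (∀ i k : Fin u.length, i < k → (f i).1 = (f k).1 →
      letterLT (shiftLetter r (f i).1 (u.get k)) (shiftLetter r (f i).1 (u.get i)) →
      partLT (f i) (f k)) ∧
  (∀ i : Fin u.length, ∀ m, 1 ≤ m → m < r → partLE (f i) (m, 0)) ∧
  (∀ i : Fin u.length, ∀ m, 1 ≤ m → m < r → (f i).1 = m →
      letterLT (shiftLetter r m ((0 : ℕ), m)) (shiftLetter r m (u.get i)) →
      partLT (f i) (m, 0)) ∧
  (∀ i, (f i).2 = j → (u.get i).2 = (f i).1)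

/-- `Ω_π(j)` for a word `π`: the number of colored `π`-partitions with parts in
`[0,j]_{(r)}`. -/
noncomputable def OmegaWord (r j : ℕ) (u : List (ℕ × ℕ)) : ℕ :=
  Nat.card {f : Fin u.length → ℕ × ℕ // IsWordCPP r j u f}

/-- Weak lexicographic order on parts in `{0,…,r−1} × (ℕ ∪ {∞})`. -/
def partLEInf (a b : ℕ × ℕ∞) : Prop :=
  a.1 < b.1 ∨ (a.1 = b.1 ∧ a.2 ≤ b.2)

/-- Strict lexicographic order on parts in `{0,…,r−1} × (ℕ ∪ {∞})`. -/
def partLTInf (a b : ℕ × ℕ∞) : Prop :=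
  a.1 < b.1 ∨ (a.1 = b.1 ∧ a.2 < b.2)

/-- A colored `P`-partition of the `r`-colored poset `P` with parts in
`X_{(r)} = {0,…,r−1} × (ℕ ∪ {∞})`. -/
def IsCPPInf (r : ℕ) (P : ColoredPoset r) (f : {x // x ∈ P.elems} → ℕ × ℕ∞) : Prop :=
  (∀ x, (f x).1 < r) ∧
  (∀ m (h1 : 1 ≤ m) (h2 : m < r), f ⟨(0, m), P.zero_mem m h1 h2⟩ = (m, 0)) ∧
  (∀ x y, P.rel x.1 y.1 → partLEInf (f x) (f y)) ∧
  (∀ x y, P.rel x.1 y.1 → (f x).1 = (f y).1 →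
      letterLT (shiftLetter r (f x).1 y.1) (shiftLetter r (f x).1 x.1) →
      partLTInf (f x) (f y)) ∧
  (∀ x, (f x).2 = ⊤ → x.1.2 = (f x).1)

/-- A colored `π`-partition of the word `u` with parts in
`X_{(r)} = {0,…,r−1} × (ℕ ∪ {∞})`: a colored `P`-partition of the chain
`u(0) ≺ ⋯ ≺ u(m−1) ≺ 0_1 ≺ ⋯ ≺ 0_{r−1}`. -/
def IsWordCPPInf (r : ℕ) (u : List (ℕ × ℕ)) (f : Fin u.length → ℕ × ℕ∞) : Prop :=
  (∀ i, (f i).1 < r) ∧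
  (∀ i k : Fin u.length, i < k → partLEInf (f i) (f k)) ∧
  (∀ i k : Fin u.length, i < k → (f i).1 = (f k).1 →
      letterLT (shiftLetter r (f i).1 (u.get k)) (shiftLetter r (f i).1 (u.get i)) →
      partLTInf (f i) (f k)) ∧
  (∀ i : Fin u.length, ∀ m, 1 ≤ m → m < r → partLEInf (f i) (m, 0)) ∧
  (∀ i : Fin u.length, ∀ m, 1 ≤ m → m < r → (f i).1 = m →
      letterLT (shiftLetter r m ((0 : ℕ), m)) (shiftLetter r m (u.get i)) →
      partLTInf (f i) (m, 0)) ∧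
  (∀ i, (f i).2 = ⊤ → (u.get i).2 = (f i).1)


section Bridge
variable {α : Type*}

lemma beq_subsingleton (b1 b2 : BEq α)
    (h : ∀ x y, @BEq.beq _ b1 x y = @BEq.beq _ b2 x y) : b1 = b2 := by
  cases b1; cases b2
  congr 1
  funext x y
  exact h x y

lemma ofDec_eq [inst : BEq α] [LawfulBEq α] (d : DecidableEq α) :
    @instBEqOfDecidableEq α d = inst := by
  apply beq_subsingleton
  intro x y
  show decide (x = y) = (x == y)
  by_cases h : x = y <;> simp [h]

lemma idxOf_eq_idxOf [inst : BEq α] [LawfulBEq α] (d : DecidableEq α) :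
    @List.idxOf α (@instBEqOfDecidableEq α d) = @List.idxOf α inst := by
  rw [ofDec_eq d]

lemma idxOf_lt_length [BEq α] [LawfulBEq α] {a : α} {l : List α} :
    l.idxOf a < l.length ↔ a ∈ l := by
  classical
  exact List.idxOf_lt_length_iff

lemma idxOf_get [BEq α] [LawfulBEq α] {a : α} {l : List α} (h : l.idxOf a < l.length) :
    l.get ⟨l.idxOf a, h⟩ = a := by
  exact List.idxOf_get h

end Bridge

/-- key for letters: lex (color, value) -/
def letterKey (x : ℕ × ℕ) : ℕ ×ₗ ℕ := toLex (x.2, x.1)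

lemma letterKey_lt_iff {x y : ℕ × ℕ} : letterKey x < letterKey y ↔ letterLT x y := by
  rw [letterKey, letterKey, Prod.Lex.toLex_lt_toLex]; exact Iff.rfl

lemma letterKey_inj {x y : ℕ × ℕ} (h : letterKey x = letterKey y) : x = y := by
  simp [letterKey, Prod.ext_iff] at h ⊢
  exact ⟨h.2, h.1⟩

lemma letterLT_total {x y : ℕ × ℕ} (h : x ≠ y) : letterLT x y ∨ letterLT y x := by
  rcases lt_trichotomy (letterKey x) (letterKey y) with h1 | h1 | h1
  · exact Or.inl (letterKey_lt_iff.mp h1)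
  · exact absurd (letterKey_inj h1) h
  · exact Or.inr (letterKey_lt_iff.mp h1)

lemma letterLT_irrefl {x : ℕ × ℕ} (h : letterLT x x) : False := by
  simp [letterLT] at h

lemma letterLT_asymm {x y : ℕ × ℕ} (h : letterLT x y) (h' : letterLT y x) : False := by
  rw [← letterKey_lt_iff] at h h'
  exact absurd (h.trans h') (lt_irrefl _)

section Lists
variable {α : Type*} [DecidableEq α] [BEq α] [LawfulBEq α]

lemma mem_take_iff_indexOf {w : List α} (hw : w.Nodup) {x : α} (hx : x ∈ w) (k : ℕ) :
    x ∈ w.take k ↔ w.idxOf x < k := by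
  constructor
  · intro h
    obtain ⟨i, hget⟩ := List.get_of_mem h
    have hik : (i : ℕ) < k := lt_of_lt_of_le i.2 (by simp [List.length_take])
    have hiw : (i : ℕ) < w.length := lt_of_lt_of_le i.2 (by simp [List.length_take])
    have : w.get ⟨i, hiw⟩ = x := by
      rw [← hget]; simp
    have h2 : w.get ⟨w.idxOf x, idxOf_lt_length.2 hx⟩ = w.get ⟨i, hiw⟩ := by
      rw [idxOf_get, this]
    have := (List.Nodup.get_inj_iff hw).1 h2
    have : w.idxOf x = (i : ℕ) := congrArg Fin.val this
    omega
  · intro h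
    have h1 : w.idxOf x < w.length := idxOf_lt_length.2 hx
    have : (w.take k).get ⟨w.idxOf x, by simp [List.length_take]; omega⟩ = x := by
      simp
    rw [← this]; exact List.get_mem _ _

lemma indexOf_eq_card_filter {w : List α} (hw : w.Nodup) {x : α} (hx : x ∈ w) :
    w.idxOf x = (w.toFinset.filter fun y => w.idxOf y < w.idxOf x).card := by
  classical
  have h1 : w.idxOf x < w.length := idxOf_lt_length.2 hx
  have hnd : (w.take (w.idxOf x)).Nodup := hw.sublist (List.take_sublist _ _)
  have hts : (w.take (w.idxOf x)).toFinset =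
      w.toFinset.filter fun y => w.idxOf y < w.idxOf x := by
    ext y
    simp only [List.mem_toFinset, Finset.mem_filter]
    constructor
    · intro hy
      have hyw : y ∈ w := List.mem_of_mem_take hy
      exact ⟨hyw, (mem_take_iff_indexOf hw hyw _).1 hy⟩
    · rintro ⟨hyw, hlt⟩
      exact (mem_take_iff_indexOf hw hyw _).2 hlt
  rw [← hts, List.toFinset_card_of_nodup hnd, List.length_take]
  omega

lemma eq_of_same_order {w w' : List α} (hw : w.Nodup) (hw' : w'.Nodup)
    (hmem : ∀ x, x ∈ w ↔ x ∈ w')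
    (hord : ∀ x ∈ w, ∀ y ∈ w, (w.idxOf x < w.idxOf y ↔ w'.idxOf x < w'.idxOf y)) :
    w = w' := by
  classical
  have hts : w.toFinset = w'.toFinset := by ext z; simp [hmem z]
  have hidx : ∀ x ∈ w, w.idxOf x = w'.idxOf x := by
    intro x hx
    rw [indexOf_eq_card_filter hw hx, indexOf_eq_card_filter hw' ((hmem x).1 hx), hts]
    congr 1
    apply Finset.filter_congr
    intro y hy
    simp only [List.mem_toFinset] at hy
    have hy' := (hmem y).2 hy
    simp [hord y hy' x ((hmem x).2 ((hmem x).1 hx))]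
  have hlen : w.length = w'.length := by
    rw [← List.toFinset_card_of_nodup hw, ← List.toFinset_card_of_nodup hw', hts]
  apply List.ext_get hlen
  intro i hi hi'
  set x := w.get ⟨i, hi⟩ with hxdef
  have hxw : x ∈ w := List.get_mem _ _
  have h2 : w.idxOf x = i := by
    have := idxOf_get (idxOf_lt_length.2 hxw)
    have h3 := (List.Nodup.get_inj_iff hw).1 (this.trans hxdef.symm)
    exact congrArg Fin.val h3
  have h4 : w'.idxOf x = i := by rw [← hidx x hxw]; exact h2
  have : w'.get ⟨w'.idxOf x, idxOf_lt_length.2 ((hmem x).1 hxw)⟩ = x :=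
    idxOf_get _
  simpa [h4] using this.symm

lemma sublist_indexOf_lt_iff {l w : List α} (h : l.Sublist w) (hw : w.Nodup)
    {x y : α} (hx : x ∈ l) (hy : y ∈ l) :
    l.idxOf x < l.idxOf y ↔ w.idxOf x < w.idxOf y := by
  classical
  have hl : l.Nodup := h.nodup hw
  obtain ⟨f, hf⟩ := List.sublist_iff_exists_fin_orderEmbedding_get_eq.1 h
  have key : ∀ z (hz : z ∈ l), w.idxOf z = (f ⟨l.idxOf z, idxOf_lt_length.2 hz⟩ : ℕ) := by
    intro z hz
    have h1 : l.get ⟨l.idxOf z, idxOf_lt_length.2 hz⟩ = z := idxOf_get _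
    have h2 : w.get (f ⟨l.idxOf z, idxOf_lt_length.2 hz⟩) = z := by rw [← hf]; exact h1
    have h3 : w.get ⟨w.idxOf z, idxOf_lt_length.2 (h.mem hz)⟩ = z := idxOf_get _
    have := (List.Nodup.get_inj_iff hw).1 (h3.trans h2.symm)
    exact congrArg Fin.val this
  rw [key x hx, key y hy]
  constructor
  · intro hlt
    exact f.lt_iff_lt.2 (show (⟨l.idxOf x, _⟩ : Fin l.length) < ⟨l.idxOf y, idxOf_lt_length.2 hy⟩ from hlt)
  · intro hlt
    exact f.lt_iff_lt.1 hlt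

lemma indexOf_map_of_injOn {l : List α} {β : Type*} [BEq β] [LawfulBEq β] {f : α → β}
    (hl : l.Nodup) (hm : (l.map f).Nodup) {x : α} (hx : x ∈ l) :
    (l.map f).idxOf (f x) = l.idxOf x := by
  have h1 : l.idxOf x < l.length := idxOf_lt_length.2 hx
  have h2 : (l.map f).get ⟨l.idxOf x, by simpa using h1⟩ = f x := by
    simp only [List.get_eq_getElem, List.getElem_map]; congr 1; exact idxOf_get h1
  have h3 : (l.map f).get ⟨(l.map f).idxOf (f x), idxOf_lt_length.2 (by simp; exact ⟨x, hx, rfl⟩)⟩ = f x := idxOf_get _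
  have := (List.Nodup.get_inj_iff hm).1 (h3.trans h2.symm)
  exact congrArg Fin.val this

lemma perm_of_nodup_mem_iff {l l' : List α} (hl : l.Nodup) (hl' : l'.Nodup)
    (hmem : ∀ x, x ∈ l ↔ x ∈ l') : l.Perm l' := by
  classical
  exact List.perm_of_nodup_nodup_toFinset_eq hl hl' (by ext z; simp [hmem z])

lemma eq_of_perm_of_pairwise_lt {κ : Type*} [LinearOrder κ] {key : α → κ} {l l' : List α}
    (hp : l.Perm l') (h1 : l.Pairwise fun a b => key a < key b)
    (h2 : l'.Pairwise fun a b => key a < key b) : l = l' := by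
  haveI : Std.Antisymm (fun a b => key a < key b) :=
    ⟨fun a b h h' => absurd (h.trans h') (lt_irrefl _)⟩
  exact List.Perm.eq_of_pairwise' h1 h2 hp

lemma sorted_indexOf_lt {κ : Type*} [LinearOrder κ] {key : α → κ} {w : List α}
    (hs : w.Pairwise fun a b => key a ≤ key b) (hw : w.Nodup)
    {x y : α} (hx : x ∈ w) (hy : y ∈ w) (hk : key x < key y) :
    w.idxOf x < w.idxOf y := by
  by_contra hcon
  push_neg at hcon
  rcases eq_or_lt_of_le hcon with heq | hlt
  · have h1 : w.get ⟨w.idxOf y, idxOf_lt_length.2 hy⟩ = y := idxOf_get _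
    have h2 : w.get ⟨w.idxOf x, idxOf_lt_length.2 hx⟩ = x := idxOf_get _
    have : x = y := by rw [← h2, ← h1]; congr 1; exact Fin.ext heq.symm
    rw [this] at hk; exact absurd hk (lt_irrefl _)
  · have := List.Pairwise.rel_get_of_lt hs (a := ⟨w.idxOf y, idxOf_lt_length.2 hy⟩)
      (b := ⟨w.idxOf x, idxOf_lt_length.2 hx⟩) hlt
    rw [idxOf_get, idxOf_get] at this
    exact absurd hk (not_lt.2 this)

/-- partition of a list's multiset by a ℕ-valued classifier -/
lemma multiset_sum_filter {l : List α} {κ : α → ℕ} {R : ℕ}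
    (h : ∀ x ∈ l, κ x < R) :
    (∑ i ∈ Finset.range R, ((l.filter fun x => decide (κ x = i)) : Multiset α)) = (l : Multiset α) := by
  classical
  induction l with
  | nil => simp
  | cons a t ih =>
    have ha : κ a < R := h a (List.mem_cons_self)
    have ht : ∀ x ∈ t, κ x < R := fun x hx => h x (List.mem_cons_of_mem _ hx)
    have step : ∀ i, ((List.filter (fun x => decide (κ x = i)) (a :: t) : Multiset α))
        = (if κ a = i then {a} else 0) + ((t.filter fun x => decide (κ x = i)) : Multiset α) := by
      intro i
      by_cases hai : κ a = i <;> simp [List.filter_cons, hai]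
    rw [Finset.sum_congr rfl fun i _ => step i, Finset.sum_add_distrib, ih ht]
    have : (∑ i ∈ Finset.range R, if κ a = i then ({a} : Multiset α) else 0) = {a} := by
      rw [Finset.sum_ite_eq (Finset.range R) (κ a) (fun _ => ({a} : Multiset α))]
      simp [Finset.mem_range.2 ha]
    rw [this]
    simp [Multiset.cons_coe]

lemma multiset_map_sum {β γ : Type*} (f : β → γ) (s : Finset ℕ) (g : ℕ → Multiset β) :
    Multiset.map f (∑ i ∈ s, g i) = ∑ i ∈ s, Multiset.map f (g i) := by
  classical
  induction s using Finset.induction with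
  | empty => simp
  | insert _ _ h ih => rw [Finset.sum_insert h, Finset.sum_insert h, Multiset.map_add, ih]

lemma lexlt4_iff (a b : ℕ) (v w : ℕ∞) (p q : ℕ ×ₗ ℕ) :
    toLex (a, toLex (v, p)) < toLex (b, toLex (w, q)) ↔
      a < b ∨ (a = b ∧ (v < w ∨ (v = w ∧ p < q))) := by
  rw [Prod.Lex.toLex_lt_toLex]
  dsimp only
  rw [Prod.Lex.toLex_lt_toLex]

lemma lexle4_iff (a b : ℕ) (v w : ℕ∞) (p q : ℕ ×ₗ ℕ) :
    toLex (a, toLex (v, p)) ≤ toLex (b, toLex (w, q)) ↔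
      a < b ∨ (a = b ∧ (v < w ∨ (v = w ∧ p ≤ q))) := by
  rw [Prod.Lex.toLex_le_toLex]
  dsimp only
  rw [Prod.Lex.toLex_le_toLex]

lemma lexlt2_iff (v w : ℕ∞) (p q : ℕ ×ₗ ℕ) :
    toLex (v, p) < toLex (w, q) ↔ v < w ∨ (v = w ∧ p < q) := by
  rw [Prod.Lex.toLex_lt_toLex]

lemma lexle2_iff (v w : ℕ∞) (p q : ℕ ×ₗ ℕ) :
    toLex (v, p) ≤ toLex (w, q) ↔ v < w ∨ (v = w ∧ p ≤ q) := by
  rw [Prod.Lex.toLex_le_toLex]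

end Lists
section ZeroStruct

lemma dc_finset {R : ℕ} {s : Finset ℕ} (hs : s ⊆ Finset.Ico 1 R)
    (hdc : ∀ j m, 1 ≤ j → j ≤ m → m ∈ s → j ∈ s) (m : ℕ) :
    m ∈ s ↔ 1 ≤ m ∧ m ≤ s.card := by
  constructor
  · intro hm
    have h1 : 1 ≤ m ∧ m < R := by simpa using hs hm
    refine ⟨h1.1, ?_⟩
    have hsub : Finset.Ico 1 (m+1) ⊆ s := by
      intro j hj
      simp only [Finset.mem_Ico] at hj
      exact hdc j m hj.1 (by omega) hm
    calc m = (Finset.Ico 1 (m+1)).card := by simp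
    _ ≤ s.card := Finset.card_le_card hsub
  · rintro ⟨h1, h2⟩
    by_contra hm
    have hsub : s ⊆ Finset.Ico 1 m := by
      intro j hj
      have hj1 : 1 ≤ j ∧ j < R := by simpa using hs hj
      simp only [Finset.mem_Ico]
      refine ⟨hj1.1, ?_⟩
      by_contra hge
      exact hm (hdc m j h1 (by omega) hj)
    have := Finset.card_le_card hsub
    simp at this
    omega

variable {r : ℕ} {P : ColoredPoset r} {w : List (ℕ × ℕ)}

lemma zero_mem_w (hw : IsLinExt P w) {m : ℕ} :
    ((0 : ℕ), m) ∈ w ↔ 1 ≤ m ∧ m < r := by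
  rw [hw.2.1]
  constructor
  · intro h; exact P.zero_only _ h rfl
  · intro h; exact P.zero_mem m h.1 h.2

lemma zero_idx_lt (hw : IsLinExt P w) {j m : ℕ} (h1 : 1 ≤ j) (hjm : j < m) (hm : m < r) :
    w.idxOf ((0 : ℕ), j) < w.idxOf ((0 : ℕ), m) := by
  refine hw.2.2 _ (P.zero_mem j h1 (by omega)) _ (P.zero_mem m (by omega) hm)
    (P.zero_chain j m h1 (by omega) hm) (by simp; omega)

lemma zero_idx_lt_iff (hw : IsLinExt P w) {j m : ℕ} (h1 : 1 ≤ j) (hj : j < r)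
    (h1' : 1 ≤ m) (hm : m < r) :
    w.idxOf ((0 : ℕ), j) < w.idxOf ((0 : ℕ), m) ↔ j < m := by
  constructor
  · intro h
    by_contra hge
    rcases eq_or_lt_of_le (not_lt.1 hge) with heq | hlt
    · rw [heq] at h; exact absurd h (lt_irrefl _)
    · exact absurd (h.trans (zero_idx_lt hw h1' hlt hj)) (lt_irrefl _)
  · intro h; exact zero_idx_lt hw h1 h hm

lemma zb_char (hw : IsLinExt P w) {x : ℕ × ℕ} (hx : x ∈ w) :
    zerosBefore w x =
      ((Finset.Ico 1 r).filter fun m => w.idxOf ((0 : ℕ), m) < w.idxOf x).card := by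
  classical
  have hnd : (w.take (w.idxOf x)).Nodup := hw.1.sublist (List.take_sublist _ _)
  have hnd2 : ((w.take (w.idxOf x)).filter fun z => decide (z.1 = 0)).Nodup :=
    hnd.sublist (List.filter_sublist)
  rw [zerosBefore, ← List.toFinset_card_of_nodup hnd2]
  have hts : ((w.take (w.idxOf x)).filter fun z => decide (z.1 = 0)).toFinset =
      ((Finset.Ico 1 r).filter fun m => w.idxOf ((0 : ℕ), m) < w.idxOf x).image
        (fun m => ((0 : ℕ), m)) := by
    ext z
    simp only [List.mem_toFinset, List.mem_filter, Finset.mem_image, Finset.mem_filter,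
      Finset.mem_Ico, decide_eq_true_eq]
    constructor
    · rintro ⟨hz1, hz2⟩
      have hzw : z ∈ w := List.mem_of_mem_take hz1
      have hz0 : z = ((0 : ℕ), z.2) := by
        ext
        · exact hz2
        · rfl
      have hrange : 1 ≤ z.2 ∧ z.2 < r := by
        rw [hz0] at hzw
        exact (zero_mem_w hw).1 hzw
      refine ⟨z.2, ⟨hrange, ?_⟩, hz0.symm⟩
      rw [← hz0]
      exact (mem_take_iff_indexOf hw.1 hzw _).1 hz1
    · rintro ⟨m, ⟨⟨hm1, hm2⟩, hlt⟩, rfl⟩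
      have hzw : ((0 : ℕ), m) ∈ w := (zero_mem_w hw).2 ⟨hm1, hm2⟩
      exact ⟨(mem_take_iff_indexOf hw.1 hzw _).2 hlt, rfl⟩
  rw [hts, Finset.card_image_of_injective _ (fun a b h => by simpa using h)]

lemma zb_le_iff (hw : IsLinExt P w) {x : ℕ × ℕ} (hx : x ∈ w) {m : ℕ} (h1 : 1 ≤ m) (hm : m < r) :
    w.idxOf ((0 : ℕ), m) < w.idxOf x ↔ m ≤ zerosBefore w x := by
  classical
  set s := (Finset.Ico 1 r).filter fun m => w.idxOf ((0 : ℕ), m) < w.idxOf x with hs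
  have hsub : s ⊆ Finset.Ico 1 r := Finset.filter_subset _ _
  have hdc : ∀ j m', 1 ≤ j → j ≤ m' → m' ∈ s → j ∈ s := by
    intro j m' hj hjm' hm'
    simp only [hs, Finset.mem_filter, Finset.mem_Ico] at hm' ⊢
    rcases eq_or_lt_of_le hjm' with heq | hlt
    · rw [heq]; exact hm'
    · exact ⟨⟨hj, by omega⟩, (zero_idx_lt hw hj hlt (by omega)).trans hm'.2⟩
  have hchar := dc_finset hsub hdc m
  rw [zb_char hw hx, ← hs]
  constructor
  · intro h
    exact (hchar.1 (by simp [hs, Finset.mem_filter, Finset.mem_Ico]; exact ⟨⟨h1, hm⟩, h⟩)).2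
  · intro h
    have := hchar.2 ⟨h1, h⟩
    simp only [hs, Finset.mem_filter] at this
    exact this.2

lemma zb_lt_r (hr : 1 ≤ r) (hw : IsLinExt P w) {x : ℕ × ℕ} (hx : x ∈ w) :
    zerosBefore w x < r := by
  classical
  rw [zb_char hw hx]
  calc ((Finset.Ico 1 r).filter fun m => w.idxOf ((0:ℕ), m) < w.idxOf x).card
      ≤ (Finset.Ico 1 r).card := Finset.card_le_card (Finset.filter_subset _ _)
  _ = r - 1 := by simp
  _ < r := by omega

lemma zb_zero (hw : IsLinExt P w) {m : ℕ} (h1 : 1 ≤ m) (hm : m < r) :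
    zerosBefore w ((0 : ℕ), m) = m - 1 := by
  classical
  rw [zb_char hw ((zero_mem_w hw).2 ⟨h1, hm⟩)]
  have : ((Finset.Ico 1 r).filter fun j => w.idxOf ((0:ℕ), j) < w.idxOf ((0:ℕ), m))
      = Finset.Ico 1 m := by
    ext j
    simp only [Finset.mem_filter, Finset.mem_Ico]
    constructor
    · rintro ⟨⟨hj1, hj2⟩, hlt⟩
      exact ⟨hj1, (zero_idx_lt_iff hw hj1 hj2 h1 hm).1 hlt⟩
    · rintro ⟨hj1, hj2⟩
      exact ⟨⟨hj1, by omega⟩, (zero_idx_lt_iff hw hj1 (by omega) h1 hm).2 hj2⟩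
  rw [this]; simp

lemma zb_mono (hw : IsLinExt P w) {x y : ℕ × ℕ} (hx : x ∈ w) (hy : y ∈ w)
    (hxy : w.idxOf x < w.idxOf y) : zerosBefore w x ≤ zerosBefore w y := by
  classical
  rw [zb_char hw hx, zb_char hw hy]
  apply Finset.card_le_card
  intro m hm
  simp only [Finset.mem_filter] at hm ⊢
  exact ⟨hm.1, hm.2.trans hxy⟩

end ZeroStruct
section SigmaLevel

lemma shiftLetter_fst (r k : ℕ) (x : ℕ × ℕ) : (shiftLetter r k x).1 = x.1 := rfl

lemma shiftLetter_snd_lt (r k : ℕ) (hr : 1 ≤ r) (x : ℕ × ℕ) : (shiftLetter r k x).2 < r :=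
  Nat.mod_lt _ (by omega)

lemma shiftLetter_zero {r : ℕ} (hr : 1 ≤ r) {y : ℕ × ℕ} (hy : y.2 < r) :
    shiftLetter r 0 y = y := by
  unfold shiftLetter
  ext
  · rfl
  · simp only [Nat.zero_mod, Nat.sub_zero, Nat.add_mod_right]
    exact Nat.mod_eq_of_lt hy

lemma shiftLetter_self {r k : ℕ} (hk : k < r) {x : ℕ × ℕ} (hx : x.2 = k) :
    (shiftLetter r k x).2 = 0 := by
  unfold shiftLetter
  simp only [hx, Nat.mod_eq_of_lt hk]
  have : k + r - k = r := by omega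
  rw [this, Nat.mod_self]

lemma shiftLetter_snd_eq_zero {r k : ℕ} (hk : k < r) {x : ℕ × ℕ} (hx : x.2 < r)
    (h : (shiftLetter r k x).2 = 0) : x.2 = k := by
  unfold shiftLetter at h
  rw [Nat.mod_eq_of_lt hk] at h
  have hd : r ∣ (x.2 + r - k) := Nat.dvd_of_mod_eq_zero h
  obtain ⟨c, hc⟩ := hd
  have h1 : x.2 + r - k < 2 * r := by omega
  have h2 : 0 < x.2 + r - k := by omega
  rcases c with _ | c'
  · rw [Nat.mul_zero] at hc; omega
  rcases c' with _ | c''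
  · rw [Nat.mul_one] at hc; omega
  · exfalso
    have h3 : r * (c'' + 1 + 1) = r * c'' + r + r := by ring
    omega

lemma shiftLetter_zb {r k : ℕ} (hk : k < r) {x : ℕ × ℕ} (hx : x.2 = k) :
    shiftLetter r k x = (x.1, 0) := by
  ext
  · rfl
  · exact shiftLetter_self hk hx

variable {r : ℕ} {P : ColoredPoset r} {w u : List (ℕ × ℕ)}

lemma mem_block {x : ℕ × ℕ} {i : ℕ} :
    x ∈ block w i ↔ x ∈ w ∧ 1 ≤ x.1 ∧ zerosBefore w x = i := by
  simp [block, List.mem_filter, and_assoc]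

lemma block_eq_filter_filter (w : List (ℕ × ℕ)) (i : ℕ) :
    block w i = (w.filter fun x => decide (1 ≤ x.1)).filter
      fun x => decide (zerosBefore w x = i) := by
  rw [List.filter_filter, block]
  apply List.filter_congr
  intro x _
  simp [decide_eq_true_eq, Bool.and_comm]

lemma block_multiset_sum (hr : 1 ≤ r) (hw : IsLinExt P w) :
    (∑ i ∈ Finset.range r, ((block w i) : Multiset (ℕ × ℕ)))
      = ((w.filter fun x => decide (1 ≤ x.1)) : Multiset (ℕ × ℕ)) := by
  classical
  have := multiset_sum_filter (l := w.filter fun x => decide (1 ≤ x.1))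
    (κ := zerosBefore w) (R := r) ?_
  · rw [← this]
    apply Finset.sum_congr rfl
    intro i _
    rw [block_eq_filter_filter]
  · intro x hx
    exact zb_lt_r hr hw (List.mem_of_mem_filter hx)

lemma mem_u_iff (hu : IsColoredLinExt r w u) {y : ℕ × ℕ} :
    y ∈ u ↔ ∃ i, i < r ∧ y ∈ blockWord r w i := by
  have h1 : y ∈ u ↔ y ∈ (↑u : Multiset (ℕ × ℕ)) := by simp
  rw [h1, hu.1]
  rw [Multiset.mem_sum]
  simp [Finset.mem_range]

lemma u_letter (hr : 1 ≤ r) (hu : IsColoredLinExt r w u) {y : ℕ × ℕ} (hy : y ∈ u) :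
    1 ≤ y.1 ∧ y.2 < r := by
  rw [mem_u_iff hu] at hy
  obtain ⟨i, hi, hy⟩ := hy
  rw [blockWord, List.mem_map] at hy
  obtain ⟨x, hx, rfl⟩ := hy
  rw [mem_block] at hx
  exact ⟨hx.2.1, shiftLetter_snd_lt r i hr x⟩

lemma w_val_inj (hw : IsLinExt P w) {x y : ℕ × ℕ} (hx : x ∈ w) (hy : y ∈ w)
    (hx1 : 1 ≤ x.1) (hxy : x.1 = y.1) : x = y :=
  P.val_inj x ((hw.2.1 x).1 hx) y ((hw.2.1 y).1 hy) hx1 hxy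

lemma w_letters_fst_nodup (hw : IsLinExt P w) :
    ((w.filter fun x => decide (1 ≤ x.1)).map Prod.fst).Nodup := by
  apply List.Nodup.map_on
  · intro x hx y hy hxy
    rw [List.mem_filter, decide_eq_true_eq] at hx hy
    exact w_val_inj hw hx.1 hy.1 hx.2 hxy
  · exact hw.1.sublist (List.filter_sublist)

lemma u_fst_perm (hr : 1 ≤ r) (hw : IsLinExt P w) (hu : IsColoredLinExt r w u) :
    (u.map Prod.fst).Perm ((w.filter fun x => decide (1 ≤ x.1)).map Prod.fst) := by
  rw [← Multiset.coe_eq_coe, ← Multiset.map_coe, ← Multiset.map_coe, hu.1,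
    ← block_multiset_sum hr hw, multiset_map_sum, multiset_map_sum]
  apply Finset.sum_congr rfl
  intro i _
  show Multiset.map Prod.fst ((blockWord r w i : List (ℕ × ℕ)) : Multiset (ℕ × ℕ))
      = Multiset.map Prod.fst ((block w i : List (ℕ × ℕ)) : Multiset (ℕ × ℕ))
  rw [Multiset.map_coe, Multiset.map_coe, blockWord, List.map_map]
  rfl

lemma u_fst_nodup (hr : 1 ≤ r) (hw : IsLinExt P w) (hu : IsColoredLinExt r w u) :
    (u.map Prod.fst).Nodup :=
  ((u_fst_perm hr hw hu).nodup_iff).2 (w_letters_fst_nodup hw)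

lemma u_nodup (hr : 1 ≤ r) (hw : IsLinExt P w) (hu : IsColoredLinExt r w u) : u.Nodup :=
  (u_fst_nodup hr hw hu).of_map

lemma u_val_inj (hr : 1 ≤ r) (hw : IsLinExt P w) (hu : IsColoredLinExt r w u)
    {y z : ℕ × ℕ} (hy : y ∈ u) (hz : z ∈ u) (hyz : y.1 = z.1) : y = z :=
  List.inj_on_of_nodup_map (u_fst_nodup hr hw hu) hy hz hyz

lemma u_length_eq (hr : 1 ≤ r) (hw : IsLinExt P w) (hu : IsColoredLinExt r w u) :
    u.length = (w.filter fun x => decide (1 ≤ x.1)).length := by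
  have := (u_fst_perm hr hw hu).length_eq
  simpa using this

lemma shift_mem_u (hr : 1 ≤ r) (hw : IsLinExt P w) (hu : IsColoredLinExt r w u)
    {x : ℕ × ℕ} (hx : x ∈ w) (hx1 : 1 ≤ x.1) :
    shiftLetter r (zerosBefore w x) x ∈ u := by
  rw [mem_u_iff hu]
  refine ⟨zerosBefore w x, zb_lt_r hr hw hx, ?_⟩
  rw [blockWord, List.mem_map]
  exact ⟨x, mem_block.2 ⟨hx, hx1, rfl⟩, rfl⟩

lemma pos_order (hr : 1 ≤ r) (hw : IsLinExt P w) (hu : IsColoredLinExt r w u)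
    {x y : ℕ × ℕ} (hx : x ∈ w) (hy : y ∈ w) (hx1 : 1 ≤ x.1) (hy1 : 1 ≤ y.1)
    {i : ℕ} (hzx : zerosBefore w x = i) (hzy : zerosBefore w y = i)
    (hxy : w.idxOf x < w.idxOf y) :
    u.idxOf (shiftLetter r i x) < u.idxOf (shiftLetter r i y) := by
  classical
  have hbx : x ∈ block w i := mem_block.2 ⟨hx, hx1, hzx⟩
  have hby : y ∈ block w i := mem_block.2 ⟨hy, hy1, hzy⟩
  have hbsub : (block w i).Sublist w := List.filter_sublist
  have hblock : (block w i).idxOf x < (block w i).idxOf y :=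
    (sublist_indexOf_lt_iff hbsub hw.1 hbx hby).2 hxy
  have hir : i < r := hzx ▸ zb_lt_r hr hw hx
  have hπsub : (blockWord r w i).Sublist u := hu.2 i hir
  have hund : u.Nodup := u_nodup hr hw hu
  have hπnd : (blockWord r w i).Nodup := hπsub.nodup hund
  have hbnd : (block w i).Nodup := hbsub.nodup hw.1
  have h1 : (blockWord r w i).idxOf (shiftLetter r i x) = (block w i).idxOf x :=
    indexOf_map_of_injOn hbnd hπnd hbx
  have h2 : (blockWord r w i).idxOf (shiftLetter r i y) = (block w i).idxOf y :=
    indexOf_map_of_injOn hbnd hπnd hby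
  have hmemπx : shiftLetter r i x ∈ blockWord r w i := List.mem_map.2 ⟨x, hbx, rfl⟩
  have hmemπy : shiftLetter r i y ∈ blockWord r w i := List.mem_map.2 ⟨y, hby, rfl⟩
  rw [← sublist_indexOf_lt_iff hπsub hund hmemπx hmemπy, h1, h2]
  exact hblock

variable {g : Fin u.length → ℕ × ℕ∞}

lemma g_fst_zero (hr : 1 ≤ r) (hw : IsLinExt P w) (hu : IsColoredLinExt r w u)
    (hg : IsWordCPPInf r u g) (p : Fin u.length) : (g p).1 = 0 := by
  rcases Nat.lt_or_ge 1 r with h2 | h2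
  · -- r ≥ 2, use m = 1
    have h4 := hg.2.2.2.1 p 1 le_rfl h2
    have hup : u.get p ∈ u := List.get_mem _ _
    have hletter := u_letter hr hu hup
    rcases h4 with h4 | h4
    · omega
    · exfalso
      have h5 := hg.2.2.2.2.1 p 1 le_rfl h2 h4.1
      have hshift1 : shiftLetter r 1 ((0:ℕ), 1) = (0, 0) := shiftLetter_zb h2 rfl
      have harg : letterLT (shiftLetter r 1 ((0:ℕ), (1:ℕ))) (shiftLetter r 1 (u.get p)) := by
        rw [hshift1]
        rcases Nat.eq_zero_or_pos (shiftLetter r 1 (u.get p)).2 with hc | hc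
        · right; exact ⟨hc.symm, by rw [shiftLetter_fst]; omega⟩
        · left; exact hc
      have := h5 harg
      rcases this with h6 | h6
      · omega
      · exact absurd h6.2 (by simp)
  · -- r = 1
    have := (hg.1 p).trans_le (by omega : r ≤ 1)
    omega

lemma g_strict_pairs (hr : 1 ≤ r) (hw : IsLinExt P w) (hu : IsColoredLinExt r w u)
    (hg : IsWordCPPInf r u g) {p q : Fin u.length} (hpq : p < q) :
    (g p).2 < (g q).2 ∨ ((g p).2 = (g q).2 ∧ letterLT (u.get p) (u.get q)) := by
  have h0p := g_fst_zero hr hw hu hg p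
  have h0q := g_fst_zero hr hw hu hg q
  have hle := hg.2.1 p q hpq
  have hle2 : (g p).2 ≤ (g q).2 := by
    rcases hle with h | h
    · omega
    · exact h.2
  have hup : u.get p ∈ u := List.get_mem _ _
  have huq : u.get q ∈ u := List.get_mem _ _
  have hne : u.get p ≠ u.get q := by
    intro heq
    have hnd := u_nodup hr hw hu
    have := (List.Nodup.get_inj_iff hnd).1 heq
    exact absurd (congrArg Fin.val this) (by omega)
  rcases eq_or_lt_of_le hle2 with heq | hlt
  · right
    refine ⟨heq, ?_⟩
    rcases letterLT_total hne with h | h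
    · exact h
    · exfalso
      have harg : letterLT (shiftLetter r (g p).1 (u.get q)) (shiftLetter r (g p).1 (u.get p)) := by
        rw [h0p, shiftLetter_zero hr (u_letter hr hu huq).2,
          shiftLetter_zero hr (u_letter hr hu hup).2]
        exact h
      have := hg.2.2.1 p q hpq (by rw [h0p, h0q]) harg
      rcases this with h6 | h6
      · omega
      · rw [← heq] at h6; exact absurd h6.2 (lt_irrefl _)
  · left; exact hlt

end SigmaLevel
section PsiDef

variable {r : ℕ} {P : ColoredPoset r}

/-- The map from a triple (w, u, g) to a colored P-partition. -/
noncomputable def psiF (hr : 1 ≤ r) {w u : List (ℕ × ℕ)} (hw : IsLinExt P w)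
    (hu : IsColoredLinExt r w u) (g : Fin u.length → ℕ × ℕ∞) :
    {x // x ∈ P.elems} → ℕ × ℕ∞ :=
  fun x =>
    if h : x.1.1 = 0 then (x.1.2, 0)
    else (zerosBefore w x.1,
      (g ⟨u.idxOf (shiftLetter r (zerosBefore w x.1) x.1),
          idxOf_lt_length.2
            (shift_mem_u hr hw hu ((hw.2.1 _).2 x.2) (by omega))⟩).2)

lemma psiF_zero (hr : 1 ≤ r) {w u : List (ℕ × ℕ)} (hw : IsLinExt P w)
    (hu : IsColoredLinExt r w u) (g : Fin u.length → ℕ × ℕ∞)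
    {x : {x // x ∈ P.elems}} (h : x.1.1 = 0) :
    psiF hr hw hu g x = (x.1.2, 0) := by
  rw [psiF, dif_pos h]

lemma psiF_letter (hr : 1 ≤ r) {w u : List (ℕ × ℕ)} (hw : IsLinExt P w)
    (hu : IsColoredLinExt r w u) (g : Fin u.length → ℕ × ℕ∞)
    {x : {x // x ∈ P.elems}} (h : ¬ x.1.1 = 0)
    (hlt : u.idxOf (shiftLetter r (zerosBefore w x.1) x.1) < u.length) :
    psiF hr hw hu g x = (zerosBefore w x.1,
      (g ⟨u.idxOf (shiftLetter r (zerosBefore w x.1) x.1), hlt⟩).2) := by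
  rw [psiF, dif_neg h]

lemma psiF_isCPPInf (hr : 1 ≤ r) {w u : List (ℕ × ℕ)} (hw : IsLinExt P w)
    (hu : IsColoredLinExt r w u) {g : Fin u.length → ℕ × ℕ∞}
    (hg : IsWordCPPInf r u g) : IsCPPInf r P (psiF hr hw hu g) := by
  classical
  have hmemw : ∀ x : {x // x ∈ P.elems}, x.1 ∈ w := fun x => (hw.2.1 _).2 x.2
  have hzero_struct : ∀ x : {x : ℕ × ℕ // x ∈ P.elems}, x.1.1 = 0 →
      x.1 = ((0:ℕ), x.1.2) ∧ 1 ≤ x.1.2 ∧ x.1.2 < r := by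
    intro x hx
    refine ⟨?_, P.zero_only x.1 x.2 hx⟩
    ext
    · exact hx
    · rfl
  -- position of a letter in u
  have hposlt : ∀ x : {x // x ∈ P.elems}, ¬ x.1.1 = 0 →
      u.idxOf (shiftLetter r (zerosBefore w x.1) x.1) < u.length := fun x h =>
    idxOf_lt_length.2 (shift_mem_u hr hw hu (hmemw x) (by omega))
  have hgetpos : ∀ (x : {x // x ∈ P.elems}) (h : ¬ x.1.1 = 0),
      u.get ⟨u.idxOf (shiftLetter r (zerosBefore w x.1) x.1), hposlt x h⟩
        = shiftLetter r (zerosBefore w x.1) x.1 := fun x h => idxOf_get _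
  -- the "letter < zero" fact
  have hletterzero : ∀ (x y : {x // x ∈ P.elems}), ¬ x.1.1 = 0 → y.1.1 = 0 →
      P.rel x.1 y.1 → zerosBefore w x.1 < y.1.2 := by
    intro x y hx hy hrel
    obtain ⟨hy0, hy1, hy2⟩ := hzero_struct y hy
    have hne : x.1 ≠ y.1 := fun hc => hx (by rw [hc, hy0])
    have hidx : w.idxOf x.1 < w.idxOf y.1 := hw.2.2 _ x.2 _ y.2 hrel hne
    by_contra hge
    have h2 : y.1.2 ≤ zerosBefore w x.1 := by omega
    have := (zb_le_iff hw (hmemw x) hy1 hy2).2 h2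
    rw [← hy0] at this
    omega
  refine ⟨?_, ?_, ?_, ?_, ?_⟩
  · -- bounds
    intro x
    by_cases h : x.1.1 = 0
    · rw [psiF_zero hr hw hu g h]
      exact (hzero_struct x h).2.2
    · rw [psiF_letter hr hw hu g h (hposlt x h)]
      exact zb_lt_r hr hw (hmemw x)
  · -- zeros
    intro m h1 h2
    rw [psiF_zero hr hw hu g (show ((0:ℕ), m).1 = 0 from rfl)]
  · -- weak increase
    intro x y hrel
    by_cases hxy : x = y
    · subst hxy; right; exact ⟨rfl, le_rfl⟩
    have hne : x.1 ≠ y.1 := fun hc => hxy (Subtype.ext hc)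
    have hidx : w.idxOf x.1 < w.idxOf y.1 := hw.2.2 _ x.2 _ y.2 hrel hne
    by_cases hx : x.1.1 = 0 <;> by_cases hy : y.1.1 = 0
    · -- zero zero
      obtain ⟨hx0, hx1, hx2⟩ := hzero_struct x hx
      obtain ⟨hy0, hy1, hy2⟩ := hzero_struct y hy
      rw [psiF_zero hr hw hu g hx, psiF_zero hr hw hu g hy]
      rcases lt_trichotomy x.1.2 y.1.2 with h | h | h
      · left; exact h
      · right; exact ⟨h, le_rfl⟩
      · exfalso
        have := zero_idx_lt hw hy1 h hx2
        rw [← hx0, ← hy0] at this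
        omega
    · -- zero letter
      obtain ⟨hx0, hx1, hx2⟩ := hzero_struct x hx
      rw [psiF_zero hr hw hu g hx, psiF_letter hr hw hu g hy (hposlt y hy)]
      have hidx2 : w.idxOf ((0:ℕ), x.1.2) < w.idxOf y.1 := by rw [← hx0]; exact hidx
      have hle := (zb_le_iff hw (hmemw y) hx1 hx2).1 hidx2
      rcases eq_or_lt_of_le hle with heq | hlt
      · right; exact ⟨heq, zero_le⟩
      · left; exact hlt
    · -- letter zero
      rw [psiF_letter hr hw hu g hx (hposlt x hx), psiF_zero hr hw hu g hy]
      left; exact hletterzero x y hx hy hrel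
    · -- letter letter
      rw [psiF_letter hr hw hu g hx (hposlt x hx), psiF_letter hr hw hu g hy (hposlt y hy)]
      have hmono := zb_mono hw (hmemw x) (hmemw y) hidx
      rcases eq_or_lt_of_le hmono with heq | hlt
      · right
        refine ⟨heq, ?_⟩
        have hposo := pos_order hr hw hu (hmemw x) (hmemw y) (by omega) (by omega)
          heq rfl hidx
        have hplt : (⟨u.idxOf (shiftLetter r (zerosBefore w x.1) x.1), hposlt x hx⟩ :
            Fin u.length) < ⟨u.idxOf (shiftLetter r (zerosBefore w y.1) y.1), hposlt y hy⟩ := by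
          rw [Fin.mk_lt_mk, heq]
          exact hposo
        have h2 := hg.2.1 _ _ hplt
        have h0p := g_fst_zero hr hw hu hg ⟨u.idxOf (shiftLetter r (zerosBefore w x.1) x.1), hposlt x hx⟩
        have h0q := g_fst_zero hr hw hu hg ⟨u.idxOf (shiftLetter r (zerosBefore w y.1) y.1), hposlt y hy⟩
        rcases h2 with h2 | h2
        · omega
        · exact h2.2
      · left; exact hlt
  · -- strict increase
    intro x y hrel hcol hlt
    by_cases hxy : x = y
    · subst hxy
      exact absurd hlt letterLT_irrefl
    have hne : x.1 ≠ y.1 := fun hc => hxy (Subtype.ext hc)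
    have hidx : w.idxOf x.1 < w.idxOf y.1 := hw.2.2 _ x.2 _ y.2 hrel hne
    by_cases hx : x.1.1 = 0 <;> by_cases hy : y.1.1 = 0
    · -- zero zero: colors equal gives x = y
      exfalso
      obtain ⟨hx0, hx1, hx2⟩ := hzero_struct x hx
      obtain ⟨hy0, hy1, hy2⟩ := hzero_struct y hy
      rw [psiF_zero hr hw hu g hx, psiF_zero hr hw hu g hy] at hcol
      simp only at hcol
      apply hne
      rw [hx0, hy0, hcol]
    · -- zero letter: shift of x is (0,0), minimal
      exfalso
      obtain ⟨hx0, hx1, hx2⟩ := hzero_struct x hx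
      rw [psiF_zero hr hw hu g hx] at hcol hlt
      simp only at hcol hlt
      have hsx : shiftLetter r x.1.2 x.1 = (x.1.1, 0) := shiftLetter_zb hx2 rfl
      rw [hsx, hx] at hlt
      rcases hlt with h | h
      · omega
      · omega
    · -- letter zero: impossible (colors)
      exfalso
      obtain ⟨hy0, hy1, hy2⟩ := hzero_struct y hy
      rw [psiF_letter hr hw hu g hx (hposlt x hx), psiF_zero hr hw hu g hy] at hcol
      simp only at hcol
      have := hletterzero x y hx hy hrel
      omega
    · -- letter letter
      rw [psiF_letter hr hw hu g hx (hposlt x hx), psiF_letter hr hw hu g hy (hposlt y hy)] at hcol ⊢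
      simp only at hcol
      have hposo := pos_order hr hw hu (hmemw x) (hmemw y) (by omega) (by omega)
        hcol rfl hidx
      set px : Fin u.length := ⟨u.idxOf (shiftLetter r (zerosBefore w x.1) x.1), hposlt x hx⟩
      set py : Fin u.length := ⟨u.idxOf (shiftLetter r (zerosBefore w y.1) y.1), hposlt y hy⟩
      have hplt : px < py := by
        rw [Fin.mk_lt_mk, hcol]
        exact hposo
      have h0p := g_fst_zero hr hw hu hg px
      have h0q := g_fst_zero hr hw hu hg py
      have harg : letterLT (shiftLetter r (g px).1 (u.get py)) (shiftLetter r (g px).1 (u.get px)) := by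
        rw [h0p, shiftLetter_zero hr (u_letter hr hu (List.get_mem _ _)).2,
          shiftLetter_zero hr (u_letter hr hu (List.get_mem _ _)).2, hgetpos x hx, hgetpos y hy]
        rw [psiF_letter hr hw hu g hx (hposlt x hx)] at hlt
        simp only at hlt
        rw [← hcol]
        exact hlt
      have h2 := hg.2.2.1 px py hplt (by rw [h0p, h0q]) harg
      rcases h2 with h2 | h2
      · omega
      · right
        exact ⟨hcol, h2.2⟩
  · -- top
    intro x htop
    by_cases h : x.1.1 = 0
    · rw [psiF_zero hr hw hu g h] at htop
      exact absurd htop (by simp)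
    · rw [psiF_letter hr hw hu g h (hposlt x h)] at htop ⊢
      simp only at htop ⊢
      set px : Fin u.length := ⟨u.idxOf (shiftLetter r (zerosBefore w x.1) x.1), hposlt x h⟩
      have h6 := hg.2.2.2.2.2 px htop
      rw [hgetpos x h, g_fst_zero hr hw hu hg px] at h6
      exact shiftLetter_snd_eq_zero (zb_lt_r hr hw (hmemw x)) (P.col_lt x.1 x.2) h6
end PsiDef
section PhiDef

variable {r : ℕ} {P : ColoredPoset r}

/-- full sort key for positions in `w` -/
noncomputable def keyW (r : ℕ) {P : ColoredPoset r} (F : {x // x ∈ P.elems} → ℕ × ℕ∞)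
    (x : {x // x ∈ P.elems}) : ℕ ×ₗ (ℕ∞ ×ₗ (ℕ ×ₗ ℕ)) :=
  toLex ((F x).1, toLex ((F x).2, letterKey (shiftLetter r (F x).1 x.1)))

/-- sort key for positions in `u` -/
noncomputable def key2 (r : ℕ) {P : ColoredPoset r} (F : {x // x ∈ P.elems} → ℕ × ℕ∞)
    (x : {x // x ∈ P.elems}) : ℕ∞ ×ₗ (ℕ ×ₗ ℕ) :=
  toLex ((F x).2, letterKey (shiftLetter r (F x).1 x.1))

noncomputable def shiftF (r : ℕ) {P : ColoredPoset r} (F : {x // x ∈ P.elems} → ℕ × ℕ∞)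
    (x : {x // x ∈ P.elems}) : ℕ × ℕ :=
  shiftLetter r (F x).1 x.1

noncomputable def wList (r : ℕ) (P : ColoredPoset r) (F : {x // x ∈ P.elems} → ℕ × ℕ∞) :
    List {x // x ∈ P.elems} :=
  List.insertionSort (fun a b => keyW r F a ≤ keyW r F b) P.elems.attach.toList

noncomputable def phiW (r : ℕ) (P : ColoredPoset r) (F : {x // x ∈ P.elems} → ℕ × ℕ∞) :
    List (ℕ × ℕ) :=
  (wList r P F).map Subtype.val

noncomputable def sList (r : ℕ) (P : ColoredPoset r) (F : {x // x ∈ P.elems} → ℕ × ℕ∞) :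
    List {x // x ∈ P.elems} :=
  List.insertionSort (fun a b => key2 r F a ≤ key2 r F b)
    (P.elems.attach.toList.filter fun x => decide (1 ≤ x.1.1))

noncomputable def phiU (r : ℕ) (P : ColoredPoset r) (F : {x // x ∈ P.elems} → ℕ × ℕ∞) :
    List (ℕ × ℕ) :=
  (sList r P F).map (shiftF r F)

lemma phiU_length (r : ℕ) (P : ColoredPoset r) (F : {x // x ∈ P.elems} → ℕ × ℕ∞) :
    (phiU r P F).length = (sList r P F).length := by
  simp [phiU]

noncomputable def phiG (r : ℕ) (P : ColoredPoset r) (F : {x // x ∈ P.elems} → ℕ × ℕ∞) :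
    Fin (phiU r P F).length → ℕ × ℕ∞ :=
  fun p => ((0 : ℕ), (F ((sList r P F).get (Fin.cast (phiU_length r P F) p))).2)

variable {F : {x // x ∈ P.elems} → ℕ × ℕ∞}

lemma F_zero (hF : IsCPPInf r P F) {x : {x // x ∈ P.elems}} (h : x.1.1 = 0) :
    F x = (x.1.2, 0) ∧ 1 ≤ x.1.2 ∧ x.1.2 < r := by
  obtain ⟨h1, h2⟩ := P.zero_only x.1 x.2 h
  have hx : x = ⟨((0 : ℕ), x.1.2), P.zero_mem x.1.2 h1 h2⟩ := by
    apply Subtype.ext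
    ext
    · exact h
    · rfl
  refine ⟨?_, h1, h2⟩
  rw [hx]
  exact hF.2.1 x.1.2 h1 h2

lemma shiftF_zero (hF : IsCPPInf r P F) {x : {x // x ∈ P.elems}} (h : x.1.1 = 0) :
    shiftF r F x = ((0 : ℕ), (0 : ℕ)) := by
  obtain ⟨h0, h1, h2⟩ := F_zero hF h
  rw [shiftF, h0]
  have := shiftLetter_zb (r := r) (k := x.1.2) h2 (x := x.1) rfl
  simpa [h] using this

lemma keyW_inj (hF : IsCPPInf r P F) {x y : {x // x ∈ P.elems}}
    (h : keyW r F x = keyW r F y) : x = y := by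
  rw [keyW, keyW, toLex_inj, Prod.ext_iff] at h
  obtain ⟨hc, h2⟩ := h
  rw [toLex_inj, Prod.ext_iff] at h2
  obtain ⟨hv, h3⟩ := h2
  have hFs : F x = F y := Prod.ext hc hv
  have hsh : shiftLetter r (F x).1 x.1 = shiftLetter r (F x).1 y.1 := by
    have h4 := letterKey_inj h3
    rw [← hFs] at h4
    exact h4
  have hval : x.1.1 = y.1.1 := by
    have := congrArg Prod.fst hsh
    simpa [shiftLetter_fst] using this
  by_cases hx : x.1.1 = 0
  · have hy : y.1.1 = 0 := by omega
    obtain ⟨hx0, _, _⟩ := F_zero hF hx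
    obtain ⟨hy0, _, _⟩ := F_zero hF hy
    rw [hx0, hy0] at hFs
    apply Subtype.ext
    ext
    · omega
    · exact congrArg Prod.fst hFs
  · apply Subtype.ext
    exact P.val_inj x.1 x.2 y.1 y.2 (by omega) hval

lemma keyW_lt_of_rel (hF : IsCPPInf r P F) {x y : {x // x ∈ P.elems}}
    (hrel : P.rel x.1 y.1) (hne : x ≠ y) : keyW r F x < keyW r F y := by
  have hle := hF.2.2.1 x y hrel
  rw [keyW, keyW, Prod.Lex.toLex_lt_toLex]
  rcases hle with h | ⟨hc, hv⟩
  · left; exact h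
  right
  refine ⟨hc, ?_⟩
  rw [Prod.Lex.toLex_lt_toLex]
  rcases lt_or_eq_of_le hv with h | h
  · left; exact h
  right
  refine ⟨h, ?_⟩
  have hFs : F x = F y := Prod.ext hc h
  rw [letterKey_lt_iff]
  -- need letterLT (shift (Fx).1 x.1) (shift (Fy).1 y.1); colors equal
  have hcol : (F y).1 = (F x).1 := hc.symm
  rw [show shiftLetter r (F y).1 y.1 = shiftLetter r (F x).1 y.1 by rw [hc]]
  by_cases hx : x.1.1 = 0
  · obtain ⟨hx0, hx1, hx2⟩ := F_zero hF hx
    have hk : (F x).1 = x.1.2 := by rw [hx0]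
    have hsx : shiftLetter r (F x).1 x.1 = ((0:ℕ), (0:ℕ)) := by
      have := shiftF_zero hF hx
      rw [shiftF] at this; exact this
    rw [hsx]
    by_cases hy : y.1.1 = 0
    · exfalso
      obtain ⟨hy0, hy1, hy2⟩ := F_zero hF hy
      apply hne
      apply Subtype.ext
      ext
      · omega
      · have : x.1.2 = y.1.2 := by
          have := hFs
          rw [hx0, hy0] at this
          exact congrArg Prod.fst this
        exact this
    · -- y is a letter
      have hy1 : 1 ≤ y.1.1 := by omega
      rcases Nat.eq_zero_or_pos (shiftLetter r (F x).1 y.1).2 with hcz | hcz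
      · right; exact ⟨hcz.symm, by rw [shiftLetter_fst]; omega⟩
      · left; exact hcz
  · -- x is a letter
    have hxv : 1 ≤ x.1.1 := by omega
    have hnot : ¬ letterLT (shiftLetter r (F x).1 y.1) (shiftLetter r (F x).1 x.1) := by
      intro hcon
      have := hF.2.2.2.1 x y hrel hc hcon
      rcases this with h' | h'
      · rw [hFs] at h'; omega
      · rw [hFs] at h'; exact absurd h'.2 (lt_irrefl _)
    have hshne : shiftLetter r (F x).1 x.1 ≠ shiftLetter r (F x).1 y.1 := by
      intro hcon
      have hval : x.1.1 = y.1.1 := by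
        have := congrArg Prod.fst hcon
        simpa [shiftLetter_fst] using this
      exact hne (Subtype.ext (P.val_inj x.1 x.2 y.1 y.2 hxv hval))
    rcases letterLT_total hshne with h' | h'
    · exact h'
    · exact absurd h' hnot

lemma wList_sorted (r : ℕ) (P : ColoredPoset r) (F : {x // x ∈ P.elems} → ℕ × ℕ∞) :
    (wList r P F).Pairwise fun a b => keyW r F a ≤ keyW r F b := by
  haveI : IsTotal {x // x ∈ P.elems} (fun a b => keyW r F a ≤ keyW r F b) :=
    ⟨fun a b => le_total _ _⟩
  haveI : IsTrans {x // x ∈ P.elems} (fun a b => keyW r F a ≤ keyW r F b) :=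
    ⟨fun a b c hab hbc => le_trans hab hbc⟩
  exact List.pairwise_insertionSort _ _

lemma wList_perm (r : ℕ) (P : ColoredPoset r) (F : {x // x ∈ P.elems} → ℕ × ℕ∞) :
    (wList r P F).Perm P.elems.attach.toList := List.perm_insertionSort _ _

lemma wList_nodup (r : ℕ) (P : ColoredPoset r) (F : {x // x ∈ P.elems} → ℕ × ℕ∞) :
    (wList r P F).Nodup := ((wList_perm r P F).nodup_iff).2 (Finset.nodup_toList _)

lemma mem_wList (r : ℕ) (P : ColoredPoset r) (F : {x // x ∈ P.elems} → ℕ × ℕ∞)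
    (a : {x // x ∈ P.elems}) : a ∈ wList r P F := by
  rw [(wList_perm r P F).mem_iff, Finset.mem_toList]
  exact Finset.mem_attach _ _

lemma phiW_nodup (r : ℕ) (P : ColoredPoset r) (F : {x // x ∈ P.elems} → ℕ × ℕ∞) :
    (phiW r P F).Nodup := (wList_nodup r P F).map Subtype.val_injective

lemma mem_phiW (r : ℕ) (P : ColoredPoset r) (F : {x // x ∈ P.elems} → ℕ × ℕ∞)
    (x : ℕ × ℕ) : x ∈ phiW r P F ↔ x ∈ P.elems := by
  rw [phiW, List.mem_map]
  constructor
  · rintro ⟨a, _, rfl⟩; exact a.2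
  · intro h; exact ⟨⟨x, h⟩, mem_wList r P F _, rfl⟩

lemma phiW_indexOf (r : ℕ) (P : ColoredPoset r) (F : {x // x ∈ P.elems} → ℕ × ℕ∞)
    (a : {x // x ∈ P.elems}) :
    (phiW r P F).idxOf a.1 = (wList r P F).idxOf a := by
  rw [phiW]
  exact indexOf_map_of_injOn (wList_nodup r P F) (phiW_nodup r P F) (mem_wList r P F a)

lemma phiW_indexOf_lt (hF : IsCPPInf r P F) {a b : {x // x ∈ P.elems}}
    (h : keyW r F a < keyW r F b) :
    (phiW r P F).idxOf a.1 < (phiW r P F).idxOf b.1 := by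
  rw [phiW_indexOf, phiW_indexOf]
  exact sorted_indexOf_lt (wList_sorted r P F) (wList_nodup r P F)
    (mem_wList r P F a) (mem_wList r P F b) h

lemma phiW_indexOf_lt_iff (hF : IsCPPInf r P F) {a b : {x // x ∈ P.elems}} (hne : a ≠ b) :
    (phiW r P F).idxOf a.1 < (phiW r P F).idxOf b.1 ↔ keyW r F a < keyW r F b := by
  constructor
  · intro h
    rcases lt_trichotomy (keyW r F a) (keyW r F b) with h' | h' | h'
    · exact h'
    · exact absurd (keyW_inj hF h') hne
    · exact absurd (phiW_indexOf_lt hF h') (by omega)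
  · exact phiW_indexOf_lt hF

lemma phiW_isLinExt (hF : IsCPPInf r P F) : IsLinExt P (phiW r P F) := by
  refine ⟨phiW_nodup r P F, mem_phiW r P F, ?_⟩
  intro x hx y hy hrel hne
  have := phiW_indexOf_lt hF (a := ⟨x, hx⟩) (b := ⟨y, hy⟩)
    (keyW_lt_of_rel hF hrel (fun hc => hne (congrArg Subtype.val hc)))
  exact this

lemma keyW_zero_lt_iff (hF : IsCPPInf r P F) {m : ℕ} (h1 : 1 ≤ m) (h2 : m < r)
    {x : {x // x ∈ P.elems}} (hx : 1 ≤ x.1.1) :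
    keyW r F ⟨((0:ℕ), m), P.zero_mem m h1 h2⟩ < keyW r F x ↔ m ≤ (F x).1 := by
  set z : {x // x ∈ P.elems} := ⟨((0:ℕ), m), P.zero_mem m h1 h2⟩ with hz
  obtain ⟨hz0, _, _⟩ := F_zero hF (show z.1.1 = 0 from rfl)
  have hsz : shiftLetter r (F z).1 z.1 = ((0:ℕ), (0:ℕ)) := by
    have := shiftF_zero hF (show z.1.1 = 0 from rfl)
    rw [shiftF] at this; exact this
  have hz1 : (F z).1 = m := by rw [hz0]
  have hz2 : (F z).2 = 0 := by rw [hz0]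
  rw [keyW, keyW, lexlt4_iff, hsz, hz1, hz2]
  constructor
  · rintro (h | ⟨hcol, _⟩)
    · omega
    · omega
  · intro hle
    rcases lt_or_eq_of_le hle with h | h
    · left; exact h
    · right
      refine ⟨h, ?_⟩
      rcases eq_or_lt_of_le (show 0 ≤ (F x).2 from zero_le) with hv | hv
      · right
        refine ⟨hv, ?_⟩
        show letterKey ((0:ℕ), (0:ℕ)) < letterKey (shiftLetter r (F x).1 x.1)
        rw [letterKey_lt_iff]
        rcases Nat.eq_zero_or_pos (shiftLetter r (F x).1 x.1).2 with hcz | hcz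
        · right; exact ⟨hcz.symm, by rw [shiftLetter_fst]; omega⟩
        · left; exact hcz
      · left; exact hv

lemma phi_zb (hF : IsCPPInf r P F) {x : {x // x ∈ P.elems}} (hx : 1 ≤ x.1.1) :
    zerosBefore (phiW r P F) x.1 = (F x).1 := by
  classical
  have hw := phiW_isLinExt hF
  rw [zb_char hw ((mem_phiW r P F x.1).2 x.2)]
  have hset : ((Finset.Ico 1 r).filter fun m =>
      (phiW r P F).idxOf ((0:ℕ), m) < (phiW r P F).idxOf x.1)
      = Finset.Ico 1 ((F x).1 + 1) := by
    ext m
    simp only [Finset.mem_filter, Finset.mem_Ico]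
    constructor
    · rintro ⟨⟨hm1, hm2⟩, hlt⟩
      refine ⟨hm1, ?_⟩
      have hne : (⟨((0:ℕ), m), P.zero_mem m hm1 hm2⟩ : {x // x ∈ P.elems}) ≠ x := by
        intro hc
        have := congrArg (fun z => z.1.1) hc
        simp at this
        omega
      have := (phiW_indexOf_lt_iff hF hne).1 hlt
      have := (keyW_zero_lt_iff hF hm1 hm2 hx).1 this
      omega
    · rintro ⟨hm1, hm2⟩
      have hm2' : m ≤ (F x).1 := by omega
      have hmr : m < r := by
        have := hF.1 x
        omega
      refine ⟨⟨hm1, hmr⟩, ?_⟩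
      exact phiW_indexOf_lt hF ((keyW_zero_lt_iff hF hm1 hmr hx).2 hm2')
  rw [hset]
  simp

end PhiDef
section PhiDef2

variable {r : ℕ} {P : ColoredPoset r} {F : {x // x ∈ P.elems} → ℕ × ℕ∞}

lemma sList_sorted (r : ℕ) (P : ColoredPoset r) (F : {x // x ∈ P.elems} → ℕ × ℕ∞) :
    (sList r P F).Pairwise fun a b => key2 r F a ≤ key2 r F b := by
  haveI : IsTotal {x // x ∈ P.elems} (fun a b => key2 r F a ≤ key2 r F b) :=
    ⟨fun a b => le_total _ _⟩
  haveI : IsTrans {x // x ∈ P.elems} (fun a b => key2 r F a ≤ key2 r F b) :=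
    ⟨fun a b c hab hbc => le_trans hab hbc⟩
  exact List.pairwise_insertionSort _ _

lemma sList_perm (r : ℕ) (P : ColoredPoset r) (F : {x // x ∈ P.elems} → ℕ × ℕ∞) :
    (sList r P F).Perm (P.elems.attach.toList.filter fun x => decide (1 ≤ x.1.1)) :=
  List.perm_insertionSort _ _

lemma sList_nodup (r : ℕ) (P : ColoredPoset r) (F : {x // x ∈ P.elems} → ℕ × ℕ∞) :
    (sList r P F).Nodup :=
  ((sList_perm r P F).nodup_iff).2 ((Finset.nodup_toList _).sublist (List.filter_sublist))

lemma mem_sList (r : ℕ) (P : ColoredPoset r) (F : {x // x ∈ P.elems} → ℕ × ℕ∞)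
    (a : {x // x ∈ P.elems}) : a ∈ sList r P F ↔ 1 ≤ a.1.1 := by
  rw [(sList_perm r P F).mem_iff, List.mem_filter]
  simp [Finset.mem_toList]

lemma key2_inj_letters (hF : IsCPPInf r P F) {a b : {x // x ∈ P.elems}}
    (ha : 1 ≤ a.1.1) (hb : 1 ≤ b.1.1) (h : key2 r F a = key2 r F b) : a = b := by
  rw [key2, key2, toLex_inj, Prod.ext_iff] at h
  have := letterKey_inj h.2
  have hval : a.1.1 = b.1.1 := by
    have := congrArg Prod.fst this
    simpa [shiftLetter_fst] using this
  exact Subtype.ext (P.val_inj a.1 a.2 b.1 b.2 ha hval)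

lemma sList_pairwise (hF : IsCPPInf r P F) :
    (sList r P F).Pairwise fun a b => key2 r F a < key2 r F b := by
  have h1 := (sList_sorted r P F).and (sList_nodup r P F)
  apply h1.imp_of_mem
  intro a b ha hb hab
  rcases lt_or_eq_of_le hab.1 with h | h
  · exact h
  · exact absurd (key2_inj_letters hF ((mem_sList r P F a).1 ha) ((mem_sList r P F b).1 hb) h)
      hab.2

lemma block_phiW (hF : IsCPPInf r P F) (i : ℕ) :
    block (phiW r P F) i =
      ((wList r P F).filter fun a => decide (1 ≤ a.1.1 ∧ (F a).1 = i)).map Subtype.val := by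
  rw [block, phiW, List.filter_map]
  congr 1
  apply List.filter_congr
  intro a _
  show decide (1 ≤ a.1.1 ∧ zerosBefore (phiW r P F) a.1 = i) = _
  by_cases h : 1 ≤ a.1.1
  · simp only [h, true_and, decide_eq_decide]
    rw [phi_zb hF h]
  · simp only [h, false_and]

lemma blockWord_phiW (hF : IsCPPInf r P F) (i : ℕ) :
    blockWord r (phiW r P F) i =
      ((wList r P F).filter fun a => decide (1 ≤ a.1.1 ∧ (F a).1 = i)).map (shiftF r F) := by
  rw [blockWord, block_phiW hF, List.map_map]
  apply List.map_congr_left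
  intro a ha
  rw [List.mem_filter, decide_eq_true_eq] at ha
  show shiftLetter r i a.1 = shiftF r F a
  rw [shiftF, ha.2.2]

lemma wfilter_eq_sfilter (hF : IsCPPInf r P F) (i : ℕ) :
    ((wList r P F).filter fun a => decide (1 ≤ a.1.1 ∧ (F a).1 = i)) =
      ((sList r P F).filter fun a => decide ((F a).1 = i)) := by
  classical
  apply eq_of_perm_of_pairwise_lt (key := key2 r F)
  · apply perm_of_nodup_mem_iff
    · exact (wList_nodup r P F).sublist (List.filter_sublist)
    · exact (sList_nodup r P F).sublist (List.filter_sublist)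
    · intro a
      rw [List.mem_filter, List.mem_filter, decide_eq_true_eq, decide_eq_true_eq,
        mem_sList r P F]
      constructor
      · rintro ⟨_, h1, h2⟩; exact ⟨h1, h2⟩
      · rintro ⟨h1, h2⟩; exact ⟨mem_wList r P F a, h1, h2⟩
  · have hsub : ((wList r P F).filter fun a => decide (1 ≤ a.1.1 ∧ (F a).1 = i)).Sublist
        (wList r P F) := List.filter_sublist
    have h1 := ((wList_sorted r P F).and (wList_nodup r P F)).sublist hsub
    apply h1.imp_of_mem
    intro a b ha hb hab
    rw [List.mem_filter, decide_eq_true_eq] at ha hb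
    have hkab : key2 r F a ≤ key2 r F b := by
      have := hab.1
      rw [keyW, keyW, Prod.Lex.toLex_le_toLex] at this
      rcases this with h | h
      · rw [ha.2.2, hb.2.2] at h; omega
      · exact h.2
    rcases lt_or_eq_of_le hkab with h | h
    · exact h
    · exact absurd (key2_inj_letters hF ha.2.1 hb.2.1 h) hab.2
  · exact (sList_pairwise hF).sublist (List.filter_sublist)

lemma phiU_multiset (hF : IsCPPInf r P F) :
    ((phiU r P F) : Multiset (ℕ × ℕ)) =
      ∑ i ∈ Finset.range r, ((blockWord r (phiW r P F) i) : Multiset (ℕ × ℕ)) := by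
  classical
  have hterm : ∀ i ∈ Finset.range r, ((blockWord r (phiW r P F) i) : Multiset (ℕ × ℕ))
      = Multiset.map (shiftF r F) (((sList r P F).filter fun a => decide ((F a).1 = i)) :
          Multiset {x // x ∈ P.elems}) := by
    intro i _
    rw [blockWord_phiW hF, wfilter_eq_sfilter hF, Multiset.map_coe]
  rw [Finset.sum_congr rfl hterm, ← multiset_map_sum]
  have hsum : (∑ i ∈ Finset.range r, (((sList r P F).filter fun a => decide ((F a).1 = i)) :
      Multiset {x // x ∈ P.elems})) = ((sList r P F) : Multiset _) :=
    multiset_sum_filter (fun x _ => hF.1 x)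
  rw [hsum, phiU, Multiset.map_coe]

lemma phiU_isColoredLinExt (hF : IsCPPInf r P F) :
    IsColoredLinExt r (phiW r P F) (phiU r P F) := by
  refine ⟨phiU_multiset hF, ?_⟩
  intro i _
  rw [blockWord_phiW hF, wfilter_eq_sfilter hF, phiU]
  exact (List.filter_sublist).map _

lemma phiU_get (p : Fin (phiU r P F).length) :
    (phiU r P F).get p = shiftF r F ((sList r P F).get (Fin.cast (phiU_length r P F) p)) := by
  exact List.getElem_map _

lemma sList_rel_of_lt {p q : Fin (phiU r P F).length} (hpq : p < q) :
    key2 r F ((sList r P F).get (Fin.cast (phiU_length r P F) p)) ≤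
      key2 r F ((sList r P F).get (Fin.cast (phiU_length r P F) q)) :=
  List.Pairwise.rel_get_of_lt (sList_sorted r P F)
    (by rw [Fin.lt_def, Fin.coe_cast, Fin.coe_cast]; exact hpq)

lemma phiG_isWordCPPInf (hr : 1 ≤ r) (hF : IsCPPInf r P F) :
    IsWordCPPInf r (phiU r P F) (phiG r P F) := by
  refine ⟨?_, ?_, ?_, ?_, ?_, ?_⟩
  · intro _; exact hr
  · intro p q hpq
    right
    refine ⟨rfl, ?_⟩
    have := sList_rel_of_lt hpq
    rw [key2, key2, Prod.Lex.toLex_le_toLex] at this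
    rcases this with h | h
    · exact le_of_lt h
    · exact le_of_eq h.1
  · intro p q hpq _ hlt
    have hrel := sList_rel_of_lt hpq
    set a := (sList r P F).get (Fin.cast (phiU_length r P F) p) with hadef
    set b := (sList r P F).get (Fin.cast (phiU_length r P F) q) with hbdef
    have hlt' : letterLT (shiftF r F b) (shiftF r F a) := by
      have hca : (shiftF r F a).2 < r := shiftLetter_snd_lt r _ hr _
      have hcb : (shiftF r F b).2 < r := shiftLetter_snd_lt r _ hr _
      rw [show (phiG r P F p).1 = 0 from rfl] at hlt
      rw [phiU_get, phiU_get, ← hadef, ← hbdef, shiftLetter_zero hr hca,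
        shiftLetter_zero hr hcb] at hlt
      exact hlt
    rw [key2, key2, Prod.Lex.toLex_le_toLex] at hrel
    rcases hrel with h | h
    · right; exact ⟨rfl, h⟩
    · exfalso
      have h2 := h.2
      rw [← letterKey_lt_iff] at hlt'
      rw [shiftF, shiftF] at hlt'
      exact absurd (lt_of_le_of_lt h2 hlt') (lt_irrefl _)
  · intro p m h1 _; left; exact h1
  · intro p m h1 _ hcol
    exfalso
    have : (0 : ℕ) = m := hcol
    omega
  · intro p htop
    have h6 := hF.2.2.2.2 ((sList r P F).get (Fin.cast (phiU_length r P F) p)) htop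
    rw [phiU_get]
    show (shiftF r F _).2 = (0 : ℕ)
    rw [shiftF]
    exact shiftLetter_self (hF.1 _) h6
end PhiDef2
section Assemble

/-- The sigma type on the right-hand side. -/
def SigT (r : ℕ) (P : ColoredPoset r) :=
  (w : {w : List (ℕ × ℕ) // IsLinExt P w}) ×
    (u : {u : List (ℕ × ℕ) // IsColoredLinExt r w.1 u}) ×
      {f : Fin u.1.length → ℕ × ℕ∞ // IsWordCPPInf r u.1 f}

variable {r : ℕ} {P : ColoredPoset r}

noncomputable def PhiMap (hr : 1 ≤ r) (Fp : {f : {x // x ∈ P.elems} → ℕ × ℕ∞ // IsCPPInf r P f}) :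
    SigT r P :=
  ⟨⟨phiW r P Fp.1, phiW_isLinExt Fp.2⟩, ⟨phiU r P Fp.1, phiU_isColoredLinExt Fp.2⟩,
    ⟨phiG r P Fp.1, phiG_isWordCPPInf hr Fp.2⟩⟩

/-- word component -/
def WOf (t : SigT r P) : List (ℕ × ℕ) := t.1.1

/-- combined (letter, value) data of the pair (u, g), positionally -/
def PairsOf (t : SigT r P) : List ((ℕ × ℕ) × ℕ∞) :=
  List.ofFn fun p => (t.2.1.1.get p, (t.2.2.1 p).2)

lemma indexOf_get_self {α : Type*} [BEq α] [LawfulBEq α] {l : List α} (hl : l.Nodup)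
    (p : Fin l.length) : l.idxOf (l.get p) = (p : ℕ) := by
  have h1 : l.get ⟨l.idxOf (l.get p), idxOf_lt_length.2 (List.get_mem _ _)⟩
      = l.get p := idxOf_get _
  exact congrArg Fin.val ((List.Nodup.get_inj_iff hl).1 h1)

lemma PhiMap_injective (hr : 1 ≤ r) :
    Function.Injective (PhiMap (P := P) hr) := by
  classical
  rintro ⟨F, hF⟩ ⟨F', hF'⟩ h
  have hW : phiW r P F = phiW r P F' := congrArg WOf h
  have hPairs : (List.ofFn fun p => ((phiU r P F).get p, (phiG r P F p).2)) =
      (List.ofFn fun p => ((phiU r P F').get p, (phiG r P F' p).2)) := congrArg PairsOf h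
  have hulen : (phiU r P F).length = (phiU r P F').length := by
    have := congrArg List.length hPairs
    simpa using this
  have hslen : (sList r P F).length = (sList r P F').length := by
    rw [← phiU_length, ← phiU_length]; exact hulen
  have hpair_get : ∀ (n : ℕ) (h1 : n < (phiU r P F).length) (h2 : n < (phiU r P F').length),
      ((phiU r P F).get ⟨n, h1⟩, (phiG r P F ⟨n, h1⟩).2) =
        ((phiU r P F').get ⟨n, h2⟩, (phiG r P F' ⟨n, h2⟩).2) := by
    intro n h1 h2
    have e1 : (List.ofFn fun p => ((phiU r P F).get p, (phiG r P F p).2)).get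
        ⟨n, by simpa using h1⟩ = ((phiU r P F).get ⟨n, h1⟩, (phiG r P F ⟨n, h1⟩).2) :=
      List.get_ofFn _ _
    have e2 : (List.ofFn fun p => ((phiU r P F').get p, (phiG r P F' p).2)).get
        ⟨n, by simpa using h2⟩ = ((phiU r P F').get ⟨n, h2⟩, (phiG r P F' ⟨n, h2⟩).2) :=
      List.get_ofFn _ _
    have e3 := List.get_of_eq hPairs (⟨n, by simpa using h1⟩ :
      Fin (List.ofFn fun p => ((phiU r P F).get p, (phiG r P F p).2)).length)
    rw [e1] at e3
    exact e3.trans e2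
  have hsget : ∀ (n : ℕ) (h1 : n < (sList r P F).length) (h2 : n < (sList r P F').length),
      (sList r P F).get ⟨n, h1⟩ = (sList r P F').get ⟨n, h2⟩ := by
    intro n h1 h2
    have hu1 : n < (phiU r P F).length := by rw [phiU_length]; exact h1
    have hu2 : n < (phiU r P F').length := by rw [phiU_length]; exact h2
    have := congrArg Prod.fst (hpair_get n hu1 hu2)
    rw [phiU_get, phiU_get] at this
    simp only at this
    set a := (sList r P F).get (Fin.cast (phiU_length r P F) ⟨n, hu1⟩) with hadef
    set b := (sList r P F').get (Fin.cast (phiU_length r P F') ⟨n, hu2⟩) with hbdef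
    have hval : a.1.1 = b.1.1 := by
      have := congrArg Prod.fst this
      simpa [shiftF, shiftLetter_fst] using this
    have ha : 1 ≤ a.1.1 := (mem_sList r P F a).1 (by rw [hadef]; exact List.get_mem _ _)
    have hab : a = b := Subtype.ext (P.val_inj a.1 a.2 b.1 b.2 ha hval)
    rw [hadef, hbdef] at hab
    exact hab
  have hsL : sList r P F = sList r P F' := List.ext_get hslen hsget
  apply Subtype.ext
  funext x
  show F x = F' x
  by_cases hx : x.1.1 = 0
  · rw [(F_zero hF hx).1, (F_zero hF' hx).1]
  · have hx1 : 1 ≤ x.1.1 := by omega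
    have hfst : (F x).1 = (F' x).1 := by
      rw [← phi_zb hF hx1, ← phi_zb hF' hx1, hW]
    have hxs : x ∈ sList r P F := (mem_sList r P F x).2 hx1
    set n := (sList r P F).idxOf x with hndef
    have hn1 : n < (sList r P F).length := idxOf_lt_length.2 hxs
    have hn2 : n < (sList r P F').length := by omega
    have hu1 : n < (phiU r P F).length := by rw [phiU_length]; exact hn1
    have hu2 : n < (phiU r P F').length := by rw [phiU_length]; exact hn2
    have hget1 : (sList r P F).get ⟨n, hn1⟩ = x := idxOf_get _
    have hget2 : (sList r P F').get ⟨n, hn2⟩ = x := by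
      rw [← hsget n hn1 hn2]; exact hget1
    have hsnd := congrArg Prod.snd (hpair_get n hu1 hu2)
    simp only [phiG] at hsnd
    have e1 : (sList r P F).get (Fin.cast (phiU_length r P F) ⟨n, hu1⟩) = x := hget1
    have e2 : (sList r P F').get (Fin.cast (phiU_length r P F') ⟨n, hu2⟩) = x := hget2
    rw [e1, e2] at hsnd
    exact Prod.ext hfst hsnd

end Assemble
section PsiInj

variable {r : ℕ} {P : ColoredPoset r}

noncomputable def PsiMap (hr : 1 ≤ r) (t : SigT r P) :
    {f : {x // x ∈ P.elems} → ℕ × ℕ∞ // IsCPPInf r P f} :=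
  ⟨psiF hr t.1.2 t.2.1.2 t.2.2.1, psiF_isCPPInf hr t.1.2 t.2.1.2 t.2.2.2⟩

/-- target finset of (value, letter)-keys, determined by `F` alone -/
noncomputable def psiS (r : ℕ) (P : ColoredPoset r)
    (F : {x // x ∈ P.elems} → ℕ × ℕ∞) : Finset (ℕ∞ ×ₗ (ℕ ×ₗ ℕ)) :=
  (P.elems.attach.filter fun x => 1 ≤ x.1.1).image
    (fun x => toLex ((F x).2, letterKey (shiftLetter r (F x).1 x.1)))

lemma card_letters_attach :
    (P.elems.attach.filter fun x => 1 ≤ x.1.1).card =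
      (P.elems.filter fun z => 1 ≤ z.1).card := by
  classical
  have himg : (P.elems.attach.filter fun x => 1 ≤ x.1.1).image Subtype.val =
      P.elems.filter fun z => 1 ≤ z.1 := by
    ext z
    simp only [Finset.mem_image, Finset.mem_filter, Finset.mem_attach, true_and]
    constructor
    · rintro ⟨a, ha, rfl⟩; exact ⟨a.2, ha⟩
    · rintro ⟨hz, h1⟩; exact ⟨⟨z, hz⟩, h1, rfl⟩
  rw [← himg, Finset.card_image_of_injective _ Subtype.val_injective]

lemma psiS_card (F : {x // x ∈ P.elems} → ℕ × ℕ∞) :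
    (psiS r P F).card = (P.elems.attach.filter fun x => 1 ≤ x.1.1).card := by
  classical
  apply Finset.card_image_of_injOn
  intro a ha b hb hab
  simp only [Finset.mem_coe, Finset.mem_filter] at ha hb
  rw [toLex_inj, Prod.ext_iff] at hab
  have h2 := letterKey_inj hab.2
  have hval : a.1.1 = b.1.1 := by
    have := congrArg Prod.fst h2
    simpa [shiftLetter_fst] using this
  exact Subtype.ext (P.val_inj a.1 a.2 b.1 b.2 ha.2 hval)

lemma u_length_card (hr : 1 ≤ r) {w u : List (ℕ × ℕ)} (hw : IsLinExt P w)
    (hu : IsColoredLinExt r w u) :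
    u.length = (P.elems.attach.filter fun x => 1 ≤ x.1.1).card := by
  classical
  rw [u_length_eq hr hw hu, card_letters_attach]
  have hnd : (w.filter fun x => decide (1 ≤ x.1)).Nodup := hw.1.sublist (List.filter_sublist)
  rw [← List.toFinset_card_of_nodup hnd]
  congr 1
  ext z
  simp only [List.mem_toFinset, List.mem_filter, Finset.mem_filter, decide_eq_true_eq]
  rw [hw.2.1 z]

lemma psi_pairs_mem (hr : 1 ≤ r) {w u : List (ℕ × ℕ)} (hw : IsLinExt P w)
    (hu : IsColoredLinExt r w u) (g : Fin u.length → ℕ × ℕ∞) (p : Fin u.length) :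
    toLex ((g p).2, letterKey (u.get p)) ∈ psiS r P (psiF hr hw hu g) := by
  classical
  have hup : u.get p ∈ u := List.get_mem _ _
  obtain ⟨i, hi, hbw⟩ := (mem_u_iff hu).1 hup
  rw [blockWord, List.mem_map] at hbw
  obtain ⟨x, hbx, hshift⟩ := hbw
  rw [mem_block] at hbx
  obtain ⟨hxw, hx1, hzb⟩ := hbx
  have hxE : x ∈ P.elems := (hw.2.1 x).1 hxw
  set xh : {x // x ∈ P.elems} := ⟨x, hxE⟩ with hxh
  have hxne : ¬ xh.1.1 = 0 := by simp [hxh]; omega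
  have hposlt : u.idxOf (shiftLetter r (zerosBefore w xh.1) xh.1) < u.length :=
    idxOf_lt_length.2 (shift_mem_u hr hw hu hxw hx1)
  have hFx := psiF_letter hr hw hu g hxne hposlt
  have hidxp : u.idxOf (shiftLetter r (zerosBefore w xh.1) xh.1) = (p : ℕ) := by
    have : shiftLetter r (zerosBefore w xh.1) xh.1 = u.get p := by
      show shiftLetter r (zerosBefore w x) x = u.get p
      rw [hzb, hshift]
    rw [this]
    exact indexOf_get_self (u_nodup hr hw hu) p
  rw [psiS, Finset.mem_image]
  refine ⟨xh, Finset.mem_filter.2 ⟨Finset.mem_attach _ _, by show 1 ≤ x.1; omega⟩, ?_⟩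
  have hF1 : ((psiF hr hw hu g) xh).1 = zerosBefore w x := by rw [hFx]
  have hpe : (⟨u.idxOf (shiftLetter r (zerosBefore w ↑xh) ↑xh), hposlt⟩ : Fin u.length) = p :=
    Fin.ext hidxp
  have hF2 : ((psiF hr hw hu g) xh).2 = (g p).2 := by
    rw [hFx]
    show (g ⟨u.idxOf (shiftLetter r (zerosBefore w ↑xh) ↑xh), hposlt⟩).2 = (g p).2
    rw [hpe]
  show toLex (((psiF hr hw hu g) xh).2,
      letterKey (shiftLetter r ((psiF hr hw hu g) xh).1 ↑xh)) =
    toLex ((g p).2, letterKey (u.get p))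
  rw [hF1, hF2]
  have hlets : shiftLetter r (zerosBefore w x) (xh : ℕ × ℕ) = u.get p := by
    show shiftLetter r (zerosBefore w x) x = u.get p
    rw [hzb, hshift]
  rw [hlets]

lemma psi_pairs_strictMono (hr : 1 ≤ r) {w u : List (ℕ × ℕ)} (hw : IsLinExt P w)
    (hu : IsColoredLinExt r w u) {g : Fin u.length → ℕ × ℕ∞} (hg : IsWordCPPInf r u g) :
    StrictMono (fun p : Fin u.length => toLex ((g p).2, letterKey (u.get p))) := by
  intro p q hpq
  rcases g_strict_pairs hr hw hu hg hpq with h | ⟨h1, h2⟩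
  · rw [Prod.Lex.toLex_lt_toLex]; left; exact h
  · rw [Prod.Lex.toLex_lt_toLex]; right; exact ⟨h1, letterKey_lt_iff.2 h2⟩

/-- characterization of the order in `w` by block data -/
lemma idx_lt_char (hr : 1 ≤ r) {w u : List (ℕ × ℕ)} (hw : IsLinExt P w)
    (hu : IsColoredLinExt r w u) {x y : ℕ × ℕ} (hx : x ∈ w) (hy : y ∈ w) (hne : x ≠ y) :
    (w.idxOf x < w.idxOf y ↔
      (x.1 = 0 ∧ y.1 = 0 ∧ x.2 < y.2)
      ∨ (x.1 = 0 ∧ 1 ≤ y.1 ∧ x.2 ≤ zerosBefore w y)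
      ∨ (1 ≤ x.1 ∧ y.1 = 0 ∧ zerosBefore w x < y.2)
      ∨ (1 ≤ x.1 ∧ 1 ≤ y.1 ∧ zerosBefore w x < zerosBefore w y)
      ∨ (1 ≤ x.1 ∧ 1 ≤ y.1 ∧ zerosBefore w x = zerosBefore w y ∧
          u.idxOf (shiftLetter r (zerosBefore w x) x) <
            u.idxOf (shiftLetter r (zerosBefore w x) y))) := by
  classical
  have hidxne : w.idxOf x ≠ w.idxOf y := by
    intro hc
    apply hne
    have h1 : w.get ⟨w.idxOf x, idxOf_lt_length.2 hx⟩ = x := idxOf_get _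
    have h2 : w.get ⟨w.idxOf y, idxOf_lt_length.2 hy⟩ = y := idxOf_get _
    rw [← h1, ← h2]
    congr 1
    exact Fin.ext hc
  have hxstruct : x.1 = 0 → x = ((0:ℕ), x.2) ∧ 1 ≤ x.2 ∧ x.2 < r := by
    intro h
    have hx0 : x = ((0:ℕ), x.2) := by ext; exact h; rfl
    refine ⟨hx0, ?_⟩
    rw [hx0] at hx
    exact (zero_mem_w hw).1 hx
  have hystruct : y.1 = 0 → y = ((0:ℕ), y.2) ∧ 1 ≤ y.2 ∧ y.2 < r := by
    intro h
    have hy0 : y = ((0:ℕ), y.2) := by ext; exact h; rfl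
    refine ⟨hy0, ?_⟩
    rw [hy0] at hy
    exact (zero_mem_w hw).1 hy
  constructor
  · intro hlt
    by_cases hx0 : x.1 = 0 <;> by_cases hy0 : y.1 = 0
    · obtain ⟨hxe, hx1, hx2⟩ := hxstruct hx0
      obtain ⟨hye, hy1, hy2⟩ := hystruct hy0
      left
      refine ⟨hx0, hy0, ?_⟩
      have := (zero_idx_lt_iff hw hx1 hx2 hy1 hy2).1 (by rw [← hxe, ← hye]; exact hlt)
      exact this
    · obtain ⟨hxe, hx1, hx2⟩ := hxstruct hx0
      right; left
      refine ⟨hx0, by omega, ?_⟩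
      apply (zb_le_iff hw hy hx1 hx2).1
      rw [← hxe]; exact hlt
    · obtain ⟨hye, hy1, hy2⟩ := hystruct hy0
      right; right; left
      refine ⟨by omega, hy0, ?_⟩
      by_contra hge
      have := (zb_le_iff hw hx hy1 hy2).2 (by omega)
      rw [← hye] at this
      omega
    · have hmono := zb_mono hw hx hy hlt
      rcases eq_or_lt_of_le hmono with heq | h
      · right; right; right; right
        exact ⟨by omega, by omega, heq,
          pos_order hr hw hu hx hy (by omega) (by omega) rfl heq.symm hlt⟩
      · right; right; right; left
        exact ⟨by omega, by omega, h⟩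
  · rintro (⟨hx0, hy0, hlt⟩ | ⟨hx0, hy1, hle⟩ | ⟨hx1, hy0, hlt⟩ | ⟨hx1, hy1, hlt⟩ |
      ⟨hx1, hy1, heq, hlt⟩)
    · obtain ⟨hxe, ha1, ha2⟩ := hxstruct hx0
      obtain ⟨hye, hb1, hb2⟩ := hystruct hy0
      rw [hxe, hye]
      exact (zero_idx_lt_iff hw ha1 ha2 hb1 hb2).2 hlt
    · obtain ⟨hxe, ha1, ha2⟩ := hxstruct hx0
      rw [hxe]
      exact (zb_le_iff hw hy ha1 ha2).2 hle
    · obtain ⟨hye, hb1, hb2⟩ := hystruct hy0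
      rcases lt_or_ge (w.idxOf x) (w.idxOf y) with h | h
      · exact h
      exfalso
      have h2 : w.idxOf y < w.idxOf x := by omega
      have := (zb_le_iff hw hx hb1 hb2).1 (by rw [← hye]; exact h2)
      omega
    · rcases lt_or_ge (w.idxOf x) (w.idxOf y) with h | h
      · exact h
      exfalso
      have h2 : w.idxOf y < w.idxOf x := by omega
      have := zb_mono hw hy hx h2
      omega
    · rcases lt_or_ge (w.idxOf x) (w.idxOf y) with h | h
      · exact h
      exfalso
      have h2 : w.idxOf y < w.idxOf x := by omega
      have := pos_order hr hw hu hy hx hy1 hx1 heq.symm rfl h2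
      omega

lemma PsiMap_injective (hr : 1 ≤ r) :
    Function.Injective (PsiMap (P := P) hr) := by
  classical
  rintro ⟨⟨w, hw⟩, ⟨u, hu⟩, ⟨g, hg⟩⟩ ⟨⟨w', hw'⟩, ⟨u', hu'⟩, ⟨g', hg'⟩⟩ h
  have hFF : psiF hr hw hu g = psiF hr hw' hu' g' := congrArg Subtype.val h
  set F := psiF hr hw hu g with hFdef
  -- zerosBefore agreement on letters
  have hzb : ∀ x : {x // x ∈ P.elems}, ¬ x.1.1 = 0 →
      zerosBefore w x.1 = zerosBefore w' x.1 := by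
    intro x hx
    have hposlt : u.idxOf (shiftLetter r (zerosBefore w x.1) x.1) < u.length :=
      idxOf_lt_length.2 (shift_mem_u hr hw hu ((hw.2.1 _).2 x.2) (by omega))
    have hposlt' : u'.idxOf (shiftLetter r (zerosBefore w' x.1) x.1) < u'.length :=
      idxOf_lt_length.2 (shift_mem_u hr hw' hu' ((hw'.2.1 _).2 x.2) (by omega))
    have h1 := psiF_letter hr hw hu g hx hposlt
    have h2 := psiF_letter hr hw' hu' g' hx hposlt'
    have hthis := congrArg (fun f => (f x).1) hFF
    rw [hFdef] at hthis
    rw [h1, h2] at hthis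
    exact hthis
  -- lengths
  have hc1 : (psiS r P F).card = u.length := by
    rw [psiS_card, u_length_card hr hw hu]
  have hc2 : (psiS r P F).card = u'.length := by
    rw [psiS_card, u_length_card hr hw' hu']
  have hlen : u.length = u'.length := by omega
  -- order embeddings agree
  set φ : Fin u.length → ℕ∞ ×ₗ (ℕ ×ₗ ℕ) :=
    fun p => toLex ((g p).2, letterKey (u.get p)) with hφdef
  set ψ : Fin u.length → ℕ∞ ×ₗ (ℕ ×ₗ ℕ) :=
    fun p => toLex ((g' (Fin.cast hlen p)).2, letterKey (u'.get (Fin.cast hlen p))) with hψdef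
  have hφeq : φ = ⇑(Finset.orderEmbOfFin _ hc1) :=
    Finset.orderEmbOfFin_unique hc1 (fun p => psi_pairs_mem hr hw hu g p)
      (psi_pairs_strictMono hr hw hu hg)
  have hψeq : ψ = ⇑(Finset.orderEmbOfFin _ hc1) := by
    apply Finset.orderEmbOfFin_unique hc1
    · intro p
      have := psi_pairs_mem hr hw' hu' g' (Fin.cast hlen p)
      rw [← hFF] at this
      exact this
    · intro p q hpq
      exact psi_pairs_strictMono hr hw' hu' hg'
        (by rw [Fin.lt_def, Fin.coe_cast, Fin.coe_cast]; exact hpq)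
  have hφψ : ∀ p, φ p = ψ p := by rw [hφeq, hψeq]; intro p; rfl
  -- u = u'
  have huu : u = u' := by
    apply List.ext_get hlen
    intro n h1 h2
    have := hφψ ⟨n, h1⟩
    rw [hφdef, hψdef] at this
    simp only at this
    rw [toLex_inj, Prod.ext_iff] at this
    exact letterKey_inj this.2
  subst huu
  -- g = g'
  have hgg : g = g' := by
    funext p
    have := hφψ p
    rw [hφdef, hψdef] at this
    simp only at this
    rw [toLex_inj, Prod.ext_iff] at this
    have h2 : (g p).2 = (g' (Fin.cast hlen p)).2 := this.1
    have hcast : Fin.cast hlen p = p := rfl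
    rw [hcast] at h2
    apply Prod.ext
    · rw [g_fst_zero hr hw hu hg p, g_fst_zero hr hw' hu' hg' p]
    · exact h2
  subst hgg
  -- w = w'
  have hww : w = w' := by
    apply eq_of_same_order hw.1 hw'.1
    · intro z
      rw [hw.2.1 z, hw'.2.1 z]
    · intro x hxw y hyw
      by_cases hne : x = y
      · subst hne; omega
      have hxw' : x ∈ w' := (hw'.2.1 x).2 ((hw.2.1 x).1 hxw)
      have hyw' : y ∈ w' := (hw'.2.1 y).2 ((hw.2.1 y).1 hyw)
      rw [idx_lt_char hr hw hu hxw hyw hne, idx_lt_char hr hw' hu' hxw' hyw' hne]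
      have hzbx : ¬ x.1 = 0 → zerosBefore w x = zerosBefore w' x := fun hx1 =>
        hzb ⟨x, (hw.2.1 x).1 hxw⟩ hx1
      have hzby : ¬ y.1 = 0 → zerosBefore w y = zerosBefore w' y := fun hy1 =>
        hzb ⟨y, (hw.2.1 y).1 hyw⟩ hy1
      by_cases hx0 : x.1 = 0 <;> by_cases hy0 : y.1 = 0
      · constructor
        · rintro (h | h | h | h | h)
          · left; exact h
          · exfalso; omega
          · exfalso; omega
          · exfalso; omega
          · exfalso; omega
        · rintro (h | h | h | h | h)
          · left; exact h
          · exfalso; omega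
          · exfalso; omega
          · exfalso; omega
          · exfalso; omega
      · rw [hzby (by omega)]
        constructor
        · rintro (h | h | h | h | h)
          · exfalso; omega
          · right; left; exact h
          · exfalso; omega
          · exfalso; omega
          · exfalso; omega
        · rintro (h | h | h | h | h)
          · exfalso; omega
          · right; left; exact h
          · exfalso; omega
          · exfalso; omega
          · exfalso; omega
      · rw [hzbx (by omega)]
        constructor
        · rintro (h | h | h | h | h)
          · exfalso; omega
          · exfalso; omega
          · right; right; left; exact h
          · exfalso; omega
          · exfalso; omega
        · rintro (h | h | h | h | h)
          · exfalso; omega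
          · exfalso; omega
          · right; right; left; exact h
          · exfalso; omega
          · exfalso; omega
      · rw [hzbx (by omega), hzby (by omega)]
  subst hww
  obtain rfl : hw = hw' := rfl
  obtain rfl : hu = hu' := rfl
  obtain rfl : hg = hg' := rfl
  rfl

end PsiInj
/-- Fundamental Theorem of Colored `P`-partitions: there is a bijection between
`A(P)` and the disjoint union, over all linear extensions `w ∈ L(P)` and all
colored words `π ∈ CL(w)`, of the sets `A(π)`. -/
theorem fundamental_theorem_colored_P_partitions (r n : ℕ) (hr : 1 ≤ r) (hn : 1 ≤ n)
    (P : ColoredPoset r) :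
    Nonempty
      ({f : {x // x ∈ P.elems} → ℕ × ℕ∞ // IsCPPInf r P f} ≃
        (w : {w : List (ℕ × ℕ) // IsLinExt P w}) ×
          (u : {u : List (ℕ × ℕ) // IsColoredLinExt r w.1 u}) ×
            {f : Fin u.1.length → ℕ × ℕ∞ // IsWordCPPInf r u.1 f}) := by
  classical
  obtain ⟨h, hb⟩ := Function.Embedding.schroeder_bernstein
    (PhiMap_injective (P := P) hr) (PsiMap_injective (P := P) hr)
  exact ⟨Equiv.ofBijective h hb⟩
end

section
/- For every r-colored poset P and every integer j ≥ 0, the order polynomial satisfies Ω_P(j) = Σ_{w ∈ L(P)} Σ_{π ∈ CL(w)} Ω_π(j). -/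
open scoped BigOperators

set_option linter.unusedSectionVars false
set_option linter.unusedVariables false
open List

namespace CPPAux

variable {α : Type*} [DecidableEq α]

theorem take_idxOf_eq_filter : ∀ (w : List α), w.Nodup → ∀ {x : α}, x ∈ w →
    w.take (w.idxOf x) = w.filter (fun z => decide (w.idxOf z < w.idxOf x))
  | [], _, x, hx => by simp at hx
  | a :: t, hw, x, hx => by
    rcases eq_or_ne x a with rfl | hxa
    · simp [List.idxOf_cons_self]
    · have hxt : x ∈ t := by
        rcases List.mem_cons.1 hx with h | h
        · exact absurd h hxa
        · exact h
      have hat : a ∉ t := (List.nodup_cons.1 hw).1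
      have hidx : (a :: t).idxOf x = (t.idxOf x) + 1 :=
        List.idxOf_cons_ne _ (Ne.symm hxa)
      rw [hidx]
      have h0 : (a :: t).idxOf a = 0 := List.idxOf_cons_self
      have htail : ∀ z ∈ t, (a :: t).idxOf z = t.idxOf z + 1 := fun z hz =>
        List.idxOf_cons_ne _ (fun h => hat (by rw [h]; exact hz))
      have hfil : List.filter (fun z => decide ((a :: t).idxOf z < t.idxOf x + 1)) (a :: t)
          = a :: List.filter (fun z => decide (t.idxOf z < t.idxOf x)) t := by
        rw [List.filter_cons, if_pos (by simp only [h0, decide_eq_true_eq]; omega)]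
        congr 1
        apply List.filter_congr
        intro z hz
        rw [htail z hz]
        simp only [decide_eq_decide]
        omega
      rw [hfil, List.take_succ_cons,
        take_idxOf_eq_filter t (List.nodup_cons.1 hw).2 hxt]

theorem sublist_idxOf_lt_iff {l' w : List α} (h : l' <+ w) (hw : w.Nodup) {a b : α}
    (ha : a ∈ l') (hb : b ∈ l') :
    l'.idxOf a < l'.idxOf b ↔ w.idxOf a < w.idxOf b := by
  induction h with
  | slnil => simp at ha
  | cons c h ih =>
    rename_i l₁ l₂
    have hc : c ∉ l₂ := (List.nodup_cons.1 hw).1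
    have ha2 : a ∈ l₂ := h.subset ha
    have hb2 : b ∈ l₂ := h.subset hb
    have e1 : (c :: l₂).idxOf a = (l₂.idxOf a).succ :=
      List.idxOf_cons_ne _ (fun hh => hc (by rw [hh]; exact ha2))
    have e2 : (c :: l₂).idxOf b = (l₂.idxOf b).succ :=
      List.idxOf_cons_ne _ (fun hh => hc (by rw [hh]; exact hb2))
    rw [e1, e2, Nat.succ_lt_succ_iff]
    exact ih (List.nodup_cons.1 hw).2 ha hb
  | cons_cons c h ih =>
    rename_i l₁ l₂
    have hc : c ∉ l₂ := (List.nodup_cons.1 hw).1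
    have hc1 : c ∉ l₁ := fun hh => hc (h.subset hh)
    rcases eq_or_ne a c with rfl | hac
    · rcases eq_or_ne b a with rfl | hbc
      · simp
      · have hb1 : b ∈ l₁ := by
          rcases List.mem_cons.1 hb with hh | hh
          · exact absurd hh hbc
          · exact hh
        rw [List.idxOf_cons_self, List.idxOf_cons_self,
          List.idxOf_cons_ne _ (Ne.symm hbc), List.idxOf_cons_ne _ (Ne.symm hbc)]
        omega
    · have ha1 : a ∈ l₁ := by
        rcases List.mem_cons.1 ha with hh | hh
        · exact absurd hh hac
        · exact hh
      rcases eq_or_ne b c with rfl | hbc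
      · rw [List.idxOf_cons_self, List.idxOf_cons_self,
          List.idxOf_cons_ne _ (Ne.symm hac), List.idxOf_cons_ne _ (Ne.symm hac)]
        omega
      · have hb1 : b ∈ l₁ := by
          rcases List.mem_cons.1 hb with hh | hh
          · exact absurd hh hbc
          · exact hh
        rw [List.idxOf_cons_ne _ (Ne.symm hac), List.idxOf_cons_ne _ (Ne.symm hac),
          List.idxOf_cons_ne _ (Ne.symm hbc), List.idxOf_cons_ne _ (Ne.symm hbc),
          Nat.succ_lt_succ_iff, Nat.succ_lt_succ_iff]
        exact ih (List.nodup_cons.1 hw).2 ha1 hb1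

/-- a list pairwise-sorted by an asymmetric order, contained in another such list,
is a sublist of it -/
theorem sublist_of_sorted_subset {lt : α → α → Prop} (hasymm : ∀ a b, lt a b → ¬ lt b a) :
    ∀ (u l' : List α), l'.Pairwise lt → u.Pairwise lt → (∀ a ∈ l', a ∈ u) → l' <+ u
  | u, [], _, _, _ => List.nil_sublist u
  | [], b :: t', _, _, hsub => by simpa using hsub b (by simp)
  | a :: u', b :: t', hl', hu, hsub => by
    have hl'p := (List.pairwise_cons.1 hl')
    have hup := (List.pairwise_cons.1 hu)
    rcases eq_or_ne b a with rfl | hba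
    · refine List.Sublist.cons₂ b ?_
      apply sublist_of_sorted_subset hasymm u' t' hl'p.2 hup.2
      intro c hc
      have hmem := hsub c (List.mem_cons_of_mem _ hc)
      rcases List.mem_cons.1 hmem with hh | h
      · exfalso
        have hlt := hl'p.1 c hc
        rw [hh] at hlt
        exact hasymm _ _ hlt hlt
      · exact h
    · refine List.Sublist.cons a ?_
      apply sublist_of_sorted_subset hasymm u' (b :: t') hl' hup.2
      intro c hc
      have hcu := hsub c hc
      rcases List.mem_cons.1 hcu with hh | h
      · exfalso
        have hbu : b ∈ a :: u' := hsub b (by simp)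
        rcases List.mem_cons.1 hbu with hh2 | hbu'
        · exact hba hh2
        · rcases List.mem_cons.1 hc with hh3 | hct'
          · rw [hh3] at hh; exact hba hh
          · have h1 := hup.1 b hbu'
            have h2 := hl'p.1 c hct'
            rw [hh] at h2
            exact hasymm _ _ h1 h2
      · exact h

theorem sorted_idxOf_lt_iff {α β : Type*} [DecidableEq α] [LinearOrder β] {key : α → β}
    (hinj : Function.Injective key) {l : List α}
    (hs : l.Pairwise (fun a b => key a ≤ key b)) (hn : l.Nodup) {a b : α}
    (ha : a ∈ l) (hb : b ∈ l) :
    l.idxOf a < l.idxOf b ↔ key a < key b := by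
  have hia : l.idxOf a < l.length := List.idxOf_lt_length_iff.2 ha
  have hib : l.idxOf b < l.length := List.idxOf_lt_length_iff.2 hb
  constructor
  · intro h
    have hle : key (l.get ⟨l.idxOf a, hia⟩) ≤ key (l.get ⟨l.idxOf b, hib⟩) :=
      hs.rel_get_of_lt (by exact Fin.mk_lt_mk.2 h)
    rw [List.idxOf_get hia, List.idxOf_get hib] at hle
    rcases lt_or_eq_of_le hle with h1 | h1
    · exact h1
    · exfalso
      have hab := hinj h1
      rw [hab] at h
      exact lt_irrefl _ h
  · intro h
    by_contra hcon
    push_neg at hcon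
    rcases lt_or_eq_of_le hcon with h1 | h1
    · have hle : key (l.get ⟨l.idxOf b, hib⟩) ≤ key (l.get ⟨l.idxOf a, hia⟩) :=
        hs.rel_get_of_lt (by exact Fin.mk_lt_mk.2 h1)
      rw [List.idxOf_get hia, List.idxOf_get hib] at hle
      exact absurd h (not_lt.2 hle)
    · have := (List.idxOf_inj hb).1 h1
      rw [this] at h
      exact lt_irrefl _ h


end CPPAux
set_option linter.unusedSectionVars false

open List

namespace CPPAux

/-! ### Arithmetic helpers about `shiftLetter` -/

theorem shiftLetter_fst (r k : ℕ) (x : ℕ × ℕ) : (shiftLetter r k x).1 = x.1 := rfl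

theorem shiftLetter_self_color {r m : ℕ} (hm : m < r) : shiftLetter r m ((0:ℕ), m) = (0, 0) := by
  simp [shiftLetter, Nat.mod_eq_of_lt hm]

theorem shiftLetter_color_lt {r : ℕ} (hr : 1 ≤ r) (k : ℕ) (x : ℕ × ℕ) :
    (shiftLetter r k x).2 < r := by
  simp only [shiftLetter]
  exact Nat.mod_lt _ (by omega)

theorem shiftLetter_zero {r : ℕ} {x : ℕ × ℕ} (hx : x.2 < r) : shiftLetter r 0 x = x := by
  show (x.1, (x.2 + r - 0 % r) % r) = x
  rw [Nat.zero_mod, Nat.sub_zero, Nat.add_mod_right x.2 r, Nat.mod_eq_of_lt hx]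

theorem mod_inj_aux {r a b : ℕ} (ha1 : a < r + b) (hb1 : b < r + a)
    (h : a % r = b % r) : a = b := by
  rcases Nat.le_total a b with hab | hab
  · have hd : r ∣ b - a := (Nat.modEq_iff_dvd' hab).1 h
    have : b - a = 0 := Nat.eq_zero_of_dvd_of_lt hd (by omega)
    omega
  · have hd : r ∣ a - b := (Nat.modEq_iff_dvd' hab).1 h.symm
    have : a - b = 0 := Nat.eq_zero_of_dvd_of_lt hd (by omega)
    omega

theorem shiftLetter_inj {r k : ℕ} {x y : ℕ × ℕ} (hx : x.2 < r) (hy : y.2 < r)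
    (h : shiftLetter r k x = shiftLetter r k y) : x = y := by
  have hr : 0 < r := by omega
  have h1 := congrArg Prod.fst h
  have h2 := congrArg Prod.snd h
  simp only [shiftLetter] at h1 h2
  have hk : k % r < r := Nat.mod_lt _ hr
  have := mod_inj_aux (r := r) (a := x.2 + r - k % r) (b := y.2 + r - k % r)
    (by omega) (by omega) h2
  exact Prod.ext h1 (by omega)

theorem shiftLetter_color_eq_zero {r k : ℕ} {x : ℕ × ℕ} (hx : x.2 < r) (hk : k < r)
    (h : (shiftLetter r k x).2 = 0) : x.2 = k := by
  have hr : 0 < r := by omega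
  have h2 : (x.2 + r - k % r) % r = 0 := h
  rw [Nat.mod_eq_of_lt hk] at h2
  obtain ⟨c, hc⟩ := Nat.dvd_of_mod_eq_zero h2
  have hb : 1 ≤ x.2 + r - k := by omega
  have hb2 : x.2 + r - k < 2 * r := by omega
  rcases c with _ | _ | c
  · omega
  · omega
  · exfalso; nlinarith [hc]

theorem shiftLetter_color_eq_zero' {r k : ℕ} {x : ℕ × ℕ} (hx : x.2 < r) (hk : k < r)
    (h : x.2 = k) : (shiftLetter r k x).2 = 0 := by
  subst h
  simp only [shiftLetter, Nat.mod_eq_of_lt hk]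
  have : x.2 + r - x.2 = r := by omega
  rw [this, Nat.mod_self]

/-! ### Encodings of the letter and part orders into lexicographic products -/

abbrev KW : Type := (ℕ ×ₗ ℕ) ×ₗ ((ℕ ×ₗ ℕ) ×ₗ (ℕ ×ₗ ℕ))
abbrev KU : Type := ℕ ×ₗ (ℕ ×ₗ ℕ)

def encL (z : ℕ × ℕ) : ℕ ×ₗ ℕ := toLex (z.2, z.1)
def encP (p : ℕ × ℕ) : ℕ ×ₗ ℕ := toLex p

theorem encL_lt_iff {z z' : ℕ × ℕ} : encL z < encL z' ↔ letterLT z z' := by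
  simp only [encL, Prod.Lex.lt_iff, ofLex_toLex, letterLT]

theorem encL_le_iff {z z' : ℕ × ℕ} : encL z ≤ encL z' ↔ letterLT z z' ∨ z = z' := by
  rw [le_iff_lt_or_eq, encL_lt_iff]
  constructor
  · rintro (h | h)
    · exact Or.inl h
    · exact Or.inr (by
        have := toLex.injective h
        exact Prod.ext (congrArg Prod.snd this) (congrArg Prod.fst this))
  · rintro (h | rfl)
    · exact Or.inl h
    · exact Or.inr rfl

theorem encL_injective : Function.Injective encL := by
  intro z z' h
  have := toLex.injective h
  exact Prod.ext (congrArg Prod.snd this) (congrArg Prod.fst this)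

theorem encP_lt_iff {p q : ℕ × ℕ} : encP p < encP q ↔ partLT p q := by
  simp only [encP, Prod.Lex.lt_iff, ofLex_toLex, partLT]

theorem encP_le_iff {p q : ℕ × ℕ} : encP p ≤ encP q ↔ partLE p q := by
  simp only [encP, Prod.Lex.le_iff, ofLex_toLex, partLE]

theorem encP_injective : Function.Injective encP := fun _ _ h => toLex.injective h

theorem letterLT_total (z z' : ℕ × ℕ) (h : z ≠ z') : letterLT z z' ∨ letterLT z' z := by
  unfold letterLT
  rcases Nat.lt_trichotomy z.2 z'.2 with h1 | h1 | h1
  · exact Or.inl (Or.inl h1)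
  · rcases Nat.lt_trichotomy z.1 z'.1 with h2 | h2 | h2
    · exact Or.inl (Or.inr ⟨h1, h2⟩)
    · exact absurd (Prod.ext h2 h1) h
    · exact Or.inr (Or.inr ⟨h1.symm, h2⟩)
  · exact Or.inr (Or.inl h1)

theorem partLE_refl (p : ℕ × ℕ) : partLE p p := Or.inr ⟨rfl, le_rfl⟩

theorem partLE_of_eq_or_lt {p q : ℕ × ℕ} (h : partLT p q ∨ p = q) : partLE p q := by
  rcases h with h | rfl
  · rcases h with h | ⟨h1, h2⟩
    · exact Or.inl h
    · exact Or.inr ⟨h1, le_of_lt h2⟩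
  · exact partLE_refl p

theorem partLE.antisymm_eq {p q : ℕ × ℕ} (h1 : partLE p q) (h2 : partLE q p) : p = q := by
  apply encP_injective
  exact le_antisymm (encP_le_iff.2 h1) (encP_le_iff.2 h2)

end CPPAux
namespace CPPAux

/-! ### Bridging the two `BEq (ℕ × ℕ)` instances, and `idxOf` wrappers -/

theorem beq_bridge :
    (instBEqProd : BEq (ℕ × ℕ)) = @instBEqOfDecidableEq (ℕ × ℕ) instDecidableEqProd :=
  @lawful_beq_subsingleton (ℕ × ℕ) _ _ inferInstance (@instLawfulBEq (ℕ × ℕ) instDecidableEqProd)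

theorem idx_lt_length {u : List (ℕ × ℕ)} {z : ℕ × ℕ} (h : z ∈ u) :
    u.idxOf z < u.length := by
  exact List.idxOf_lt_length_iff.2 h

theorem mem_of_idx_lt_length {u : List (ℕ × ℕ)} {z : ℕ × ℕ} (h : u.idxOf z < u.length) :
    z ∈ u := by
  exact List.idxOf_lt_length_iff.1 h

theorem get_idx {u : List (ℕ × ℕ)} {z : ℕ × ℕ} (h : u.idxOf z < u.length) :
    u.get ⟨u.idxOf z, h⟩ = z := by
  revert h
  intro h
  exact List.idxOf_get h

theorem idx_inj {u : List (ℕ × ℕ)} {z z' : ℕ × ℕ} (hz : z ∈ u) (hz' : z' ∈ u) :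
    u.idxOf z = u.idxOf z' ↔ z = z' := by
  exact List.idxOf_inj hz

theorem idx_get_of_nodup {u : List (ℕ × ℕ)} (hu : u.Nodup) {i : ℕ} (h : i < u.length) :
    u.idxOf (u.get ⟨i, h⟩) = i := by
  have hlt : u.idxOf (u.get ⟨i, h⟩) < u.length :=
    List.idxOf_lt_length_iff.2 (u.get_mem _)
  have h2 := List.idxOf_get hlt
  have h3 := (List.Nodup.get_inj_iff hu).1 h2
  simpa using congrArg Fin.val h3

theorem take_idx_filter (w : List (ℕ × ℕ)) (hw : w.Nodup) {x : ℕ × ℕ} (hx : x ∈ w) :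
    w.take (w.idxOf x) = w.filter (fun z => decide (w.idxOf z < w.idxOf x)) := by
  rw [beq_bridge]; exact take_idxOf_eq_filter w hw hx

theorem sublist_idx_lt_iff {l' w : List (ℕ × ℕ)} (h : l' <+ w) (hw : w.Nodup) {a b : ℕ × ℕ}
    (ha : a ∈ l') (hb : b ∈ l') :
    l'.idxOf a < l'.idxOf b ↔ w.idxOf a < w.idxOf b := by
  rw [beq_bridge]; exact sublist_idxOf_lt_iff h hw ha hb

theorem sorted_idx_lt_iff {β : Type*} [LinearOrder β] {key : ℕ × ℕ → β}
    (hinj : Function.Injective key) {l : List (ℕ × ℕ)}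
    (hs : l.Pairwise (fun a b => key a ≤ key b)) (hn : l.Nodup) {a b : ℕ × ℕ}
    (ha : a ∈ l) (hb : b ∈ l) :
    l.idxOf a < l.idxOf b ↔ key a < key b := by
  rw [beq_bridge]; exact sorted_idxOf_lt_iff hinj hs hn ha hb

end CPPAux
namespace CPPAux

section Main

variable {r : ℕ} (P : ColoredPoset r)

/-- extend a function on the subtype of elements to all colored letters -/
def Fext (f : {x // x ∈ P.elems} → ℕ × ℕ) (x : ℕ × ℕ) : ℕ × ℕ :=
  if h : x ∈ P.elems then f ⟨x, h⟩ else (0, 0)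

theorem Fext_apply (f : {x // x ∈ P.elems} → ℕ × ℕ) {x : ℕ × ℕ} (h : x ∈ P.elems) :
    Fext P f x = f ⟨x, h⟩ := dif_pos h

/-- the letter recorded in a colored linear extension for the element `x`:
`x` shifted by the block (= first coordinate of the part) of `x` -/
def storeF (f : {x // x ∈ P.elems} → ℕ × ℕ) (x : ℕ × ℕ) : ℕ × ℕ :=
  shiftLetter r (Fext P f x).1 x

/-- sort key for the linear extension determined by `f` -/
def keyW (f : {x // x ∈ P.elems} → ℕ × ℕ) (x : ℕ × ℕ) : KW :=
  toLex (encP (Fext P f x), toLex (encL (storeF P f x), encL x))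

theorem keyW_injective (f : {x // x ∈ P.elems} → ℕ × ℕ) : Function.Injective (keyW P f) := by
  intro x y h
  have h2 := congrArg (fun p => (ofLex ((ofLex p).2)).2) h
  simp only [keyW] at h2
  exact encL_injective h2

def relW (f : {x // x ∈ P.elems} → ℕ × ℕ) : ℕ × ℕ → ℕ × ℕ → Prop :=
  fun x y => keyW P f x ≤ keyW P f y

instance (f : {x // x ∈ P.elems} → ℕ × ℕ) : DecidableRel (relW P f) :=
  fun a b => inferInstanceAs (Decidable (_ ≤ _))

instance (f : {x // x ∈ P.elems} → ℕ × ℕ) : IsTrans (ℕ × ℕ) (relW P f) :=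
  ⟨fun _ _ _ h1 h2 => le_trans h1 h2⟩

instance (f : {x // x ∈ P.elems} → ℕ × ℕ) : IsTotal (ℕ × ℕ) (relW P f) :=
  ⟨fun _ _ => le_total _ _⟩

instance (f : {x // x ∈ P.elems} → ℕ × ℕ) : IsAntisymm (ℕ × ℕ) (relW P f) :=
  ⟨fun _ _ h1 h2 => keyW_injective P f (le_antisymm h1 h2)⟩

/-- recover an element of the poset from its positive value -/
noncomputable def invStore (z : ℕ × ℕ) : ℕ × ℕ :=
  if h : ∃ x, x ∈ P.elems ∧ 1 ≤ x.1 ∧ x.1 = z.1 then h.choose else (0, 0)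

theorem invStore_eq {x z : ℕ × ℕ} (hx : x ∈ P.elems) (hx1 : 1 ≤ x.1) (hval : x.1 = z.1) :
    invStore P z = x := by
  have hex : ∃ y, y ∈ P.elems ∧ 1 ≤ y.1 ∧ y.1 = z.1 := ⟨x, hx, hx1, hval⟩
  rw [invStore, dif_pos hex]
  obtain ⟨h1, h2, h3⟩ := hex.choose_spec
  exact P.val_inj _ h1 _ hx h2 (h3.trans hval.symm)

/-- the value assigned by (the extension of) `f` to the element recorded by the letter `z` -/
noncomputable def vv (f : {x // x ∈ P.elems} → ℕ × ℕ) (z : ℕ × ℕ) : ℕ :=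
  (Fext P f (invStore P z)).2

/-- sort key for the colored linear extension determined by `f` -/
noncomputable def keyU (f : {x // x ∈ P.elems} → ℕ × ℕ) (z : ℕ × ℕ) : KU :=
  toLex (vv P f z, encL z)

theorem keyU_injective (f : {x // x ∈ P.elems} → ℕ × ℕ) : Function.Injective (keyU P f) := by
  intro x y h
  have h2 := congrArg (fun p => (ofLex p).2) h
  simp only [keyU] at h2
  exact encL_injective h2

noncomputable def relU (f : {x // x ∈ P.elems} → ℕ × ℕ) : ℕ × ℕ → ℕ × ℕ → Prop :=
  fun z z' => keyU P f z ≤ keyU P f z'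

noncomputable instance (f : {x // x ∈ P.elems} → ℕ × ℕ) : DecidableRel (relU P f) :=
  fun a b => inferInstanceAs (Decidable (_ ≤ _))

instance (f : {x // x ∈ P.elems} → ℕ × ℕ) : IsTrans (ℕ × ℕ) (relU P f) :=
  ⟨fun _ _ _ h1 h2 => le_trans h1 h2⟩

instance (f : {x // x ∈ P.elems} → ℕ × ℕ) : IsTotal (ℕ × ℕ) (relU P f) :=
  ⟨fun _ _ => le_total _ _⟩

instance (f : {x // x ∈ P.elems} → ℕ × ℕ) : IsAntisymm (ℕ × ℕ) (relU P f) :=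
  ⟨fun _ _ h1 h2 => keyU_injective P f (le_antisymm h1 h2)⟩

/-- the canonical linear extension associated with a colored `P`-partition -/
noncomputable def sortedW (f : {x // x ∈ P.elems} → ℕ × ℕ) : List (ℕ × ℕ) :=
  Finset.sort P.elems (relW P f)

/-- the set of letters of the colored linear extension associated with `f` -/
noncomputable def storedFinset (f : {x // x ∈ P.elems} → ℕ × ℕ) : Finset (ℕ × ℕ) :=
  (P.elems.filter fun x => 1 ≤ x.1).image (storeF P f)

/-- the canonical colored linear extension associated with `f` -/
noncomputable def sortedU (f : {x // x ∈ P.elems} → ℕ × ℕ) : List (ℕ × ℕ) :=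
  Finset.sort (storedFinset P f) (relU P f)

/-- the word partition associated with `f` -/
noncomputable def gFun (f : {x // x ∈ P.elems} → ℕ × ℕ) :
    Fin (sortedU P f).length → ℕ × ℕ :=
  fun i => (0, vv P f ((sortedU P f).get i))

/-- the inverse construction: a colored `P`-partition from a triple `(w, u, g)` -/
noncomputable def psi (w u : List (ℕ × ℕ)) (g : Fin u.length → ℕ × ℕ) :
    {x // x ∈ P.elems} → ℕ × ℕ := fun x =>
  if x.1.1 = 0 then (x.1.2, 0)
  else (zerosBefore w x.1,
    if h : shiftLetter r (zerosBefore w x.1) x.1 ∈ u then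
      (g ⟨u.idxOf (shiftLetter r (zerosBefore w x.1) x.1), idx_lt_length h⟩).2
    else 0)

end Main

end CPPAux
namespace CPPAux

theorem zerosBefore_mono (w : List (ℕ × ℕ)) {x y : ℕ × ℕ}
    (h : w.idxOf x ≤ w.idxOf y) : zerosBefore w x ≤ zerosBefore w y := by
  unfold zerosBefore
  have h1 : w.take (w.idxOf x) <+ w.take (w.idxOf y) := by
    have := List.take_take (i := w.idxOf x) (j := w.idxOf y) (l := w)
    rw [min_eq_left h] at this
    rw [← this]
    exact List.take_sublist _ _
  exact (h1.filter _).length_le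

section Statics

variable {r : ℕ} {P : ColoredPoset r} {w : List (ℕ × ℕ)}

theorem zeros_mem_w (hlin : IsLinExt P w) {m : ℕ} (h1 : 1 ≤ m) (h2 : m < r) :
    ((0 : ℕ), m) ∈ w := (hlin.2.1 _).2 (P.zero_mem m h1 h2)

theorem zero_form (hlin : IsLinExt P w) {z : ℕ × ℕ} (hz : z ∈ w) (h0 : z.1 = 0) :
    ∃ m, 1 ≤ m ∧ m < r ∧ z = ((0 : ℕ), m) := by
  have hel := (hlin.2.1 _).1 hz
  obtain ⟨h1, h2⟩ := P.zero_only z hel h0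
  exact ⟨z.2, h1, h2, Prod.ext h0 rfl⟩

theorem idx_zero_mono (hlin : IsLinExt P w) {m m' : ℕ} (h1 : 1 ≤ m) (h2 : m ≤ m') (h3 : m' < r) :
    w.idxOf ((0 : ℕ), m) ≤ w.idxOf ((0 : ℕ), m') := by
  rcases eq_or_lt_of_le h2 with rfl | hlt
  · exact le_rfl
  · exact le_of_lt (hlin.2.2 _ (P.zero_mem m h1 (lt_trans hlt h3)) _ (P.zero_mem m' (by omega) h3)
      (P.zero_chain m m' h1 h2 h3) (by simp; omega))

theorem zerosBefore_eq_card (hlin : IsLinExt P w) {x : ℕ × ℕ} (hx : x ∈ w) :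
    zerosBefore w x =
      ((Finset.Ico 1 r).filter fun m => w.idxOf ((0 : ℕ), m) < w.idxOf x).card := by
  classical
  unfold zerosBefore
  rw [take_idx_filter w hlin.1 hx, List.filter_filter]
  have hnd : (w.filter fun z => decide (z.1 = 0) && decide (w.idxOf z < w.idxOf x)).Nodup :=
    hlin.1.filter _
  rw [← List.toFinset_card_of_nodup hnd, List.toFinset_filter]
  have hwt : w.toFinset = P.elems := by
    ext z; rw [List.mem_toFinset]; exact hlin.2.1 z
  rw [hwt]
  rw [show (P.elems.filter fun z => (decide (z.1 = 0) && decide (w.idxOf z < w.idxOf x)) = true)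
      = Finset.image (fun m => ((0 : ℕ), m))
        ((Finset.Ico 1 r).filter fun m => w.idxOf ((0 : ℕ), m) < w.idxOf x) from ?_]
  · rw [Finset.card_image_of_injective _ (fun a b h => by simpa using h)]
  · ext z
    simp only [Finset.mem_filter, Finset.mem_image, Finset.mem_Ico, Bool.and_eq_true,
      decide_eq_true_eq]
    constructor
    · rintro ⟨hel, h0, hidx⟩
      obtain ⟨h1, h2⟩ := P.zero_only z hel h0
      have hz2 : z = ((0 : ℕ), z.2) := Prod.ext h0 rfl
      refine ⟨z.2, ⟨⟨h1, h2⟩, ?_⟩, hz2.symm⟩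
      rwa [← hz2]
    · rintro ⟨m, ⟨⟨h1, h2⟩, hidx⟩, rfl⟩
      exact ⟨P.zero_mem m h1 h2, rfl, hidx⟩

theorem zerosBefore_lt_r (hr : 1 ≤ r) (hlin : IsLinExt P w) {x : ℕ × ℕ} (hx : x ∈ w) :
    zerosBefore w x < r := by
  rw [zerosBefore_eq_card hlin hx]
  calc ((Finset.Ico 1 r).filter fun m => w.idxOf ((0 : ℕ), m) < w.idxOf x).card
      ≤ (Finset.Ico 1 r).card := Finset.card_filter_le _ _
    _ = r - 1 := by rw [Nat.card_Ico]
    _ < r := by omega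

theorem idx_zero_lt_iff (hlin : IsLinExt P w) {x : ℕ × ℕ} (hx : x ∈ w) {m : ℕ}
    (h1 : 1 ≤ m) (h2 : m < r) :
    w.idxOf ((0 : ℕ), m) < w.idxOf x ↔ m ≤ zerosBefore w x := by
  rw [zerosBefore_eq_card hlin hx]
  constructor
  · intro h
    have hsub : Finset.Icc 1 m ⊆
        (Finset.Ico 1 r).filter fun m' => w.idxOf ((0 : ℕ), m') < w.idxOf x := by
      intro m' hm'
      rw [Finset.mem_Icc] at hm'
      rw [Finset.mem_filter, Finset.mem_Ico]
      exact ⟨⟨hm'.1, by omega⟩, lt_of_le_of_lt (idx_zero_mono hlin hm'.1 hm'.2 h2) h⟩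
    have := Finset.card_le_card hsub
    rwa [Nat.card_Icc, Nat.add_sub_cancel] at this
  · intro h
    by_contra hcon
    push_neg at hcon
    have hsub : ((Finset.Ico 1 r).filter fun m' => w.idxOf ((0 : ℕ), m') < w.idxOf x)
        ⊆ Finset.Ico 1 m := by
      intro m' hm'
      rw [Finset.mem_filter, Finset.mem_Ico] at hm'
      rw [Finset.mem_Ico]
      refine ⟨hm'.1.1, ?_⟩
      by_contra hge
      push_neg at hge
      exact absurd (lt_of_le_of_lt (le_trans hcon (idx_zero_mono hlin h1 hge hm'.1.2)) hm'.2)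
        (lt_irrefl _)
    have := Finset.card_le_card hsub
    rw [Nat.card_Ico] at this
    omega

end Statics

end CPPAux
namespace CPPAux

theorem pairwise_key_lt {β : Type*} [LinearOrder β] {key : ℕ × ℕ → β}
    (hinj : Function.Injective key) {l : List (ℕ × ℕ)}
    (hs : l.Pairwise (fun a b => key a ≤ key b)) (hn : l.Nodup) :
    l.Pairwise (fun a b => key a < key b) :=
  (hs.and hn).imp (fun ⟨hle, hne⟩ => lt_of_le_of_ne hle (fun h => hne (hinj h)))

section Forward

variable {r j : ℕ} {P : ColoredPoset r} {f : {x // x ∈ P.elems} → ℕ × ℕ}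

theorem Fext_zero (hf : IsCPP r j P f) {m : ℕ} (h1 : 1 ≤ m) (h2 : m < r) :
    Fext P f ((0 : ℕ), m) = (m, 0) := by
  rw [Fext_apply P f (P.zero_mem m h1 h2)]
  exact hf.2.1 m h1 h2

theorem Fext_bound (hf : IsCPP r j P f) {x : ℕ × ℕ} (hx : x ∈ P.elems) :
    (Fext P f x).1 < r ∧ (Fext P f x).2 ≤ j := by
  rw [Fext_apply P f hx]; exact hf.1 ⟨x, hx⟩

/-- distinct elements of the poset have distinct stored letters, in fact distinct
values-or-colors; here: they are never equal -/
theorem elems_ne_of {x y : ℕ × ℕ} (hx : x ∈ P.elems) (hy : y ∈ P.elems)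
    (hf : IsCPP r j P f) (hne : x ≠ y) (hp : Fext P f x = Fext P f y) : x.1 ≠ y.1 := by
  intro hval
  rcases Nat.eq_zero_or_pos x.1 with h0 | h1
  · obtain ⟨hx1, hx2⟩ := P.zero_only x hx h0
    obtain ⟨hy1, hy2⟩ := P.zero_only y hy (by omega)
    have ex : Fext P f x = (x.2, 0) := by
      rw [show x = ((0 : ℕ), x.2) from Prod.ext h0 rfl]; exact Fext_zero hf hx1 hx2
    have ey : Fext P f y = (y.2, 0) := by
      rw [show y = ((0 : ℕ), y.2) from Prod.ext (by omega) rfl]; exact Fext_zero hf hy1 hy2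
    rw [ex, ey] at hp
    exact hne (Prod.ext hval (congrArg Prod.fst hp))
  · exact hne (P.val_inj x hx y hy h1 hval)

theorem keyW_strict (hf : IsCPP r j P f) {x y : ℕ × ℕ} (hx : x ∈ P.elems) (hy : y ∈ P.elems)
    (hrel : P.rel x y) (hne : x ≠ y) : keyW P f x < keyW P f y := by
  have hle : partLE (Fext P f x) (Fext P f y) := by
    rw [Fext_apply P f hx, Fext_apply P f hy]
    exact hf.2.2.1 ⟨x, hx⟩ ⟨y, hy⟩ hrel
  rcases hle with h | ⟨h1, h2⟩
  · exact Prod.Lex.lt_iff |>.2 (Or.inl (encP_lt_iff.2 (Or.inl h)))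
  · rcases lt_or_eq_of_le h2 with h2' | h2'
    · exact Prod.Lex.lt_iff |>.2 (Or.inl (encP_lt_iff.2 (Or.inr ⟨h1, h2'⟩)))
    · -- equal parts
      have hp : Fext P f x = Fext P f y := Prod.ext h1 h2'
      have hvalne : x.1 ≠ y.1 := elems_ne_of hx hy hf hne hp
      have hsne : storeF P f x ≠ storeF P f y := by
        intro hh
        have h5 := congrArg Prod.fst hh
        exact hvalne h5
      have hnlt : ¬ letterLT (storeF P f y) (storeF P f x) := by
        intro hlt
        have := hf.2.2.2.1 ⟨x, hx⟩ ⟨y, hy⟩ hrel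
          (by rw [Fext_apply P f hx, Fext_apply P f hy] at hp; exact congrArg Prod.fst hp)
          (by
            have e1 : (f ⟨x, hx⟩).1 = (Fext P f x).1 := by rw [Fext_apply P f hx]
            rw [e1]
            have e2 : shiftLetter r (Fext P f x).1 y = storeF P f y := by
              rw [storeF, hp]
            rw [e2]
            exact hlt)
        -- partLT of equal parts is absurd
        rw [← Fext_apply P f hx, ← Fext_apply P f hy, hp] at this
        rcases this with h | ⟨_, h⟩ <;> omega
      have hlt : letterLT (storeF P f x) (storeF P f y) := by
        rcases letterLT_total _ _ hsne with h | h
        · exact h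
        · exact absurd h hnlt
      refine Prod.Lex.lt_iff |>.2 (Or.inr ⟨congrArg encP hp, ?_⟩)
      exact Prod.Lex.lt_iff |>.2 (Or.inl (encL_lt_iff.2 hlt))

theorem sortedW_sorted (f : {x // x ∈ P.elems} → ℕ × ℕ) :
    (sortedW P f).Pairwise fun a b => keyW P f a ≤ keyW P f b :=
  Finset.pairwise_sort P.elems (relW P f)

theorem sortedW_nodup (f : {x // x ∈ P.elems} → ℕ × ℕ) : (sortedW P f).Nodup :=
  Finset.sort_nodup P.elems (relW P f)

theorem mem_sortedW (f : {x // x ∈ P.elems} → ℕ × ℕ) (x : ℕ × ℕ) :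
    x ∈ sortedW P f ↔ x ∈ P.elems := Finset.mem_sort (relW P f)

theorem sortedW_linext (hf : IsCPP r j P f) : IsLinExt P (sortedW P f) := by
  refine ⟨sortedW_nodup f, mem_sortedW f, ?_⟩
  intro x hx y hy hrel hne
  exact (sorted_idx_lt_iff (keyW_injective P f) (sortedW_sorted f) (sortedW_nodup f)
    ((mem_sortedW f x).2 hx) ((mem_sortedW f y).2 hy)).2 (keyW_strict hf hx hy hrel hne)

theorem keyW_zero_lt_iff (hf : IsCPP r j P f) {x : ℕ × ℕ} (hx : x ∈ P.elems) (hx1 : 1 ≤ x.1)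
    {m : ℕ} (h1 : 1 ≤ m) (h2 : m < r) :
    keyW P f ((0 : ℕ), m) < keyW P f x ↔ m ≤ (Fext P f x).1 := by
  have hstz : storeF P f ((0 : ℕ), m) = (0, 0) := by
    rw [storeF, Fext_zero hf h1 h2]
    exact shiftLetter_self_color h2
  have hpz : Fext P f ((0 : ℕ), m) = (m, 0) := Fext_zero hf h1 h2
  constructor
  · intro h
    by_contra hcon
    push_neg at hcon
    have : keyW P f x < keyW P f ((0 : ℕ), m) := by
      refine Prod.Lex.lt_iff |>.2 (Or.inl (encP_lt_iff.2 (Or.inl ?_)))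
      rw [hpz]
      exact hcon
    exact absurd h (lt_asymm this)
  · intro h
    rcases lt_or_eq_of_le h with h' | h'
    · exact Prod.Lex.lt_iff |>.2 (Or.inl (encP_lt_iff.2 (Or.inl (by rw [hpz]; exact h'))))
    · rcases Nat.eq_zero_or_pos (Fext P f x).2 with hz | hz
      · -- parts equal, compare stored letters
        have hpx : Fext P f x = (m, 0) := Prod.ext h'.symm hz
        refine Prod.Lex.toLex_lt_toLex |>.2 (Or.inr ⟨by rw [hpz, hpx], ?_⟩)
        refine Prod.Lex.lt_iff |>.2 (Or.inl (encL_lt_iff.2 ?_))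
        rw [hstz]
        rcases Nat.eq_zero_or_pos (storeF P f x).2 with hc | hc
        · exact Or.inr ⟨hc.symm, by show (0 : ℕ) < x.1; omega⟩
        · exact Or.inl hc
      · refine Prod.Lex.lt_iff |>.2 (Or.inl (encP_lt_iff.2 (Or.inr ⟨?_, ?_⟩)))
        · rw [hpz, ← h']
        · rw [hpz]; omega

theorem zerosBefore_sortedW (hf : IsCPP r j P f) {x : ℕ × ℕ} (hx : x ∈ P.elems)
    (hx1 : 1 ≤ x.1) : zerosBefore (sortedW P f) x = (Fext P f x).1 := by
  have hk : (Fext P f x).1 < r := (Fext_bound hf hx).1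
  rw [zerosBefore_eq_card (sortedW_linext hf) ((mem_sortedW f x).2 hx)]
  have hset : ((Finset.Ico 1 r).filter
      fun m => (sortedW P f).idxOf ((0 : ℕ), m) < (sortedW P f).idxOf x)
      = Finset.Ico 1 ((Fext P f x).1 + 1) := by
    ext m
    simp only [Finset.mem_filter, Finset.mem_Ico]
    constructor
    · rintro ⟨⟨ha, hb⟩, hidx⟩
      have := (sorted_idx_lt_iff (keyW_injective P f) (sortedW_sorted f) (sortedW_nodup f)
        ((mem_sortedW f _).2 (P.zero_mem m ha hb)) ((mem_sortedW f x).2 hx)).1 hidx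
      have := (keyW_zero_lt_iff hf hx hx1 ha hb).1 this
      omega
    · rintro ⟨ha, hb⟩
      have hb' : m < r := by omega
      refine ⟨⟨ha, hb'⟩, ?_⟩
      exact (sorted_idx_lt_iff (keyW_injective P f) (sortedW_sorted f) (sortedW_nodup f)
        ((mem_sortedW f _).2 (P.zero_mem m ha hb')) ((mem_sortedW f x).2 hx)).2
        ((keyW_zero_lt_iff hf hx hx1 ha hb').2 (by omega))
  rw [hset, Nat.card_Ico]
  omega

end Forward

end CPPAux
namespace CPPAux

open List

theorem coe_flatMap_range {β : Type*} (g : ℕ → List β) :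
    ∀ n, (↑((List.range n).flatMap g) : Multiset β) = ∑ i ∈ Finset.range n, (↑(g i) : Multiset β)
  | 0 => by simp
  | n + 1 => by
    rw [List.range_succ, List.flatMap_append, Finset.sum_range_succ, ← coe_flatMap_range g n]
    simp

theorem multiset_filter_sum {β : Type*} (M : Multiset β) (q : β → Prop) [DecidablePred q]
    (blk : β → ℕ) :
    ∀ n, ∑ i ∈ Finset.range n, M.filter (fun x => q x ∧ blk x = i)
      = M.filter (fun x => q x ∧ blk x < n)
  | 0 => by
    rw [Finset.range_zero, Finset.sum_empty]
    symm
    rw [Multiset.filter_eq_nil]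
    intro a _ h
    omega
  | n + 1 => by
    rw [Finset.sum_range_succ, multiset_filter_sum M q blk n,
      Multiset.filter_add_filter]
    have h1 : Multiset.filter (fun a => (q a ∧ blk a < n) ∧ q a ∧ blk a = n) M = 0 := by
      rw [Multiset.filter_eq_nil]
      intro a _ h
      omega
    rw [h1, add_zero]
    apply Multiset.filter_congr
    intro a _
    constructor
    · rintro (⟨h1, h2⟩ | ⟨h1, h2⟩) <;> exact ⟨h1, by omega⟩
    · rintro ⟨h1, h2⟩
      rcases Nat.lt_or_ge (blk a) n with h | h
      · exact Or.inl ⟨h1, h⟩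
      · exact Or.inr ⟨h1, by omega⟩

section Forward

variable {r j : ℕ} {P : ColoredPoset r} {f : {x // x ∈ P.elems} → ℕ × ℕ}

theorem invStore_storeF {x : ℕ × ℕ} (hx : x ∈ P.elems) (hx1 : 1 ≤ x.1) :
    invStore P (storeF P f x) = x := invStore_eq P hx hx1 rfl

theorem vv_storeF {x : ℕ × ℕ} (hx : x ∈ P.elems) (hx1 : 1 ≤ x.1) :
    vv P f (storeF P f x) = (Fext P f x).2 := by
  rw [vv, invStore_storeF hx hx1]

theorem mem_storedFinset_iff {z : ℕ × ℕ} :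
    z ∈ storedFinset P f ↔ ∃ x, x ∈ P.elems ∧ 1 ≤ x.1 ∧ storeF P f x = z := by
  simp only [storedFinset, Finset.mem_image, Finset.mem_filter]
  constructor
  · rintro ⟨x, ⟨h1, h2⟩, h3⟩; exact ⟨x, h1, h2, h3⟩
  · rintro ⟨x, h1, h2, h3⟩; exact ⟨x, ⟨h1, h2⟩, h3⟩

theorem sortedU_sorted (f : {x // x ∈ P.elems} → ℕ × ℕ) :
    (sortedU P f).Pairwise fun a b => keyU P f a ≤ keyU P f b :=
  Finset.pairwise_sort _ (relU P f)

theorem sortedU_nodup (f : {x // x ∈ P.elems} → ℕ × ℕ) : (sortedU P f).Nodup :=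
  Finset.sort_nodup _ (relU P f)

theorem mem_sortedU (f : {x // x ∈ P.elems} → ℕ × ℕ) {z : ℕ × ℕ} :
    z ∈ sortedU P f ↔ z ∈ storedFinset P f := Finset.mem_sort (relU P f)

theorem block_sortedW_eq (hf : IsCPP r j P f) (i : ℕ) :
    block (sortedW P f) i
      = (sortedW P f).filter fun x => decide (1 ≤ x.1 ∧ (Fext P f x).1 = i) := by
  apply List.filter_congr
  intro x hx
  have hel : x ∈ P.elems := (mem_sortedW f x).1 hx
  simp only [decide_eq_decide]
  constructor
  · rintro ⟨h1, h2⟩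
    exact ⟨h1, by rw [← zerosBefore_sortedW hf hel h1]; exact h2⟩
  · rintro ⟨h1, h2⟩
    exact ⟨h1, by rw [zerosBefore_sortedW hf hel h1]; exact h2⟩

theorem coe_block (hf : IsCPP r j P f) (i : ℕ) :
    (↑(block (sortedW P f) i) : Multiset (ℕ × ℕ))
      = (P.elems.filter fun x => 1 ≤ x.1 ∧ (Fext P f x).1 = i).val := by
  rw [block_sortedW_eq hf i]
  rw [Multiset.Nodup.ext (Multiset.coe_nodup.2 ((sortedW_nodup f).filter _))
    (P.elems.filter _).nodup]
  intro a
  rw [Multiset.mem_coe, List.mem_filter, ← Finset.mem_def, Finset.mem_filter, mem_sortedW]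
  simp only [decide_eq_true_eq]

theorem coe_blockWord (hf : IsCPP r j P f) (i : ℕ) :
    (↑(blockWord r (sortedW P f) i) : Multiset (ℕ × ℕ))
      = Multiset.map (storeF P f) (P.elems.filter fun x => 1 ≤ x.1 ∧ (Fext P f x).1 = i).val := by
  rw [blockWord]
  have hmc : (block (sortedW P f) i).map (shiftLetter r i)
      = (block (sortedW P f) i).map (storeF P f) := by
    apply List.map_congr_left
    intro x hx
    rw [block_sortedW_eq hf i, List.mem_filter] at hx
    have h2 := hx.2
    simp only [decide_eq_true_eq] at h2
    rw [storeF, h2.2]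
  rw [hmc, ← Multiset.map_coe, coe_block hf i]

theorem storeF_injOn (f : {x // x ∈ P.elems} → ℕ × ℕ) :
    Set.InjOn (storeF P f) ↑(P.elems.filter fun x => 1 ≤ x.1) := by
  intro x hx y hy h
  rw [Finset.coe_filter, Set.mem_setOf_eq] at hx hy
  have h5 := congrArg Prod.fst h
  exact P.val_inj x hx.1 y hy.1 hx.2 h5

theorem storedFinset_val (f : {x // x ∈ P.elems} → ℕ × ℕ) :
    (storedFinset P f).val
      = Multiset.map (storeF P f) (P.elems.filter fun x => 1 ≤ x.1).val :=
  Finset.image_val_of_injOn (storeF_injOn f)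

theorem coe_sortedU (f : {x // x ∈ P.elems} → ℕ × ℕ) :
    (↑(sortedU P f) : Multiset (ℕ × ℕ)) = (storedFinset P f).val := by
  rw [show (sortedU P f : Multiset (ℕ × ℕ)) = ↑((storedFinset P f).toList) from
    Multiset.coe_eq_coe.2 (Finset.sort_perm_toList _ _), Finset.coe_toList]

theorem sum_coe_blockWord (hr : 1 ≤ r) (hf : IsCPP r j P f) :
    ∑ i ∈ Finset.range r, (↑(blockWord r (sortedW P f) i) : Multiset (ℕ × ℕ))
      = ↑(sortedU P f) := by
  classical
  have h1 : ∀ i, (↑(blockWord r (sortedW P f) i) : Multiset (ℕ × ℕ))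
      = Multiset.map (storeF P f) (Multiset.filter (fun x => 1 ≤ x.1 ∧ (Fext P f x).1 = i)
          P.elems.val) := by
    intro i
    rw [coe_blockWord hf i, Finset.filter_val]
  simp only [h1]
  rw [← Multiset.coe_mapAddMonoidHom, ← map_sum (Multiset.mapAddMonoidHom (storeF P f))]
  rw [show ∑ i ∈ Finset.range r, Multiset.filter (fun x => 1 ≤ x.1 ∧ (Fext P f x).1 = i)
      P.elems.val = Multiset.filter (fun x => 1 ≤ x.1 ∧ (Fext P f x).1 < r) P.elems.val from
    multiset_filter_sum _ _ _ r]
  rw [coe_sortedU, storedFinset_val, Finset.filter_val, Multiset.coe_mapAddMonoidHom]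
  congr 1
  apply Multiset.filter_congr
  intro x hx
  constructor
  · rintro ⟨h1, _⟩; exact h1
  · intro h1
    exact ⟨h1, (Fext_bound hf (Finset.mem_def.2 hx)).1⟩

theorem keyU_store_lt (hf : IsCPP r j P f) {a b : ℕ × ℕ} (ha : a ∈ P.elems)
    (hb : b ∈ P.elems) (ha1 : 1 ≤ a.1) (hb1 : 1 ≤ b.1)
    (hblk : (Fext P f a).1 = (Fext P f b).1) (hk : keyW P f a < keyW P f b) :
    keyU P f (storeF P f a) < keyU P f (storeF P f b) := by
  have hva : vv P f (storeF P f a) = (Fext P f a).2 := vv_storeF ha ha1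
  have hvb : vv P f (storeF P f b) = (Fext P f b).2 := vv_storeF hb hb1
  rcases Prod.Lex.lt_iff.1 hk with h | ⟨h1, h2⟩
  · have := encP_lt_iff.1 h
    rcases this with h' | ⟨_, h'⟩
    · omega
    · exact Prod.Lex.toLex_lt_toLex.2 (Or.inl (by rw [hva, hvb]; exact h'))
  · have hpe : Fext P f a = Fext P f b := encP_injective h1
    rcases Prod.Lex.lt_iff.1 h2 with h | ⟨h3, _⟩
    · exact Prod.Lex.toLex_lt_toLex.2 (Or.inr ⟨by rw [hva, hvb, hpe], h⟩)
    · exfalso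
      have hse : storeF P f a = storeF P f b := encL_injective h3
      have h5 := congrArg Prod.fst hse
      have hab : a = b := P.val_inj a ha b hb ha1 h5
      rw [hab] at hk
      exact lt_irrefl _ hk

theorem blockWord_pairwise (hf : IsCPP r j P f) (i : ℕ) :
    (blockWord r (sortedW P f) i).Pairwise
      fun z z' => keyU P f z < keyU P f z' := by
  rw [blockWord, List.pairwise_map]
  have hpw : (sortedW P f).Pairwise fun a b => keyW P f a < keyW P f b :=
    pairwise_key_lt (keyW_injective P f) (sortedW_sorted f) (sortedW_nodup f)
  have hpb : (block (sortedW P f) i).Pairwise fun a b => keyW P f a < keyW P f b :=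
    hpw.sublist (List.filter_sublist)
  apply List.Pairwise.imp_of_mem ?_ hpb
  intro a b hma hmb hk
  rw [block_sortedW_eq hf i, List.mem_filter] at hma hmb
  have h2a := hma.2; have h2b := hmb.2
  simp only [decide_eq_true_eq] at h2a h2b
  have hsa : shiftLetter r i a = storeF P f a := by rw [storeF, h2a.2]
  have hsb : shiftLetter r i b = storeF P f b := by rw [storeF, h2b.2]
  rw [hsa, hsb]
  exact keyU_store_lt hf ((mem_sortedW f a).1 hma.1) ((mem_sortedW f b).1 hmb.1)
    h2a.1 h2b.1 (h2a.2.trans h2b.2.symm) hk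

theorem blockWord_sublist_sortedU (hf : IsCPP r j P f) (i : ℕ) :
    (blockWord r (sortedW P f) i).Sublist (sortedU P f) := by
  apply sublist_of_sorted_subset (lt := fun z z' => keyU P f z < keyU P f z')
    (fun a b h => lt_asymm h) _ _ (blockWord_pairwise hf i)
    (pairwise_key_lt (keyU_injective P f) (sortedU_sorted f) (sortedU_nodup f))
  intro z hz
  have : z ∈ (↑(blockWord r (sortedW P f) i) : Multiset (ℕ × ℕ)) := by
    rwa [Multiset.mem_coe]
  rw [coe_blockWord hf i, Multiset.mem_map] at this
  obtain ⟨x, hx, rfl⟩ := this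
  rw [← Finset.mem_def, Finset.mem_filter] at hx
  rw [mem_sortedU, mem_storedFinset_iff]
  exact ⟨x, hx.1, hx.2.1, rfl⟩

theorem isColoredLinExt_forward (hr : 1 ≤ r) (hf : IsCPP r j P f) :
    IsColoredLinExt r (sortedW P f) (sortedU P f) :=
  ⟨(sum_coe_blockWord hr hf).symm, fun i _ => blockWord_sublist_sortedU hf i⟩

theorem sortedW_mem_LinExts (hf : IsCPP r j P f) : sortedW P f ∈ LinExts P := by
  classical
  simp only [LinExts, Finset.mem_filter]
  exact ⟨List.mem_toFinset.2 (List.mem_permutations.2 (Finset.sort_perm_toList _ _)),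
    sortedW_linext hf⟩

theorem sortedU_mem_ColLinExts (hr : 1 ≤ r) (hf : IsCPP r j P f) :
    sortedU P f ∈ ColLinExts r (sortedW P f) := by
  classical
  simp only [ColLinExts, Finset.mem_filter]
  refine ⟨List.mem_toFinset.2 (List.mem_permutations.2 ?_), isColoredLinExt_forward hr hf⟩
  rw [← Multiset.coe_eq_coe, coe_flatMap_range, sum_coe_blockWord hr hf]

theorem gFun_isWordCPP (hr : 1 ≤ r) (hf : IsCPP r j P f) :
    IsWordCPP r j (sortedU P f) (gFun P f) := by
  have hget : ∀ i : Fin (sortedU P f).length,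
      ∃ x, x ∈ P.elems ∧ 1 ≤ x.1 ∧ storeF P f x = (sortedU P f).get i := by
    intro i
    exact mem_storedFinset_iff.1 ((mem_sortedU f).1 ((sortedU P f).get_mem _))
  have hmono : ∀ i k : Fin (sortedU P f).length, i < k →
      keyU P f ((sortedU P f).get i) ≤ keyU P f ((sortedU P f).get k) := by
    intro i k h
    exact (sortedU_sorted f).rel_get_of_lt h
  refine ⟨?_, ?_, ?_, ?_, ?_, ?_⟩
  · intro i
    obtain ⟨x, hx, hx1, hst⟩ := hget i
    refine ⟨by simp [gFun]; omega, ?_⟩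
    show vv P f ((sortedU P f).get i) ≤ j
    rw [← hst, vv_storeF hx hx1]
    exact (Fext_bound hf hx).2
  · intro i k h
    have := hmono i k h
    rcases Prod.Lex.le_iff.1 this with h' | ⟨h', _⟩
    · exact Or.inr ⟨rfl, le_of_lt h'⟩
    · exact Or.inr ⟨rfl, le_of_eq h'⟩
  · intro i k h hfst hlt
    have hcol : ∀ i' : Fin (sortedU P f).length, ((sortedU P f).get i').2 < r := by
      intro i'
      obtain ⟨x, hx, hx1, hst⟩ := hget i'
      rw [← hst]
      exact shiftLetter_color_lt hr _ _
    have hgf : (gFun P f i).1 = 0 := rfl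
    rw [hgf] at hlt
    rw [shiftLetter_zero (hcol k), shiftLetter_zero (hcol i)] at hlt
    have hmon := hmono i k h
    rcases Prod.Lex.le_iff.1 hmon with h' | ⟨h', h''⟩
    · exact Or.inr ⟨rfl, h'⟩
    · exfalso
      have : encL ((sortedU P f).get k) < encL ((sortedU P f).get i) := encL_lt_iff.2 hlt
      exact absurd h'' (not_le.2 this)
  · intro i m h1 h2
    exact Or.inl (by show (0 : ℕ) < m; omega)
  · intro i m h1 h2 hcontra
    exfalso
    have : (0 : ℕ) = m := hcontra
    omega
  · intro i hji
    obtain ⟨x, hx, hx1, hst⟩ := hget i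
    have hji' : (Fext P f x).2 = j := by
      have : vv P f ((sortedU P f).get i) = j := hji
      rwa [← hst, vv_storeF hx hx1] at this
    have hcp := hf.2.2.2.2 ⟨x, hx⟩ (by rwa [← Fext_apply P f hx])
    have hx2 : x.2 = (Fext P f x).1 := by rwa [← Fext_apply P f hx] at hcp
    show ((sortedU P f).get i).2 = 0
    rw [← hst]
    exact shiftLetter_color_eq_zero' (P.col_lt x hx) (Fext_bound hf hx).1 hx2

end Forward

end CPPAux
namespace CPPAux

open List

theorem idxOf_map_of_inj {α : Type*} [DecidableEq α] {h : α → α} {a : α} :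
    ∀ (l : List α), (∀ b ∈ l, h b = h a → b = a) →
      (l.map h).idxOf (h a) = l.idxOf a
  | [], _ => rfl
  | b :: t, hinj => by
    rcases eq_or_ne b a with rfl | hba
    · simp [List.idxOf_cons_self]
    · have hne : h b ≠ h a := fun hh => hba (hinj b (by simp) hh)
      rw [List.map_cons, List.idxOf_cons_ne _ hne, List.idxOf_cons_ne _ hba,
        idxOf_map_of_inj t (fun c hc => hinj c (by simp [hc]))]

theorem idx_map_of_inj {h : ℕ × ℕ → ℕ × ℕ} {a : ℕ × ℕ} (l : List (ℕ × ℕ))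
    (hinj : ∀ b ∈ l, h b = h a → b = a) :
    (l.map h).idxOf (h a) = l.idxOf a := by
  rw [beq_bridge]
  exact idxOf_map_of_inj l hinj

section Inverse

variable {r j : ℕ} {P : ColoredPoset r} {w u : List (ℕ × ℕ)} {g : Fin u.length → ℕ × ℕ}

theorem mem_u_iff (hcl : IsColoredLinExt r w u) {z : ℕ × ℕ} :
    z ∈ u ↔ ∃ i < r, z ∈ blockWord r w i := by
  rw [← Multiset.mem_coe, hcl.1]
  rw [Multiset.mem_sum]
  constructor
  · rintro ⟨i, hi, hz⟩
    exact ⟨i, Finset.mem_range.1 hi, Multiset.mem_coe.1 hz⟩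
  · rintro ⟨i, hi, hz⟩
    exact ⟨i, Finset.mem_range.2 hi, Multiset.mem_coe.2 hz⟩

theorem mem_blockWord_iff {i : ℕ} {z : ℕ × ℕ} :
    z ∈ blockWord r w i
      ↔ ∃ x, x ∈ w ∧ 1 ≤ x.1 ∧ zerosBefore w x = i ∧ shiftLetter r i x = z := by
  rw [blockWord, List.mem_map]
  constructor
  · rintro ⟨x, hx, rfl⟩
    rw [block, List.mem_filter] at hx
    have h2 := hx.2
    simp only [decide_eq_true_eq] at h2
    exact ⟨x, hx.1, h2.1, h2.2, rfl⟩
  · rintro ⟨x, h1, h2, h3, rfl⟩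
    exact ⟨x, by rw [block, List.mem_filter]; simp only [decide_eq_true_eq]; exact ⟨h1, h2, h3⟩,
      rfl⟩

theorem mem_u_val_pos (hr : 1 ≤ r) (hcl : IsColoredLinExt r w u) {z : ℕ × ℕ} (hz : z ∈ u) :
    1 ≤ z.1 ∧ z.2 < r := by
  obtain ⟨i, _, hbw⟩ := (mem_u_iff hcl).1 hz
  obtain ⟨x, _, hx1, _, rfl⟩ := mem_blockWord_iff.1 hbw
  exact ⟨hx1, shiftLetter_color_lt hr _ _⟩

theorem store_mem_u (hr : 1 ≤ r) (hlin : IsLinExt P w) (hcl : IsColoredLinExt r w u)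
    {x : ℕ × ℕ} (hx : x ∈ P.elems) (hx1 : 1 ≤ x.1) :
    shiftLetter r (zerosBefore w x) x ∈ u := by
  have hxw : x ∈ w := (hlin.2.1 x).2 hx
  rw [mem_u_iff hcl]
  exact ⟨zerosBefore w x, zerosBefore_lt_r hr hlin hxw,
    mem_blockWord_iff.2 ⟨x, hxw, hx1, rfl, rfl⟩⟩

theorem coe_u_map_fst (hr : 1 ≤ r) (hlin : IsLinExt P w) (hcl : IsColoredLinExt r w u) :
    Multiset.map Prod.fst (↑u : Multiset (ℕ × ℕ))
      = Multiset.map Prod.fst (↑(w.filter fun x => decide (1 ≤ x.1)) : Multiset (ℕ × ℕ)) := by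
  classical
  rw [hcl.1, ← Multiset.coe_mapAddMonoidHom, map_sum]
  simp only [Multiset.coe_mapAddMonoidHom]
  have h1 : ∀ i, Multiset.map Prod.fst (↑(blockWord r w i) : Multiset (ℕ × ℕ))
      = Multiset.map Prod.fst (↑(block w i) : Multiset (ℕ × ℕ)) := by
    intro i
    rw [blockWord, ← Multiset.map_coe, Multiset.map_map]
    rfl
  simp only [h1]
  have h2 : ∀ i, (↑(block w i) : Multiset (ℕ × ℕ))
      = Multiset.filter (fun x => 1 ≤ x.1 ∧ zerosBefore w x = i) (↑w : Multiset (ℕ × ℕ)) := by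
    intro i
    rw [block]
    exact (Multiset.filter_coe (p := fun x => 1 ≤ x.1 ∧ zerosBefore w x = i) w).symm
  simp only [h2]
  rw [← Multiset.coe_mapAddMonoidHom, ← map_sum,
    multiset_filter_sum (↑w) (fun x => 1 ≤ x.1) (zerosBefore w) r,
    Multiset.coe_mapAddMonoidHom]
  congr 1
  rw [← Multiset.filter_coe (p := fun x => (1 ≤ x.1 : Prop)) w]
  apply Multiset.filter_congr
  intro x hx
  constructor
  · rintro ⟨h1', _⟩; exact h1'
  · intro h1'
    exact ⟨h1', zerosBefore_lt_r hr hlin (Multiset.mem_coe.1 hx)⟩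

theorem u_nodup (hr : 1 ≤ r) (hlin : IsLinExt P w) (hcl : IsColoredLinExt r w u) :
    u.Nodup := by
  have hw : w.Nodup := hlin.1
  have hfil : (w.filter fun x => decide (1 ≤ x.1)).Nodup := hw.filter _
  have hfst : ((w.filter fun x => decide (1 ≤ x.1)).map Prod.fst).Nodup := by
    rw [List.nodup_map_iff_inj_on hfil]
    intro x hx y hy hxy
    rw [List.mem_filter] at hx hy
    have hx1 : 1 ≤ x.1 := by simpa using hx.2
    exact P.val_inj x ((hlin.2.1 x).1 hx.1) y ((hlin.2.1 y).1 hy.1) hx1 hxy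
  have : (u.map Prod.fst).Nodup := by
    have hmu : (↑(u.map Prod.fst) : Multiset ℕ)
        = ↑((w.filter fun x => decide (1 ≤ x.1)).map Prod.fst) := by
      rw [← Multiset.map_coe, ← Multiset.map_coe]
      exact coe_u_map_fst hr hlin hcl
    have := Multiset.coe_nodup.2 hfst
    rw [← hmu] at this
    exact Multiset.coe_nodup.1 this
  exact this.of_map _

theorem g_fst_eq_zero (hr : 1 ≤ r) (hcl : IsColoredLinExt r w u)
    (hg : IsWordCPP r j u g) (i : Fin u.length) : (g i).1 = 0 := by
  rcases Nat.lt_or_ge 1 r with h2 | h2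
  · -- r ≥ 2 : use the zero 0₁
    have hle := hg.2.2.2.1 i 1 le_rfl h2
    rcases hle with h | ⟨h1, _⟩
    · omega
    · exfalso
      have hval : 1 ≤ (u.get i).1 := (mem_u_val_pos hr hcl (u.get_mem _)).1
      have hlt := hg.2.2.2.2.1 i 1 le_rfl h2 h1 ?_
      · rcases hlt with h' | ⟨_, h'⟩ <;> omega
      · rw [shiftLetter_self_color h2]
        rcases Nat.eq_zero_or_pos (shiftLetter r 1 (u.get i)).2 with hc | hc
        · exact Or.inr ⟨hc.symm, hval⟩
        · exact Or.inl hc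
  · have := (hg.1 i).1
    omega

theorem u_order_transfer (hr : 1 ≤ r) (hlin : IsLinExt P w) (hcl : IsColoredLinExt r w u)
    {x y : ℕ × ℕ} (hxw : x ∈ w) (hyw : y ∈ w) (hx1 : 1 ≤ x.1) (hy1 : 1 ≤ y.1)
    (hzb : zerosBefore w x = zerosBefore w y) (hidx : w.idxOf x < w.idxOf y) :
    u.idxOf (shiftLetter r (zerosBefore w x) x)
      < u.idxOf (shiftLetter r (zerosBefore w y) y) := by
  set i := zerosBefore w x with hi
  have hyi : zerosBefore w y = i := hzb.symm
  have hir : i < r := zerosBefore_lt_r hr hlin hxw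
  have hxb : x ∈ block w i := by
    rw [block, List.mem_filter]
    simp only [decide_eq_true_eq]
    exact ⟨hxw, hx1, rfl⟩
  have hyb : y ∈ block w i := by
    rw [block, List.mem_filter]
    simp only [decide_eq_true_eq]
    exact ⟨hyw, hy1, hyi⟩
  have hblock : (block w i).idxOf x < (block w i).idxOf y :=
    (sublist_idx_lt_iff (List.filter_sublist (l := w)) hlin.1 hxb hyb).2 hidx
  have hcolors : ∀ b ∈ block w i, b.2 < r := by
    intro b hb
    rw [block, List.mem_filter] at hb
    exact P.col_lt b ((hlin.2.1 b).1 hb.1)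
  have hmx : (blockWord r w i).idxOf (shiftLetter r i x) = (block w i).idxOf x :=
    idx_map_of_inj _ (fun b hb hh => shiftLetter_inj (hcolors b hb) (hcolors x hxb) hh)
  have hmy : (blockWord r w i).idxOf (shiftLetter r i y) = (block w i).idxOf y :=
    idx_map_of_inj _ (fun b hb hh => shiftLetter_inj (hcolors b hb) (hcolors y hyb) hh)
  have hbw : (blockWord r w i).idxOf (shiftLetter r i x)
      < (blockWord r w i).idxOf (shiftLetter r i y) := by
    rw [hmx, hmy]; exact hblock
  have hxu : shiftLetter r i x ∈ blockWord r w i := mem_blockWord_iff.2 ⟨x, hxw, hx1, rfl, rfl⟩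
  have hyu : shiftLetter r i y ∈ blockWord r w i := mem_blockWord_iff.2 ⟨y, hyw, hy1, hyi, rfl⟩
  have := (sublist_idx_lt_iff (hcl.2 i hir) (u_nodup hr hlin hcl) hxu hyu).1 hbw
  rw [hyi]
  exact this

end Inverse

end CPPAux
namespace CPPAux

section Inverse

variable {r j : ℕ} {P : ColoredPoset r} {w u : List (ℕ × ℕ)} {g : Fin u.length → ℕ × ℕ}

theorem psi_zero {x : ℕ × ℕ} (hx : x ∈ P.elems) (h0 : x.1 = 0) :
    psi P w u g ⟨x, hx⟩ = (x.2, 0) := by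
  rw [psi, if_pos h0]

theorem psi_pos {x : ℕ × ℕ} (hx : x ∈ P.elems) (hx1 : 1 ≤ x.1)
    (hmem : shiftLetter r (zerosBefore w x) x ∈ u) :
    psi P w u g ⟨x, hx⟩ = (zerosBefore w x,
      (g ⟨u.idxOf (shiftLetter r (zerosBefore w x) x), idx_lt_length hmem⟩).2) := by
  rw [psi, if_neg (show ¬ (x.1 = 0) by omega), dif_pos hmem]

theorem psi_isCPP (hr : 1 ≤ r) (hlin : IsLinExt P w) (hcl : IsColoredLinExt r w u)
    (hg : IsWordCPP r j u g) : IsCPP r j P (psi P w u g) := by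
  have hwmem : ∀ {x : ℕ × ℕ}, x ∈ P.elems → x ∈ w := fun hx => (hlin.2.1 _).2 hx
  have hgz : ∀ i, (g i).1 = 0 := g_fst_eq_zero hr hcl hg
  refine ⟨?_, ?_, ?_, ?_, ?_⟩
  · -- bounds
    rintro ⟨x, hx⟩
    by_cases h0 : x.1 = 0
    · rw [psi_zero hx h0]
      exact ⟨(P.zero_only x hx h0).2, Nat.zero_le j⟩
    · have hx1 : 1 ≤ x.1 := by omega
      rw [psi_pos hx hx1 (store_mem_u hr hlin hcl hx hx1)]
      exact ⟨zerosBefore_lt_r hr hlin (hwmem hx), (hg.1 _).2⟩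
  · -- zeros get (m, 0)
    intro m h1 h2
    rw [psi_zero (P.zero_mem m h1 h2) rfl]
  · -- weak monotonicity
    rintro ⟨x, hx⟩ ⟨y, hy⟩ hrel
    by_cases heq : x = y
    · subst heq
      exact partLE_refl _
    · have hidx : w.idxOf x < w.idxOf y := hlin.2.2 x hx y hy hrel heq
      by_cases h0x : x.1 = 0 <;> by_cases h0y : y.1 = 0
      · -- both zeros
        obtain ⟨hx1, hx2⟩ := P.zero_only x hx h0x
        obtain ⟨hy1, hy2⟩ := P.zero_only y hy h0y
        have hxf : x = ((0 : ℕ), x.2) := Prod.ext h0x rfl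
        have hyf : y = ((0 : ℕ), y.2) := Prod.ext h0y rfl
        rw [psi_zero hx h0x, psi_zero hy h0y]
        have hle : x.2 ≤ y.2 := by
          by_contra hcon
          push_neg at hcon
          exact heq (P.rel_antisymm x hx y hy hrel
            (by rw [hxf, hyf]; exact P.zero_chain _ _ hy1 (le_of_lt hcon) hx2))
        rcases lt_or_eq_of_le hle with h | h
        · exact Or.inl h
        · exact absurd (Prod.ext (h0x.trans h0y.symm) h) heq
      · -- x zero, y positive
        obtain ⟨hx1, hx2⟩ := P.zero_only x hx h0x
        have hxf : x = ((0 : ℕ), x.2) := Prod.ext h0x rfl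
        have hy1 : 1 ≤ y.1 := by omega
        rw [psi_zero hx h0x, psi_pos hy hy1 (store_mem_u hr hlin hcl hy hy1)]
        have hzb : x.2 ≤ zerosBefore w y := by
          rw [← idx_zero_lt_iff hlin (hwmem hy) hx1 hx2, ← hxf]
          exact hidx
        rcases lt_or_eq_of_le hzb with h | h
        · exact Or.inl h
        · exact Or.inr ⟨h, Nat.zero_le _⟩
      · -- x positive, y zero
        obtain ⟨hy1, hy2⟩ := P.zero_only y hy h0y
        have hyf : y = ((0 : ℕ), y.2) := Prod.ext h0y rfl
        have hx1 : 1 ≤ x.1 := by omega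
        rw [psi_pos hx hx1 (store_mem_u hr hlin hcl hx hx1), psi_zero hy h0y]
        refine Or.inl ?_
        have hnot : ¬ (w.idxOf ((0 : ℕ), y.2) < w.idxOf x) := by
          rw [← hyf]
          omega
        rw [idx_zero_lt_iff hlin (hwmem hx) hy1 hy2] at hnot
        omega
      · -- both positive
        have hx1 : 1 ≤ x.1 := by omega
        have hy1 : 1 ≤ y.1 := by omega
        rw [psi_pos hx hx1 (store_mem_u hr hlin hcl hx hx1),
          psi_pos hy hy1 (store_mem_u hr hlin hcl hy hy1)]
        have hmono : zerosBefore w x ≤ zerosBefore w y := zerosBefore_mono w (le_of_lt hidx)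
        rcases lt_or_eq_of_le hmono with h | h
        · exact Or.inl h
        · refine Or.inr ⟨h, ?_⟩
          have hord := u_order_transfer hr hlin hcl (hwmem hx) (hwmem hy) hx1 hy1 h hidx
          have := hg.2.1 ⟨_, idx_lt_length (store_mem_u hr hlin hcl hx hx1)⟩
            ⟨_, idx_lt_length (store_mem_u hr hlin hcl hy hy1)⟩ (Fin.mk_lt_mk.2 hord)
          rcases this with h' | ⟨_, h'⟩
          · rw [hgz, hgz] at h'
            omega
          · exact h'
  · -- strict condition
    rintro ⟨x, hx⟩ ⟨y, hy⟩ hrel hfst hlt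
    by_cases heq : x = y
    · exfalso
      subst heq
      rcases hlt with h | ⟨_, h⟩ <;> omega
    · have hidx : w.idxOf x < w.idxOf y := hlin.2.2 x hx y hy hrel heq
      by_cases h0x : x.1 = 0 <;> by_cases h0y : y.1 = 0
      · -- both zeros : parts differ, so hfst forces x = y
        exfalso
        rw [psi_zero hx h0x, psi_zero hy h0y] at hfst
        exact heq (Prod.ext (h0x.trans h0y.symm) hfst)
      · -- x zero, y positive: shifted letter of x is (0,0), minimal
        exfalso
        obtain ⟨hx1, hx2⟩ := P.zero_only x hx h0x
        have hxf : x = ((0 : ℕ), x.2) := Prod.ext h0x rfl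
        rw [psi_zero hx h0x] at hlt
        have : shiftLetter r (x.2, (0:ℕ)).1 x = ((0 : ℕ), 0) := by
          rw [hxf]
          exact shiftLetter_self_color hx2
        rw [this] at hlt
        rcases hlt with h | ⟨_, h⟩ <;> omega
      · -- x positive, y zero: first coordinates cannot match
        exfalso
        obtain ⟨hy1, hy2⟩ := P.zero_only y hy h0y
        have hyf : y = ((0 : ℕ), y.2) := Prod.ext h0y rfl
        have hx1 : 1 ≤ x.1 := by omega
        rw [psi_pos hx hx1 (store_mem_u hr hlin hcl hx hx1), psi_zero hy h0y] at hfst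
        have hnot : ¬ (w.idxOf ((0 : ℕ), y.2) < w.idxOf x) := by
          rw [← hyf]
          omega
        rw [idx_zero_lt_iff hlin (hwmem hx) hy1 hy2] at hnot
        simp only at hfst
        omega
      · -- both positive
        have hx1 : 1 ≤ x.1 := by omega
        have hy1 : 1 ≤ y.1 := by omega
        have hmx := store_mem_u hr hlin hcl hx hx1
        have hmy := store_mem_u hr hlin hcl hy hy1
        rw [psi_pos hx hx1 hmx, psi_pos hy hy1 hmy] at hfst ⊢
        simp only at hfst
        rw [psi_pos hx hx1 hmx] at hlt
        simp only at hlt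
        have hord := u_order_transfer hr hlin hcl (hwmem hx) (hwmem hy) hx1 hy1 hfst hidx
        have hcall := hg.2.2.1 ⟨_, idx_lt_length hmx⟩ ⟨_, idx_lt_length hmy⟩
          (Fin.mk_lt_mk.2 hord) (by rw [hgz, hgz]) ?_
        · rcases hcall with h' | ⟨_, h'⟩
          · rw [hgz, hgz] at h'
            omega
          · exact Or.inr ⟨hfst, h'⟩
        · -- the letter condition transfers
          rw [hgz]
          have hgetx : u.get ⟨_, idx_lt_length hmx⟩ = shiftLetter r (zerosBefore w x) x :=
            get_idx _
          have hgety : u.get ⟨_, idx_lt_length hmy⟩ = shiftLetter r (zerosBefore w y) y :=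
            get_idx _
          rw [hgetx, hgety,
            shiftLetter_zero (mem_u_val_pos hr hcl hmy).2,
            shiftLetter_zero (mem_u_val_pos hr hcl hmx).2, ← hfst]
          exact hlt
  · -- maximal parts
    rintro ⟨x, hx⟩ hj
    by_cases h0 : x.1 = 0
    · rw [psi_zero hx h0]
    · have hx1 : 1 ≤ x.1 := by omega
      have hmx := store_mem_u hr hlin hcl hx hx1
      rw [psi_pos hx hx1 hmx] at hj ⊢
      simp only at hj ⊢
      have hmax := hg.2.2.2.2.2 ⟨_, idx_lt_length hmx⟩ hj
      rw [hgz] at hmax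
      have hget : u.get ⟨_, idx_lt_length hmx⟩ = shiftLetter r (zerosBefore w x) x := get_idx _
      rw [hget] at hmax
      exact shiftLetter_color_eq_zero (P.col_lt x hx) (zerosBefore_lt_r hr hlin (hwmem hx)) hmax

end Inverse

end CPPAux
namespace CPPAux

section Inverse

variable {r j : ℕ} {P : ColoredPoset r} {w u : List (ℕ × ℕ)} {g : Fin u.length → ℕ × ℕ}

theorem psi_left_inv {f : {x // x ∈ P.elems} → ℕ × ℕ} (hr : 1 ≤ r) (hf : IsCPP r j P f) :
    psi P (sortedW P f) (sortedU P f) (gFun P f) = f := by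
  funext a
  obtain ⟨x, hx⟩ := a
  by_cases h0 : x.1 = 0
  · obtain ⟨h1, h2⟩ := P.zero_only x hx h0
    rw [psi_zero hx h0]
    have hxf : (⟨x, hx⟩ : {x // x ∈ P.elems}) = ⟨((0 : ℕ), x.2), P.zero_mem x.2 h1 h2⟩ :=
      Subtype.ext (Prod.ext h0 rfl)
    rw [hxf, hf.2.1 x.2 h1 h2]
  · have hx1 : 1 ≤ x.1 := by omega
    have hzb : zerosBefore (sortedW P f) x = (Fext P f x).1 := zerosBefore_sortedW hf hx hx1
    have hst : shiftLetter r (zerosBefore (sortedW P f) x) x = storeF P f x := by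
      rw [hzb]; rfl
    have hmem : shiftLetter r (zerosBefore (sortedW P f) x) x ∈ sortedU P f := by
      rw [hst]
      exact (mem_sortedU f).2 (mem_storedFinset_iff.2 ⟨x, hx, hx1, rfl⟩)
    rw [psi_pos hx hx1 hmem]
    have hgv : (gFun P f ⟨(sortedU P f).idxOf (shiftLetter r (zerosBefore (sortedW P f) x) x),
        idx_lt_length hmem⟩).2 = (Fext P f x).2 := by
      show vv P f ((sortedU P f).get _) = _
      rw [get_idx (idx_lt_length hmem), hst, vv_storeF hx hx1]
    rw [hgv, hzb, ← Fext_apply P f hx]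

theorem u_decomp (hlin : IsLinExt P w) (hcl : IsColoredLinExt r w u) {z : ℕ × ℕ}
    (hz : z ∈ u) :
    ∃ x, x ∈ P.elems ∧ 1 ≤ x.1 ∧ shiftLetter r (zerosBefore w x) x = z := by
  obtain ⟨i, _, hbw⟩ := (mem_u_iff hcl).1 hz
  obtain ⟨x, hxw, hx1, hzb, rfl⟩ := mem_blockWord_iff.1 hbw
  exact ⟨x, (hlin.2.1 x).1 hxw, hx1, by rw [hzb]⟩

theorem Fext_psi_pos {x : ℕ × ℕ} (hx : x ∈ P.elems) (hx1 : 1 ≤ x.1)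
    (hmem : shiftLetter r (zerosBefore w x) x ∈ u) :
    Fext P (psi P w u g) x = (zerosBefore w x,
      (g ⟨u.idxOf (shiftLetter r (zerosBefore w x) x), idx_lt_length hmem⟩).2) := by
  rw [Fext_apply _ _ hx, psi_pos hx hx1 hmem]

theorem Fext_psi_zero {x : ℕ × ℕ} (hx : x ∈ P.elems) (h0 : x.1 = 0) :
    Fext P (psi P w u g) x = (x.2, 0) := by
  rw [Fext_apply _ _ hx, psi_zero hx h0]

theorem vv_psi (hlin : IsLinExt P w) (hcl : IsColoredLinExt r w u) {z : ℕ × ℕ}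
    (hz : z ∈ u) :
    vv P (psi P w u g) z = (g ⟨u.idxOf z, idx_lt_length hz⟩).2 := by
  obtain ⟨x, hx, hx1, hst⟩ := u_decomp hlin hcl hz
  rw [vv, invStore_eq P hx hx1 (by rw [← hst]; rfl)]
  rw [Fext_psi_pos hx hx1 (by rw [hst]; exact hz)]
  show (g ⟨u.idxOf (shiftLetter r (zerosBefore w x) x), _⟩).2 = _
  have : (⟨u.idxOf (shiftLetter r (zerosBefore w x) x),
      idx_lt_length (by rw [hst]; exact hz)⟩ : Fin u.length)
      = ⟨u.idxOf z, idx_lt_length hz⟩ := by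
    apply Fin.ext
    show u.idxOf (shiftLetter r (zerosBefore w x) x) = u.idxOf z
    rw [hst]
  rw [this]

/-- the key comparison : the original `w` is sorted for the key of `psi w u g` -/
theorem keyW_psi_le (hr : 1 ≤ r) (hlin : IsLinExt P w) (hcl : IsColoredLinExt r w u)
    (hg : IsWordCPP r j u g) {a b : ℕ × ℕ} (ha : a ∈ w) (hb : b ∈ w)
    (hidx : w.idxOf a < w.idxOf b) :
    keyW P (psi P w u g) a ≤ keyW P (psi P w u g) b := by
  have hgz : ∀ i, (g i).1 = 0 := g_fst_eq_zero hr hcl hg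
  have hae : a ∈ P.elems := (hlin.2.1 a).1 ha
  have hbe : b ∈ P.elems := (hlin.2.1 b).1 hb
  have hne : a ≠ b := by
    intro h; rw [h] at hidx; omega
  by_cases h0a : a.1 = 0 <;> by_cases h0b : b.1 = 0
  · -- both zeros
    obtain ⟨ha1, ha2⟩ := P.zero_only a hae h0a
    obtain ⟨hb1, hb2⟩ := P.zero_only b hbe h0b
    have haf : a = ((0 : ℕ), a.2) := Prod.ext h0a rfl
    have hbf : b = ((0 : ℕ), b.2) := Prod.ext h0b rfl
    have hmm : a.2 < b.2 := by
      rcases Nat.lt_trichotomy a.2 b.2 with h | h | h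
      · exact h
      · exact absurd (Prod.ext (h0a.trans h0b.symm) h) hne
      · exfalso
        have := idx_zero_mono hlin hb1 (le_of_lt h) ha2
        rw [← haf, ← hbf] at this
        omega
    apply le_of_lt
    refine Prod.Lex.lt_iff.2 (Or.inl (encP_lt_iff.2 (Or.inl ?_)))
    rw [Fext_psi_zero hae h0a, Fext_psi_zero hbe h0b]
    exact hmm
  · -- a zero, b positive
    obtain ⟨ha1, ha2⟩ := P.zero_only a hae h0a
    have haf : a = ((0 : ℕ), a.2) := Prod.ext h0a rfl
    have hb1 : 1 ≤ b.1 := by omega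
    have hmemb := store_mem_u hr hlin hcl hbe hb1
    have hzb : a.2 ≤ zerosBefore w b := by
      rw [← idx_zero_lt_iff hlin hb ha1 ha2, ← haf]
      exact hidx
    rw [le_iff_lt_or_eq]
    rcases lt_or_eq_of_le hzb with h | h
    · refine Or.inl (Prod.Lex.lt_iff.2 (Or.inl (encP_lt_iff.2 (Or.inl ?_))))
      rw [Fext_psi_zero hae h0a, Fext_psi_pos hbe hb1 hmemb]
      exact h
    · rcases Nat.eq_zero_or_pos (Fext P (psi P w u g) b).2 with hv | hv
      · -- equal parts; compare stored letters
        refine Or.inl (Prod.Lex.lt_iff.2 (Or.inr ⟨?_, ?_⟩))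
        · apply congrArg encP
          rw [Fext_psi_zero hae h0a]
          have : Fext P (psi P w u g) b = ((Fext P (psi P w u g) b).1,
              (Fext P (psi P w u g) b).2) := rfl
          rw [this, hv, Fext_psi_pos hbe hb1 hmemb]
          simp only
          rw [← h]
        · refine Prod.Lex.lt_iff.2 (Or.inl (encL_lt_iff.2 ?_))
          have hsta : storeF P (psi P w u g) a = ((0 : ℕ), 0) := by
            rw [storeF, Fext_psi_zero hae h0a]
            show shiftLetter r a.2 a = _
            rw [haf]
            exact shiftLetter_self_color ha2
          rw [hsta]
          rcases Nat.eq_zero_or_pos (storeF P (psi P w u g) b).2 with hc | hc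
          · refine Or.inr ⟨hc.symm, ?_⟩
            show (0 : ℕ) < b.1
            omega
          · exact Or.inl hc
      · refine Or.inl (Prod.Lex.lt_iff.2 (Or.inl (encP_lt_iff.2 (Or.inr ⟨?_, ?_⟩))))
        · rw [Fext_psi_zero hae h0a, Fext_psi_pos hbe hb1 hmemb]
          exact h
        · rw [Fext_psi_zero hae h0a]
          exact hv
  · -- a positive, b zero
    obtain ⟨hb1, hb2⟩ := P.zero_only b hbe h0b
    have hbf : b = ((0 : ℕ), b.2) := Prod.ext h0b rfl
    have ha1 : 1 ≤ a.1 := by omega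
    have hmema := store_mem_u hr hlin hcl hae ha1
    apply le_of_lt
    refine Prod.Lex.lt_iff.2 (Or.inl (encP_lt_iff.2 (Or.inl ?_)))
    rw [Fext_psi_pos hae ha1 hmema, Fext_psi_zero hbe h0b]
    show zerosBefore w a < b.2
    have hnot : ¬ (w.idxOf ((0 : ℕ), b.2) < w.idxOf a) := by
      rw [← hbf]; omega
    rw [idx_zero_lt_iff hlin ha hb1 hb2] at hnot
    omega
  · -- both positive
    have ha1 : 1 ≤ a.1 := by omega
    have hb1 : 1 ≤ b.1 := by omega
    have hmema := store_mem_u hr hlin hcl hae ha1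
    have hmemb := store_mem_u hr hlin hcl hbe hb1
    have hmono : zerosBefore w a ≤ zerosBefore w b := zerosBefore_mono w (le_of_lt hidx)
    rcases lt_or_eq_of_le hmono with h | h
    · apply le_of_lt
      refine Prod.Lex.lt_iff.2 (Or.inl (encP_lt_iff.2 (Or.inl ?_)))
      rw [Fext_psi_pos hae ha1 hmema, Fext_psi_pos hbe hb1 hmemb]
      exact h
    · have hord := u_order_transfer hr hlin hcl ha hb ha1 hb1 h hidx
      have hmonu := hg.2.1 ⟨_, idx_lt_length hmema⟩ ⟨_, idx_lt_length hmemb⟩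
        (Fin.mk_lt_mk.2 hord)
      have hva : ∀ {c : ℕ}, c = c := fun {c} => rfl
      have hvle : (g ⟨_, idx_lt_length hmema⟩).2 ≤ (g ⟨_, idx_lt_length hmemb⟩).2 := by
        rcases hmonu with h' | ⟨_, h'⟩
        · rw [hgz, hgz] at h'; omega
        · exact h'
      rcases lt_or_eq_of_le hvle with h' | h'
      · apply le_of_lt
        refine Prod.Lex.lt_iff.2 (Or.inl (encP_lt_iff.2 (Or.inr ⟨?_, ?_⟩)))
        · rw [Fext_psi_pos hae ha1 hmema, Fext_psi_pos hbe hb1 hmemb]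
          exact h
        · rw [Fext_psi_pos hae ha1 hmema, Fext_psi_pos hbe hb1 hmemb]
          exact h'
      · -- equal parts : compare the stored letters
        have hparts : Fext P (psi P w u g) a = Fext P (psi P w u g) b := by
          rw [Fext_psi_pos hae ha1 hmema, Fext_psi_pos hbe hb1 hmemb]
          exact Prod.ext h h'
        have hstval : a.1 ≠ b.1 := by
          intro hh
          exact hne (P.val_inj a hae b hbe ha1 hh)
        have hsta : storeF P (psi P w u g) a = shiftLetter r (zerosBefore w a) a := by
          rw [storeF, Fext_psi_pos hae ha1 hmema]
        have hstb : storeF P (psi P w u g) b = shiftLetter r (zerosBefore w b) b := by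
          rw [storeF, Fext_psi_pos hbe hb1 hmemb]
        have hstne : shiftLetter r (zerosBefore w a) a ≠ shiftLetter r (zerosBefore w b) b := by
          intro hh
          have h5 := congrArg Prod.fst hh
          exact hstval h5
        have hltst : letterLT (shiftLetter r (zerosBefore w a) a)
            (shiftLetter r (zerosBefore w b) b) := by
          rcases letterLT_total _ _ hstne with hlt | hlt
          · exact hlt
          · exfalso
            have hcall := hg.2.2.1 ⟨_, idx_lt_length hmema⟩ ⟨_, idx_lt_length hmemb⟩
              (Fin.mk_lt_mk.2 hord) (by rw [hgz, hgz]) ?_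
            · rcases hcall with h'' | ⟨_, h''⟩
              · rw [hgz, hgz] at h''; omega
              · omega
            · rw [hgz]
              rw [get_idx (idx_lt_length hmema), get_idx (idx_lt_length hmemb),
                shiftLetter_zero (mem_u_val_pos hr hcl hmemb).2,
                shiftLetter_zero (mem_u_val_pos hr hcl hmema).2]
              exact hlt
        apply le_of_lt
        refine Prod.Lex.lt_iff.2 (Or.inr ⟨congrArg encP hparts, ?_⟩)
        refine Prod.Lex.lt_iff.2 (Or.inl (encL_lt_iff.2 ?_))
        rw [hsta, hstb]
        exact hltst

end Inverse

end CPPAux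
namespace CPPAux

section Inverse

variable {r j : ℕ} {P : ColoredPoset r} {w u : List (ℕ × ℕ)} {g : Fin u.length → ℕ × ℕ}

theorem w_perm (hlin : IsLinExt P w) : w.Perm P.elems.toList :=
  (List.perm_ext_iff_of_nodup hlin.1 (Finset.nodup_toList _)).2
    (fun a => (hlin.2.1 a).trans (Finset.mem_toList).symm)

theorem sortedW_psi (hr : 1 ≤ r) (hlin : IsLinExt P w) (hcl : IsColoredLinExt r w u)
    (hg : IsWordCPP r j u g) : sortedW P (psi P w u g) = w := by
  apply List.Perm.eq_of_pairwise' (r := relW P (psi P w u g))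
    (Finset.pairwise_sort _ _) ?_
    ((Finset.sort_perm_toList _ _).trans (w_perm hlin).symm)
  rw [List.pairwise_iff_get]
  intro p q hpq
  have hmp : w.get p ∈ w := w.get_mem _
  have hmq : w.get q ∈ w := w.get_mem _
  apply keyW_psi_le hr hlin hcl hg hmp hmq
  rw [idx_get_of_nodup hlin.1 p.2, idx_get_of_nodup hlin.1 q.2]
  exact hpq

theorem storeF_psi_pos {x : ℕ × ℕ} (hx : x ∈ P.elems) (hx1 : 1 ≤ x.1)
    (hmem : shiftLetter r (zerosBefore w x) x ∈ u) :
    storeF P (psi P w u g) x = shiftLetter r (zerosBefore w x) x := by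
  rw [storeF, Fext_psi_pos hx hx1 hmem]

theorem vv_psi_get (hlin : IsLinExt P w) (hcl : IsColoredLinExt r w u)
    (hu : u.Nodup) (p : Fin u.length) :
    vv P (psi P w u g) (u.get p) = (g p).2 := by
  rw [vv_psi hlin hcl (u.get_mem _)]
  have harg : (⟨u.idxOf (u.get p), idx_lt_length (u.get_mem _)⟩ : Fin u.length) = p := by
    apply Fin.ext
    show u.idxOf (u.get p) = _
    exact idx_get_of_nodup hu p.2
  exact congrArg (fun q => (g q).2) harg

theorem sortedU_psi (hr : 1 ≤ r) (hlin : IsLinExt P w) (hcl : IsColoredLinExt r w u)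
    (hg : IsWordCPP r j u g) : sortedU P (psi P w u g) = u := by
  have hu : u.Nodup := u_nodup hr hlin hcl
  have hgz : ∀ i, (g i).1 = 0 := g_fst_eq_zero hr hcl hg
  have hperm : sortedU P (psi P w u g) ~ u := by
    rw [← Multiset.coe_eq_coe, coe_sortedU]
    rw [Multiset.Nodup.ext (storedFinset P (psi P w u g)).nodup (Multiset.coe_nodup.2 hu)]
    intro z
    rw [← Finset.mem_def, mem_storedFinset_iff, Multiset.mem_coe]
    constructor
    · rintro ⟨x, hx, hx1, rfl⟩
      rw [storeF_psi_pos hx hx1 (store_mem_u hr hlin hcl hx hx1)]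
      exact store_mem_u hr hlin hcl hx hx1
    · intro hz
      obtain ⟨x, hx, hx1, hst⟩ := u_decomp hlin hcl hz
      exact ⟨x, hx, hx1, by rw [storeF_psi_pos hx hx1 (by rw [hst]; exact hz), hst]⟩
  apply List.Perm.eq_of_pairwise' (r := relU P (psi P w u g)) (Finset.pairwise_sort _ _) ?_ hperm
  rw [List.pairwise_iff_get]
  intro p q hpq
  show keyU P (psi P w u g) (u.get p) ≤ keyU P (psi P w u g) (u.get q)
  have hvp := vv_psi_get (g := g) hlin hcl hu p
  have hvq := vv_psi_get (g := g) hlin hcl hu q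
  have hvle : (g p).2 ≤ (g q).2 := by
    have := hg.2.1 p q hpq
    rcases this with h' | ⟨_, h'⟩
    · rw [hgz, hgz] at h'; omega
    · exact h'
  rcases lt_or_eq_of_le hvle with h | h
  · apply le_of_lt
    refine Prod.Lex.toLex_lt_toLex.2 (Or.inl ?_)
    rw [hvp, hvq]
    exact h
  · have hne : u.get p ≠ u.get q := by
      intro hh
      have := (List.Nodup.get_inj_iff hu).1 hh
      rw [this] at hpq
      exact lt_irrefl _ hpq
    have hlt : letterLT (u.get p) (u.get q) := by
      rcases letterLT_total _ _ hne with h' | h'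
      · exact h'
      · exfalso
        have hcall := hg.2.2.1 p q hpq (by rw [hgz, hgz]) ?_
        · rcases hcall with h'' | ⟨_, h''⟩
          · rw [hgz, hgz] at h''; omega
          · omega
        · rw [hgz,
            shiftLetter_zero (mem_u_val_pos hr hcl (u.get_mem _)).2,
            shiftLetter_zero (mem_u_val_pos hr hcl (u.get_mem _)).2]
          exact h'
    apply le_of_lt
    refine Prod.Lex.toLex_lt_toLex.2 (Or.inr ⟨by rw [hvp, hvq, h], encL_lt_iff.2 hlt⟩)

end Inverse

end CPPAux
namespace CPPAux

theorem isLinExt_of_mem {r : ℕ} {P : ColoredPoset r} {w : List (ℕ × ℕ)}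
    (hw : w ∈ LinExts P) : IsLinExt P w := by
  classical
  simp only [LinExts, Finset.mem_filter] at hw
  exact hw.2

theorem isColoredLinExt_of_mem {r : ℕ} {w u : List (ℕ × ℕ)}
    (hu : u ∈ ColLinExts r w) : IsColoredLinExt r w u := by
  classical
  simp only [ColLinExts, Finset.mem_filter] at hu
  exact hu.2

/-- the triple side of the bijection -/
def TripleType (r j : ℕ) (P : ColoredPoset r) : Type :=
  Σ wp : {w : List (ℕ × ℕ) // w ∈ LinExts P},
    Σ up : {u : List (ℕ × ℕ) // u ∈ ColLinExts r wp.1},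
      {g : Fin up.1.length → ℕ × ℕ // IsWordCPP r j up.1 g}

theorem triple_ext {r j : ℕ} {P : ColoredPoset r} (t t' : TripleType r j P)
    (h1 : t.1.1 = t'.1.1) (h2 : t.2.1.1 = t'.2.1.1)
    (h3 : ∀ (i : ℕ) (hh : i < t.2.1.1.length) (hh' : i < t'.2.1.1.length),
        t.2.2.1 ⟨i, hh⟩ = t'.2.2.1 ⟨i, hh'⟩) : t = t' := by
  obtain ⟨⟨w1, hw1⟩, ⟨u1, hu1⟩, ⟨g1, hg1⟩⟩ := t
  obtain ⟨⟨w2, hw2⟩, ⟨u2, hu2⟩, ⟨g2, hg2⟩⟩ := t'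
  dsimp at h1 h2 h3
  subst h1
  subst h2
  have hgg : g1 = g2 := by
    funext i
    exact h3 i.1 i.2 i.2
  subst hgg
  rfl

/-- the fundamental bijection between colored `P`-partitions and triples
`(w, u, g)` of a linear extension, a colored linear extension and a word partition -/
noncomputable def mainEquiv (r j : ℕ) (hr : 1 ≤ r) (P : ColoredPoset r) :
    {f : {x // x ∈ P.elems} → ℕ × ℕ // IsCPP r j P f} ≃ TripleType r j P where
  toFun fp := ⟨⟨sortedW P fp.1, sortedW_mem_LinExts fp.2⟩,
    ⟨sortedU P fp.1, sortedU_mem_ColLinExts hr fp.2⟩,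
    ⟨gFun P fp.1, gFun_isWordCPP hr fp.2⟩⟩
  invFun t := ⟨psi P t.1.1 t.2.1.1 t.2.2.1,
    psi_isCPP hr (isLinExt_of_mem t.1.2) (isColoredLinExt_of_mem t.2.1.2) t.2.2.2⟩
  left_inv fp := Subtype.ext (psi_left_inv hr fp.2)
  right_inv t := by
    obtain ⟨⟨w, hw⟩, ⟨u, hu⟩, ⟨g, hg⟩⟩ := t
    have hlin := isLinExt_of_mem hw
    have hcl := isColoredLinExt_of_mem hu
    have hW : sortedW P (psi P w u g) = w := sortedW_psi hr hlin hcl hg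
    have hU : sortedU P (psi P w u g) = u := sortedU_psi hr hlin hcl hg
    apply triple_ext
    · exact hW
    · exact hU
    · intro i hh hh'
      show (0, vv P (psi P w u g) ((sortedU P (psi P w u g)).get ⟨i, hh⟩)) = g ⟨i, hh'⟩
      have hget : (sortedU P (psi P w u g)).get ⟨i, hh⟩ = u.get ⟨i, hh'⟩ := by
        rw [List.get_of_eq hU]
      rw [hget, vv_psi_get hlin hcl (u_nodup hr hlin hcl) ⟨i, hh'⟩]
      exact Prod.ext (g_fst_eq_zero hr hcl hg ⟨i, hh'⟩).symm rfl

instance wordCPP_finite (r j : ℕ) (u : List (ℕ × ℕ)) :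
    Finite {g : Fin u.length → ℕ × ℕ // IsWordCPP r j u g} := by
  apply Finite.of_injective (β := Fin u.length → Fin (r + 1) × Fin (j + 1))
    (fun gp i => (⟨(gp.1 i).1, by have := (gp.2.1 i).1; omega⟩,
                  ⟨(gp.1 i).2, by have := (gp.2.1 i).2; omega⟩))
  intro a b h
  apply Subtype.ext
  funext i
  have hfi := congrFun h i
  have h1 := congrArg (fun p => (p.1 : Fin (r + 1)).1) hfi
  have h2 := congrArg (fun p => (p.2 : Fin (j + 1)).1) hfi
  simp only at h1 h2
  exact Prod.ext h1 h2

theorem nat_card_sigma {ι : Type*} [Fintype ι] (β : ι → Type*) [∀ i, Finite (β i)] :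
    Nat.card (Σ i, β i) = ∑ i, Nat.card (β i) := by
  letI : ∀ i, Fintype (β i) := fun i => Fintype.ofFinite _
  rw [Nat.card_eq_fintype_card, Fintype.card_sigma]
  simp [Nat.card_eq_fintype_card]

theorem inner_count (r j : ℕ) (w : List (ℕ × ℕ)) :
    Nat.card (Σ up : {u : List (ℕ × ℕ) // u ∈ ColLinExts r w},
        {g : Fin up.1.length → ℕ × ℕ // IsWordCPP r j up.1 g})
      = ∑ u ∈ ColLinExts r w, OmegaWord r j u := by
  classical
  rw [nat_card_sigma]
  rw [← Finset.sum_coe_sort (ColLinExts r w) (OmegaWord r j)]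
  rfl

theorem main_count (r j : ℕ) (hr : 1 ≤ r) (P : ColoredPoset r) :
    Omega r j P = ∑ w ∈ LinExts P, ∑ u ∈ ColLinExts r w, OmegaWord r j u := by
  classical
  have h0 : Omega r j P = Nat.card (TripleType r j P) :=
    Nat.card_congr (mainEquiv r j hr P)
  rw [h0, TripleType, nat_card_sigma]
  rw [← Finset.sum_coe_sort (LinExts P)
    (fun w => ∑ u ∈ ColLinExts r w, OmegaWord r j u)]
  exact Finset.sum_congr rfl (fun wp _ => inner_count r j wp.1)

end CPPAux

/-- Corollary of the Fundamental Theorem of Colored `P`-partitions: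
`Ω_P(j) = Σ_{w ∈ L(P)} Σ_{π ∈ CL(w)} Ω_π(j)`. -/
theorem omega_eq_sum_colored_linext (r n : ℕ) (hr : 1 ≤ r) (hn : 1 ≤ n)
    (P : ColoredPoset r) (j : ℕ) :
    Omega r j P = ∑ w ∈ LinExts P, ∑ u ∈ ColLinExts r w, OmegaWord r j u :=
  CPPAux.main_count r j hr P
end
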